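/- arXiv:math/0503298 — 8 statements merged into one kernel-verified Lean document; each statement's English description precedes it below -/
import Mathlib

section
/- Let ε > 0, δ ≥ 0, g ∈ ℓ², and let F : ℂ → ℂ satisfy F(0) = 0 and |F(z₁) − F(z₂)| ≤ c(|z₁|^β + |z₂|^β)|z₁ − z₂| for all z₁, z₂ ∈ ℂ, for some c > 0, β ≥ 0. Let u, v : [0, T] → ℓ² be continuously differentiable solutions of the DNLS equation i u̇_n + (1/ε)(u_{n−1} − 2u_n + u_{n+1}) + iδ u_n + F(u_n) = g_n such that ‖u(t)‖_{ℓ²} ≤ 2R and ‖v(t)‖_{ℓ²} ≤ 2R for all t ∈ [0, T]. Then for all t ∈ [0, T], ‖u(t) − v(t)‖_{ℓ²} ≤ e^{L₁(2R)t} ‖u(0) − v(0)‖_{ℓ²}, where L₁(2R) = δ + 2c(2R)^β. -/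
open scoped ENNReal

lemma aux_abs_re (x y : ℂ) : |(Complex.I * (starRingEnd ℂ) x * y).re| ≤ ‖x‖ * ‖y‖ := by
  calc |(Complex.I * (starRingEnd ℂ) x * y).re| ≤ ‖Complex.I * (starRingEnd ℂ) x * y‖ :=
        Complex.abs_re_le_norm _
  _ = ‖x‖ * ‖y‖ := by simp [map_mul]

lemma aux_antisym (x y : ℂ) :
    (Complex.I * (starRingEnd ℂ) x * y).re = -(Complex.I * (starRingEnd ℂ) y * x).re := by
  simp [Complex.mul_re, Complex.mul_im]; ring

lemma aux_sq_sum (x : lp (fun _ : ℤ => ℂ) 2) : Summable (fun n : ℤ => ‖(x:ℤ→ℂ) n‖^2) := by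
  have := lp.memℓp x
  rw [memℓp_gen_iff (by norm_num : (0:ℝ) < (2:ℝ≥0∞).toReal)] at this
  simpa using this

lemma aux_norm_sq (x : lp (fun _ : ℤ => ℂ) 2) : ‖x‖^2 = ∑' n : ℤ, ‖(x:ℤ→ℂ) n‖^2 := by
  have := lp.norm_rpow_eq_tsum (by norm_num : (0:ℝ) < (2:ℝ≥0∞).toReal) x
  simpa using this

set_option maxHeartbeats 1600000 in
/-- Continuous dependence: two solutions of the DNLS equation staying in
the ball of radius `2R` satisfy `‖u(t) − v(t)‖ ≤ exp(L₁(2R) t) ‖u(0) − v(0)‖` with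
`L₁(2R) = δ + 2c(2R)^β`. -/
theorem stmt_3 (ε δ : ℝ) (hε : 0 < ε) (hδ : 0 ≤ δ) (g : lp (fun _ : ℤ => ℂ) 2)
    (F : ℂ → ℂ) (c β : ℝ) (hc : 0 < c) (hβ : 0 ≤ β) (hF0 : F 0 = 0)
    (hF : ∀ z₁ z₂ : ℂ, ‖F z₁ - F z₂‖ ≤
      c * (‖z₁‖ ^ β + ‖z₂‖ ^ β) * ‖z₁ - z₂‖)
    (T R : ℝ) (hT : 0 ≤ T) (hR : 0 < R)
    (u u' v v' : ℝ → lp (fun _ : ℤ => ℂ) 2)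
    (hu : ∀ t ∈ Set.Icc (0:ℝ) T, HasDerivAt u (u' t) t)
    (hu' : ContinuousOn u' (Set.Icc (0:ℝ) T))
    (hueq : ∀ t ∈ Set.Icc (0:ℝ) T, ∀ n : ℤ,
      Complex.I * u' t n + (1/ε : ℂ) * (u t (n-1) - 2 * u t n + u t (n+1))
        + Complex.I * δ * u t n + F (u t n) = g n)
    (hv : ∀ t ∈ Set.Icc (0:ℝ) T, HasDerivAt v (v' t) t)
    (hv' : ContinuousOn v' (Set.Icc (0:ℝ) T))
    (hveq : ∀ t ∈ Set.Icc (0:ℝ) T, ∀ n : ℤ,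
      Complex.I * v' t n + (1/ε : ℂ) * (v t (n-1) - 2 * v t n + v t (n+1))
        + Complex.I * δ * v t n + F (v t n) = g n)
    (hubd : ∀ t ∈ Set.Icc (0:ℝ) T, ‖u t‖ ≤ 2 * R)
    (hvbd : ∀ t ∈ Set.Icc (0:ℝ) T, ‖v t‖ ≤ 2 * R) :
    ∀ t ∈ Set.Icc (0:ℝ) T,
      ‖u t - v t‖ ≤ Real.exp ((δ + 2 * c * (2 * R) ^ β) * t) * ‖u 0 - v 0‖ := by
  set L : ℝ := δ + 2 * c * (2 * R) ^ β with hLdef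
  have hR2 : (0:ℝ) ≤ 2 * R := by linarith
  have hRβ : 0 ≤ (2*R)^β := Real.rpow_nonneg hR2 β
  set M : ℝ := 2 * c * (2 * R) ^ β with hMdef
  have hM0 : 0 ≤ M := by positivity
  set w : ℝ → lp (fun _ : ℤ => ℂ) 2 := fun t => u t - v t with hwdef
  set w' : ℝ → lp (fun _ : ℤ => ℂ) 2 := fun t => u' t - v' t with hw'def
  have hwd : ∀ s ∈ Set.Icc (0:ℝ) T, HasDerivAt w (w' s) s := fun s hs => (hu s hs).sub (hv s hs)
  -- key differential inequality
  have hkey : ∀ s ∈ Set.Icc (0:ℝ) T,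
      2 * RCLike.re (inner ℂ (w s) (w' s) : ℂ) ≤ (2*L) * ‖w s‖^2 := by
    intro s hs
    have hWapp : ∀ n : ℤ, (w s : ℤ → ℂ) n = u s n - v s n := by
      intro n; simp [hwdef]
    have hW'app : ∀ n : ℤ, (w' s : ℤ → ℂ) n = u' s n - v' s n := by
      intro n; simp [hw'def]
    have hptw : ∀ n : ℤ, (w' s : ℤ → ℂ) n =
        Complex.I * ((ε⁻¹ : ℝ) : ℂ) * ((w s : ℤ→ℂ) (n-1) - 2*(w s : ℤ→ℂ) n + (w s : ℤ→ℂ) (n+1))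
          - (δ:ℂ) * (w s : ℤ→ℂ) n + Complex.I * (F (u s n) - F (v s n)) := by
      intro n
      have h1 := hueq s hs n
      have h2 := hveq s hs n
      rw [hW'app, hWapp, hWapp, hWapp]
      push_cast
      linear_combination (-Complex.I)*(h1 - h2)
        + (u' s n - v' s n + (δ:ℂ)*(u s n - v s n)) * Complex.I_mul_I
    set a : ℤ → ℝ := fun n =>
      ε⁻¹ * (Complex.I * (starRingEnd ℂ) ((w s : ℤ→ℂ) n) * (w s : ℤ→ℂ) (n-1)).re with hadef
    set b : ℤ → ℝ := fun n =>
      ε⁻¹ * (Complex.I * (starRingEnd ℂ) ((w s : ℤ→ℂ) n) * (w s : ℤ→ℂ) (n+1)).re with hbdef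
    set cc : ℤ → ℝ := fun n => -δ * Complex.normSq ((w s : ℤ→ℂ) n) with hccdef
    set d : ℤ → ℝ := fun n =>
      (Complex.I * (starRingEnd ℂ) ((w s : ℤ→ℂ) n) * (F (u s n) - F (v s n))).re with hddef
    have hsplit : ∀ n : ℤ, ((starRingEnd ℂ) ((w s : ℤ→ℂ) n) * (w' s : ℤ→ℂ) n).re
        = a n + b n + cc n + d n := by
      intro n
      rw [hptw n, hadef, hbdef, hccdef, hddef]
      simp only [Complex.mul_re, Complex.mul_im, Complex.normSq_apply, Complex.I_re,
        Complex.I_im, Complex.sub_re, Complex.sub_im, Complex.add_re, Complex.add_im,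
        Complex.ofReal_re, Complex.ofReal_im, Complex.re_ofNat, Complex.im_ofNat,
        Complex.conj_re, Complex.conj_im]
      ring
    have hsqW := aux_sq_sum (w s)
    have hsm : Summable (fun n : ℤ => ‖(w s : ℤ→ℂ) (n-1)‖^2) :=
      (Equiv.subRight (1:ℤ)).summable_iff.2 hsqW
    have hsp : Summable (fun n : ℤ => ‖(w s : ℤ→ℂ) (n+1)‖^2) :=
      (Equiv.addRight (1:ℤ)).summable_iff.2 hsqW
    have hSa : Summable a := by
      refine Summable.of_abs (Summable.of_nonneg_of_le (fun n => abs_nonneg _)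
        (fun n => ?_) ((hsqW.add hsm).mul_left (ε⁻¹*(1/2))))
      simp only [hadef]
      have h1 := aux_abs_re ((w s : ℤ→ℂ) n) ((w s : ℤ→ℂ) (n-1))
      have hεpos : 0 < ε⁻¹ := by positivity
      rw [abs_mul, abs_of_pos hεpos]
      have hsq := sq_nonneg (‖(w s : ℤ→ℂ) n‖ - ‖(w s : ℤ→ℂ) (n-1)‖)
      nlinarith [mul_le_mul_of_nonneg_left h1 hεpos.le]
    have hba : ∀ n : ℤ, b n = -(a (n+1)) := by
      intro n
      rw [hadef, hbdef]
      simp only [add_sub_cancel_right]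
      rw [aux_antisym]
      ring
    have hSb : Summable b := by
      rw [show b = fun n => -(a (n+1)) from funext hba]
      exact ((Equiv.addRight (1:ℤ)).summable_iff.2 hSa).neg
    have hcceq : cc = fun n => -δ * ‖(w s : ℤ→ℂ) n‖^2 := by
      funext n
      simp only [hccdef]
      rw [Complex.normSq_eq_norm_sq]
    have hScc : Summable cc := by
      rw [hcceq]; exact hsqW.mul_left _
    have hFb : ∀ n : ℤ, ‖F (u s n) - F (v s n)‖ ≤ M * ‖(w s : ℤ→ℂ) n‖ := by
      intro n
      have h1 : ‖u s n‖ ≤ 2*R := by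
        exact le_trans (lp.norm_apply_le_norm (by norm_num) (u s) n) (hubd s hs)
      have h2 : ‖v s n‖ ≤ 2*R := by
        exact le_trans (lp.norm_apply_le_norm (by norm_num) (v s) n) (hvbd s hs)
      have h1' : ‖u s n‖ ^ β ≤ (2*R)^β :=
        Real.rpow_le_rpow (norm_nonneg _) h1 hβ
      have h2' : ‖v s n‖ ^ β ≤ (2*R)^β :=
        Real.rpow_le_rpow (norm_nonneg _) h2 hβ
      have h3 := hF (u s n) (v s n)
      have h4 : ‖u s n - v s n‖ = ‖(w s : ℤ→ℂ) n‖ := by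
        rw [hWapp]
      rw [← h4, hMdef]
      have h5 := norm_nonneg (u s n - v s n)
      have h6 : c * (‖u s n‖ ^ β + ‖v s n‖ ^ β)
            * ‖u s n - v s n‖
          ≤ c * ((2*R)^β + (2*R)^β) * ‖u s n - v s n‖ := by
        apply mul_le_mul_of_nonneg_right _ h5
        exact mul_le_mul_of_nonneg_left (add_le_add h1' h2') hc.le
      calc ‖F (u s n) - F (v s n)‖
          ≤ c * ((2*R)^β + (2*R)^β) * ‖u s n - v s n‖ := le_trans h3 h6
      _ = 2 * c * (2*R)^β * ‖u s n - v s n‖ := by ring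
    have hdle : ∀ n : ℤ, d n ≤ M * ‖(w s : ℤ→ℂ) n‖^2 := by
      intro n
      rw [hddef]
      have h1 := aux_abs_re ((w s : ℤ→ℂ) n) (F (u s n) - F (v s n))
      have h2 := hFb n
      have h3 := le_abs_self ((Complex.I * (starRingEnd ℂ) ((w s : ℤ→ℂ) n) * (F (u s n) - F (v s n))).re)
      have h4 : ‖F (u s n) - F (v s n)‖ = ‖F (u s n) - F (v s n)‖ := rfl
      nlinarith [norm_nonneg ((w s : ℤ→ℂ) n)]
    have hSd : Summable d := by
      refine Summable.of_abs (Summable.of_nonneg_of_le (fun n => abs_nonneg _)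
        (fun n => ?_) (hsqW.mul_left M))
      rw [hddef]
      have h1 := aux_abs_re ((w s : ℤ→ℂ) n) (F (u s n) - F (v s n))
      have h2 := hFb n
      have h4 : ‖F (u s n) - F (v s n)‖ = ‖F (u s n) - F (v s n)‖ := rfl
      nlinarith [norm_nonneg ((w s : ℤ→ℂ) n)]
    have hre : RCLike.re (inner ℂ (w s) (w' s) : ℂ)
        = ∑' n, a n + ∑' n, b n + ∑' n, cc n + ∑' n, d n := by
      have hsum := lp.summable_inner (𝕜 := ℂ) (w s) (w' s)
      simp only [RCLike.inner_apply'] at hsum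
      have h0 : (inner ℂ (w s) (w' s) : ℂ)
          = ∑' n, (starRingEnd ℂ) ((w s : ℤ→ℂ) n) * (w' s : ℤ→ℂ) n := by
        rw [lp.inner_eq_tsum]; simp only [RCLike.inner_apply']
      have h1 : RCLike.re (inner ℂ (w s) (w' s) : ℂ)
          = ∑' n, ((starRingEnd ℂ) ((w s : ℤ→ℂ) n) * (w' s : ℤ→ℂ) n).re := by
        rw [h0]
        exact_mod_cast Complex.reCLM.map_tsum hsum
      rw [h1]
      rw [tsum_congr hsplit]
      rw [Summable.tsum_add ((hSa.add hSb).add hScc) hSd, Summable.tsum_add (hSa.add hSb) hScc, Summable.tsum_add hSa hSb]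
    have hcancel : ∑' n, b n = - ∑' n, a n := by
      calc ∑' n, b n = ∑' n, -(a (n+1)) := tsum_congr hba
      _ = -∑' n, a (n+1) := tsum_neg
      _ = -∑' n, a n := by
            congr 1
            exact (Equiv.addRight (1:ℤ)).tsum_eq a
    have hcc_eq : ∑' n, cc n = -δ * ‖w s‖^2 := by
      rw [hcceq, aux_norm_sq (w s), tsum_mul_left]
    have hd_le : ∑' n, d n ≤ M * ‖w s‖^2 := by
      rw [aux_norm_sq (w s), ← tsum_mul_left]
      exact Summable.tsum_le_tsum hdle hSd (hsqW.mul_left _)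
    rw [hre, hcancel, hcc_eq]
    have hwsq : 0 ≤ ‖w s‖^2 := sq_nonneg _
    nlinarith
  -- the squared-norm function and Gronwall
  set φ : ℝ → ℝ := fun s => ‖w s‖^2 with hφdef
  have hφd : ∀ s ∈ Set.Icc (0:ℝ) T,
      HasDerivAt φ (2 * RCLike.re (inner ℂ (w s) (w' s) : ℂ)) s := by
    intro s hs
    have h1 := HasDerivAt.inner ℂ (hwd s hs) (hwd s hs)
    have h2 := Complex.reCLM.hasFDerivAt.comp_hasDerivAt s h1
    simp only [Function.comp_def] at h2
    have hfun : (fun t : ℝ => Complex.reCLM (inner ℂ (w t) (w t) : ℂ)) = φ := by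
      funext t
      show RCLike.re (inner ℂ (w t) (w t) : ℂ) = ‖w t‖^2
      exact inner_self_eq_norm_sq _
    rw [hfun] at h2
    refine h2.congr_deriv ?_
    symm
    show 2 * RCLike.re (inner ℂ (w s) (w' s) : ℂ)
      = RCLike.re ((inner ℂ (w s) (w' s) : ℂ) + (inner ℂ (w' s) (w s) : ℂ))
    rw [map_add, inner_re_symm (w' s) (w s)]
    ring
  have hgron := le_gronwallBound_of_liminf_deriv_right_le
    (f := φ) (f' := fun s => 2 * RCLike.re (inner ℂ (w s) (w' s) : ℂ))
    (δ := φ 0) (K := 2*L) (ε := 0) (a := 0) (b := T)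
    (fun x hx => (hφd x hx).continuousAt.continuousWithinAt)
    (by
      intro x hx r hr
      have h1 := ((hφd x (Set.Ico_subset_Icc_self hx)).hasDerivWithinAt
        (s := Set.Ici x)).liminf_right_slope_le hr
      refine h1.mono fun z hz => ?_
      rwa [slope_def_field, div_eq_inv_mul] at hz)
    le_rfl
    (by
      intro x hx
      rw [add_zero]
      exact hkey x (Set.Ico_subset_Icc_self hx))
  intro t ht
  have h1 := hgron t ht
  rw [sub_zero, gronwallBound_ε0] at h1
  have h2 : φ t ≤ (Real.exp (L*t) * ‖w 0‖)^2 := by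
    have hexp : Real.exp (2*L*t) = Real.exp (L*t)^2 := by
      rw [sq, ← Real.exp_add]; ring_nf
    calc φ t ≤ φ 0 * Real.exp (2*L*t) := h1
    _ = (Real.exp (L*t) * ‖w 0‖)^2 := by rw [hexp, hφdef]; ring
  have h2' : ‖w t‖^2 ≤ (Real.exp (L*t) * ‖w 0‖)^2 := h2
  have hA : 0 ≤ Real.exp (L*t) * ‖w 0‖ := by positivity
  have h5 : ‖w t‖ ≤ Real.exp (L*t) * ‖w 0‖ := by
    nlinarith [norm_nonneg (w t)]
  exact h5
end

section
/- Let ε > 0 and 0 ≤ σ < ∞. For every u₀ ∈ ℓ² there exists a unique continuously differentiable function u : [0, ∞) → ℓ² with u(0) = u₀ satisfying, for all t ≥ 0 and all n ∈ ℤ, i u̇_n(t) + (1/ε)(u_{n−1}(t) − 2u_n(t) + u_{n+1}(t)) + |u_n(t)|^{2σ}u_n(t) = 0; that is, the conservative power-nonlinearity DNLS equation is globally well posed in ℓ² for every power σ ≥ 0 and every initial datum, with no restriction on the size of the data. -/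
open scoped ENNReal NNReal ComplexConjugate
open Set

noncomputable section

namespace DNLSaux

/-- Key scalar inequality: for `0 ≤ b ≤ a ≤ R` and `0 ≤ p`, `(a^p - b^p) * b ≤ p * R^p * (a-b)`. -/
lemma key_ineq {p R a b : ℝ} (hp : 0 ≤ p) (hb : 0 ≤ b) (hba : b ≤ a) (haR : a ≤ R) :
    (a ^ p - b ^ p) * b ≤ p * R ^ p * (a - b) := by
  have ha : 0 ≤ a := hb.trans hba
  have hR : 0 ≤ R := ha.trans haR
  rcases hp.eq_or_lt with hp0 | hp0
  · simp [← hp0]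
  rcases hb.eq_or_lt with hb0 | hb0
  · rw [← hb0, mul_zero, sub_zero]
    positivity
  -- b > 0 case: mean value theorem on [b, a]
  set M : ℝ := if p ≤ 1 then b ^ (p - 1) else R ^ (p - 1) with hM
  have hder : ∀ x ∈ Icc b a, HasDerivWithinAt (fun t : ℝ => t ^ p)
      (p * x ^ (p - 1)) (Icc b a) x := by
    intro x hx
    exact (Real.hasDerivAt_rpow_const (Or.inl (ne_of_gt (lt_of_lt_of_le hb0 hx.1)))).hasDerivWithinAt
  have hbound : ∀ x ∈ Icc b a, ‖p * x ^ (p - 1)‖ ≤ p * M := by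
    intro x hx
    have hx0 : 0 < x := lt_of_lt_of_le hb0 hx.1
    rw [Real.norm_eq_abs, abs_of_nonneg (by positivity)]
    apply mul_le_mul_of_nonneg_left _ hp
    by_cases h1 : p ≤ 1
    · rw [hM, if_pos h1]
      exact Real.rpow_le_rpow_of_nonpos hb0 hx.1 (by linarith)
    · rw [hM, if_neg h1]
      exact Real.rpow_le_rpow hx0.le (hx.2.trans haR) (by linarith)
  have hmvt := Convex.norm_image_sub_le_of_norm_hasDerivWithin_le hder hbound (convex_Icc b a)
    (left_mem_Icc.mpr hba) (right_mem_Icc.mpr hba)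
  rw [Real.norm_eq_abs, Real.norm_eq_abs] at hmvt
  have hab : b ^ p ≤ a ^ p := Real.rpow_le_rpow hb hba hp
  rw [abs_of_nonneg (by linarith), abs_of_nonneg (by linarith)] at hmvt
  have hMb : M * b ≤ R ^ p := by
    by_cases h1 : p ≤ 1
    · rw [hM, if_pos h1]
      have : b ^ (p - 1) * b = b ^ p := by
        rw [← Real.rpow_add_one (ne_of_gt hb0)]; norm_num
      rw [this]
      exact Real.rpow_le_rpow hb (hba.trans haR) hp
    · rw [hM, if_neg h1]
      have hR0 : 0 < R := lt_of_lt_of_le (lt_of_lt_of_le hb0 hba) haR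
      calc R ^ (p - 1) * b ≤ R ^ (p - 1) * R := by
            apply mul_le_mul_of_nonneg_left (hba.trans haR) (Real.rpow_nonneg hR _)
        _ = R ^ p := by
            rw [← Real.rpow_add_one (ne_of_gt hR0)]; norm_num
  have hM0 : 0 ≤ M := by
    by_cases h1 : p ≤ 1
    · rw [hM, if_pos h1]; exact Real.rpow_nonneg hb _
    · rw [hM, if_neg h1]; exact Real.rpow_nonneg hR _
  calc (a ^ p - b ^ p) * b ≤ (p * M * (a - b)) * b := by
        apply mul_le_mul_of_nonneg_right hmvt hb
    _ = (p * (a - b)) * (M * b) := by ring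
    _ ≤ (p * (a - b)) * R ^ p := by
        apply mul_le_mul_of_nonneg_left hMb (by nlinarith)
    _ = p * R ^ p * (a - b) := by ring


/-- truncated power nonlinearity -/
noncomputable def phiC (p R : ℝ) (z : ℂ) : ℂ := ((min ‖z‖ R ^ p : ℝ) : ℂ) * z

lemma phiC_of_le {p R : ℝ} {z : ℂ} (h : ‖z‖ ≤ R) :
    phiC p R z = ((‖z‖ ^ p : ℝ) : ℂ) * z := by
  rw [phiC, min_eq_left h]

lemma norm_phiC_le {p R : ℝ} (hp : 0 ≤ p) (hR : 0 ≤ R) (z : ℂ) :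
    ‖phiC p R z‖ ≤ R ^ p * ‖z‖ := by
  rw [phiC, norm_mul, Complex.norm_real, Real.norm_eq_abs,
    abs_of_nonneg (Real.rpow_nonneg (le_min (norm_nonneg z) hR) p)]
  exact mul_le_mul_of_nonneg_right
    (Real.rpow_le_rpow (le_min (norm_nonneg z) hR) (min_le_right _ _) hp) (norm_nonneg z)

lemma norm_phiC_sub_le_aux {p R : ℝ} (hp : 0 ≤ p) (hR : 0 ≤ R) {z w : ℂ}
    (h : ‖w‖ ≤ ‖z‖) : ‖phiC p R z - phiC p R w‖ ≤ (p + 1) * R ^ p * ‖z - w‖ := by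
  set A : ℝ := min ‖z‖ R with hA
  set B : ℝ := min ‖w‖ R with hB
  have hA0 : 0 ≤ A := le_min (norm_nonneg z) hR
  have hB0 : 0 ≤ B := le_min (norm_nonneg w) hR
  have hBA : B ≤ A := min_le_min h le_rfl
  have hAR : A ≤ R := min_le_right _ _
  have hpow : B ^ p ≤ A ^ p := Real.rpow_le_rpow hB0 hBA hp
  have hApR : A ^ p ≤ R ^ p := Real.rpow_le_rpow hA0 hAR hp
  have hsplit : phiC p R z - phiC p R w
      = ((A ^ p : ℝ) : ℂ) * (z - w) + (((A ^ p - B ^ p : ℝ)) : ℂ) * w := by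
    rw [phiC, phiC, ← hA, ← hB]
    push_cast
    ring
  rw [hsplit]
  have h2 : ‖(((A ^ p - B ^ p : ℝ)) : ℂ) * w‖ ≤ p * R ^ p * ‖z - w‖ := by
    rw [norm_mul, Complex.norm_real, Real.norm_eq_abs, abs_of_nonneg (by linarith)]
    by_cases hw : ‖w‖ ≤ R
    · have hBw : B = ‖w‖ := min_eq_left hw
      have hABzw : A - B ≤ ‖z - w‖ := by
        have h1 : A ≤ ‖z‖ := min_le_left _ _
        have h2 : ‖z‖ - ‖w‖ ≤ ‖z - w‖ := norm_sub_norm_le z w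
        rw [hBw]; linarith
      calc (A ^ p - B ^ p) * ‖w‖ = (A ^ p - B ^ p) * B := by rw [hBw]
        _ ≤ p * R ^ p * (A - B) := key_ineq hp hB0 hBA hAR
        _ ≤ p * R ^ p * ‖z - w‖ := by
            apply mul_le_mul_of_nonneg_left hABzw
            positivity
    · have hzR : R ≤ ‖z‖ := le_trans (le_of_not_ge hw) h
      have : A = B := by rw [hA, hB, min_eq_right (le_of_not_ge hw), min_eq_right hzR]
      rw [this, sub_self, zero_mul]
      positivity
  calc ‖((A ^ p : ℝ) : ℂ) * (z - w) + (((A ^ p - B ^ p : ℝ)) : ℂ) * w‖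
      ≤ ‖((A ^ p : ℝ) : ℂ) * (z - w)‖ + ‖(((A ^ p - B ^ p : ℝ)) : ℂ) * w‖ := norm_add_le _ _
    _ ≤ R ^ p * ‖z - w‖ + p * R ^ p * ‖z - w‖ := by
        apply add_le_add _ h2
        rw [norm_mul, Complex.norm_real, Real.norm_eq_abs,
          abs_of_nonneg (Real.rpow_nonneg hA0 p)]
        exact mul_le_mul_of_nonneg_right hApR (norm_nonneg _)
    _ = (p + 1) * R ^ p * ‖z - w‖ := by ring

lemma norm_phiC_sub_le {p R : ℝ} (hp : 0 ≤ p) (hR : 0 ≤ R) (z w : ℂ) :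
    ‖phiC p R z - phiC p R w‖ ≤ (p + 1) * R ^ p * ‖z - w‖ := by
  rcases le_total ‖w‖ ‖z‖ with h | h
  · exact norm_phiC_sub_le_aux hp hR h
  · rw [← norm_neg (phiC p R z - phiC p R w), neg_sub, ← norm_neg (z - w), neg_sub]
    exact norm_phiC_sub_le_aux hp hR h


abbrev ES : Type := lp (fun _ : ℤ => ℂ) 2

lemma two_toReal : ((2:ℝ≥0∞)).toReal = 2 := by norm_num
lemma two_toReal_pos : 0 < ((2:ℝ≥0∞)).toReal := by norm_num

lemma memlp_of_le {C : ℝ} (hC : 0 ≤ C) (u : ES) (w : ℤ → ℂ)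
    (h : ∀ n, ‖w n‖ ≤ C * ‖u n‖) : Memℓp w 2 := by
  apply memℓp_gen
  refine Summable.of_nonneg_of_le (fun n => Real.rpow_nonneg (norm_nonneg _) _)
    (fun n => ?_) (((lp.memℓp u).summable two_toReal_pos).mul_left (C ^ ((2:ℝ≥0∞)).toReal))
  rw [← Real.mul_rpow hC (norm_nonneg _)]
  exact Real.rpow_le_rpow (norm_nonneg _) (h n) two_toReal_pos.le

lemma norm_le_of_le {C : ℝ} (hC : 0 ≤ C) (u v : ES)
    (h : ∀ n, ‖v n‖ ≤ C * ‖u n‖) : ‖v‖ ≤ C * ‖u‖ := by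
  apply lp.norm_le_of_forall_sum_le two_toReal_pos (mul_nonneg hC (norm_nonneg u))
  intro s
  calc ∑ i ∈ s, ‖v i‖ ^ ((2:ℝ≥0∞)).toReal
      ≤ ∑ i ∈ s, C ^ ((2:ℝ≥0∞)).toReal * ‖u i‖ ^ ((2:ℝ≥0∞)).toReal := by
        apply Finset.sum_le_sum
        intro i _
        rw [← Real.mul_rpow hC (norm_nonneg _)]
        exact Real.rpow_le_rpow (norm_nonneg _) (h i) two_toReal_pos.le
    _ = C ^ ((2:ℝ≥0∞)).toReal * ∑ i ∈ s, ‖u i‖ ^ ((2:ℝ≥0∞)).toReal := by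
        rw [Finset.mul_sum]
    _ ≤ C ^ ((2:ℝ≥0∞)).toReal * ‖u‖ ^ ((2:ℝ≥0∞)).toReal := by
        apply mul_le_mul_of_nonneg_left (lp.sum_rpow_le_norm_rpow two_toReal_pos u s)
          (Real.rpow_nonneg hC _)
    _ = (C * ‖u‖) ^ ((2:ℝ≥0∞)).toReal := (Real.mul_rpow hC (norm_nonneg _)).symm

lemma mem_shift (u : ES) (k : ℤ) : Memℓp (fun n => u (n + k)) 2 := by
  apply memℓp_gen
  have h := (lp.memℓp u).summable two_toReal_pos
  exact ((Equiv.addRight k).summable_iff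
    (f := fun n => ‖u n‖ ^ ((2:ℝ≥0∞)).toReal)).mpr h

noncomputable def shR (u : ES) : ES := ⟨fun n => u (n + 1), mem_shift u 1⟩
noncomputable def shL (u : ES) : ES :=
  ⟨fun n => u (n - 1), by simp only [sub_eq_add_neg]; exact mem_shift u (-1)⟩

@[simp] lemma shR_apply (u : ES) (n : ℤ) : (shR u) n = u (n + 1) := rfl
@[simp] lemma shL_apply (u : ES) (n : ℤ) : (shL u) n = u (n - 1) := rfl

lemma norm_shift_le (u : ES) (k : ℤ) (w : ES) (hw : ∀ n, w n = u (n + k)) : ‖w‖ ≤ ‖u‖ := by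
  apply lp.norm_le_of_forall_sum_le two_toReal_pos (norm_nonneg u)
  intro s
  have : ∑ i ∈ s, ‖w i‖ ^ ((2:ℝ≥0∞)).toReal
      = ∑ i ∈ s.map (Equiv.addRight k).toEmbedding, ‖u i‖ ^ ((2:ℝ≥0∞)).toReal := by
    rw [Finset.sum_map]
    refine Finset.sum_congr rfl fun i _ => by rw [hw i]; rfl
  rw [this]
  exact lp.sum_rpow_le_norm_rpow two_toReal_pos u _

lemma norm_shR_le (u : ES) : ‖shR u‖ ≤ ‖u‖ := norm_shift_le u 1 _ (fun _ => rfl)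
lemma norm_shL_le (u : ES) : ‖shL u‖ ≤ ‖u‖ :=
  norm_shift_le u (-1) (shL u) (fun n => by simp [sub_eq_add_neg])

variable {p R ε : ℝ}

noncomputable def Nm (p R : ℝ) (hp : 0 ≤ p) (hR : 0 ≤ R) (u : ES) : ES :=
  ⟨fun n => phiC p R (u n),
    memlp_of_le (Real.rpow_nonneg hR p) u _ (fun n => norm_phiC_le hp hR (u n))⟩

@[simp] lemma Nm_apply (hp : 0 ≤ p) (hR : 0 ≤ R) (u : ES) (n : ℤ) :
    Nm p R hp hR u n = phiC p R (u n) := rfl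

noncomputable def gmap (ε p R : ℝ) (hp : 0 ≤ p) (hR : 0 ≤ R) (u : ES) : ES :=
  Complex.I • (((1 / (ε:ℂ))) • (shL u - (2:ℂ) • u + shR u) + Nm p R hp hR u)

lemma gmap_apply (hp : 0 ≤ p) (hR : 0 ≤ R) (u : ES) (n : ℤ) :
    gmap ε p R hp hR u n
      = Complex.I * ((1 / (ε:ℂ)) * (u (n - 1) - 2 * u n + u (n + 1)) + phiC p R (u n)) := by
  rw [gmap]
  simp only [lp.coeFn_smul, lp.coeFn_add, lp.coeFn_sub, Pi.smul_apply, Pi.add_apply,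
    Pi.sub_apply, smul_eq_mul, shL_apply, shR_apply, Nm_apply]

lemma gmap_sub (hε : 0 < ε) (hp : 0 ≤ p) (hR : 0 ≤ R) (u v : ES) :
    gmap ε p R hp hR u - gmap ε p R hp hR v
      = Complex.I • (((1 / (ε:ℂ))) • (shL (u - v) - (2:ℂ) • (u - v) + shR (u - v))
        + (Nm p R hp hR u - Nm p R hp hR v)) := by
  apply lp.ext
  funext n
  rw [lp.coeFn_sub, Pi.sub_apply, gmap_apply hp hR u n, gmap_apply hp hR v n]
  simp only [lp.coeFn_smul, lp.coeFn_add, lp.coeFn_sub, Pi.smul_apply, Pi.add_apply,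
    Pi.sub_apply, smul_eq_mul, shL_apply, shR_apply, Nm_apply]
  ring

lemma gmap_lipschitz_norm (hε : 0 < ε) (hp : 0 ≤ p) (hR : 0 ≤ R) (u v : ES) :
    ‖gmap ε p R hp hR u - gmap ε p R hp hR v‖ ≤ (4 / ε + (p + 1) * R ^ p) * ‖u - v‖ := by
  rw [gmap_sub hε hp hR]
  set d := u - v with hd
  have hNd : ‖Nm p R hp hR u - Nm p R hp hR v‖ ≤ ((p + 1) * R ^ p) * ‖d‖ := by
    apply norm_le_of_le (by positivity) d
    intro n
    rw [lp.coeFn_sub, Pi.sub_apply, Nm_apply, Nm_apply, hd, lp.coeFn_sub, Pi.sub_apply]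
    exact norm_phiC_sub_le hp hR _ _
  have h1 : ‖shL d - (2:ℂ) • d + shR d‖ ≤ 4 * ‖d‖ := by
    calc ‖shL d - (2:ℂ) • d + shR d‖ ≤ ‖shL d - (2:ℂ) • d‖ + ‖shR d‖ := norm_add_le _ _
      _ ≤ (‖shL d‖ + ‖(2:ℂ) • d‖) + ‖shR d‖ := by
          apply add_le_add_left (norm_sub_le _ _)
      _ ≤ (‖d‖ + 2 * ‖d‖) + ‖d‖ := by
          have h2 : ‖(2:ℂ) • d‖ = 2 * ‖d‖ := by
            rw [norm_smul]; norm_num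
          rw [h2]
          exact add_le_add (add_le_add_left (norm_shL_le d) _) (norm_shR_le d)
      _ = 4 * ‖d‖ := by ring
  calc ‖Complex.I • (((1 / (ε:ℂ))) • (shL d - (2:ℂ) • d + shR d)
        + (Nm p R hp hR u - Nm p R hp hR v))‖
      = ‖((1 / (ε:ℂ))) • (shL d - (2:ℂ) • d + shR d) + (Nm p R hp hR u - Nm p R hp hR v)‖ := by
        rw [norm_smul, Complex.norm_I, one_mul]
    _ ≤ ‖((1 / (ε:ℂ))) • (shL d - (2:ℂ) • d + shR d)‖ + ‖Nm p R hp hR u - Nm p R hp hR v‖ :=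
        norm_add_le _ _
    _ ≤ (1/ε) * (4 * ‖d‖) + ((p + 1) * R ^ p) * ‖d‖ := by
        apply add_le_add _ hNd
        rw [norm_smul]
        have : ‖(1 / (ε:ℂ))‖ = 1 / ε := by
          rw [norm_div, norm_one, Complex.norm_real, Real.norm_eq_abs, abs_of_pos hε]
        rw [this]
        exact mul_le_mul_of_nonneg_left h1 (by positivity)
    _ = (4 / ε + (p + 1) * R ^ p) * ‖d‖ := by ring

noncomputable def gK (ε p R : ℝ) : ℝ≥0 := (4 / ε + (p + 1) * R ^ p).toNNReal

lemma gmap_lipschitz (hε : 0 < ε) (hp : 0 ≤ p) (hR : 0 ≤ R) :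
    LipschitzWith (gK ε p R) (gmap ε p R hp hR) := by
  apply LipschitzWith.of_dist_le_mul
  intro u v
  rw [dist_eq_norm, dist_eq_norm]
  have hnn : (0:ℝ) ≤ 4 / ε + (p + 1) * R ^ p := by positivity
  rw [gK, Real.coe_toNNReal _ hnn]
  exact gmap_lipschitz_norm hε hp hR u v


variable {E : Type*} [NormedAddCommGroup E] [NormedSpace ℝ E] [CompleteSpace E]

/-- Local existence for a globally Lipschitz autonomous vector field. -/
lemma stepA {g : E → E} {K : ℝ≥0} (hg : LipschitzWith K g)
    {T : ℝ} (hT : 0 < T) (hKT : (K:ℝ) * T ≤ 1/2) (a : ℝ) (x : E) :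
    ∃ f : ℝ → E, f a = x ∧ ∀ t ∈ Icc (a - T) (a + T),
      HasDerivWithinAt f (g (f t)) (Icc (a - T) (a + T)) t := by
  set R₀ : ℝ := 2 * T * ‖g x‖ + 1 with hR₀
  have hR₀0 : 0 ≤ R₀ := by positivity
  have hpl : IsPicardLindelof (fun _ y => g y) (tmin := a - T) (tmax := a + T)
      ⟨a, by constructor <;> linarith⟩ x ⟨R₀, hR₀0⟩ 0 ⟨‖g x‖ + K * R₀, by positivity⟩ K := by
    constructor
    · exact fun t _ => hg.lipschitzOnWith
    · exact fun y _ => continuousOn_const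
    · intro t _ y hy
      have h1 : ‖g y - g x‖ ≤ (K:ℝ) * R₀ := by
        have := hg.dist_le_mul y x
        rw [dist_eq_norm] at this
        refine this.trans (mul_le_mul_of_nonneg_left ?_ K.coe_nonneg)
        exact Metric.mem_closedBall.mp hy
      calc ‖g y‖ = ‖g x + (g y - g x)‖ := by rw [add_sub_cancel]
        _ ≤ ‖g x‖ + ‖g y - g x‖ := norm_add_le _ _
        _ ≤ ‖g x‖ + K * R₀ := by linarith
    · have hmax : max (a + T - a) (a - (a - T)) = T := by
        rw [show a + T - a = T by ring, show a - (a - T) = T by ring, max_self]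
      simp only [NNReal.coe_mk, NNReal.coe_zero, sub_zero] at hmax ⊢
      rw [hmax]
      have hgx : 0 ≤ ‖g x‖ := norm_nonneg _
      have hK0 : (0:ℝ) ≤ K := K.coe_nonneg
      have h2 : (K:ℝ) * R₀ * T ≤ R₀ / 2 := by
        calc (K:ℝ) * R₀ * T = ((K:ℝ) * T) * R₀ := by ring
          _ ≤ (1/2) * R₀ := mul_le_mul_of_nonneg_right hKT hR₀0
          _ = R₀ / 2 := by ring
      show (‖g x‖ + K * R₀) * T ≤ R₀
      nlinarith
  obtain ⟨f, hf0, hf⟩ := hpl.exists_eq_forall_mem_Icc_hasDerivWithinAt₀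
  exact ⟨f, hf0, hf⟩

/-- Uniqueness of solutions on symmetric intervals around `0`. -/
lemma uniq_sym {g : E → E} {K : ℝ≥0} (hg : LipschitzWith K g)
    {A₁ A₂ : ℝ} (hA₁ : 0 < A₁) (hA₂ : 0 < A₂) {f₁ f₂ : ℝ → E}
    (h₁ : ∀ t ∈ Icc (-A₁) A₁, HasDerivWithinAt f₁ (g (f₁ t)) (Icc (-A₁) A₁) t)
    (h₂ : ∀ t ∈ Icc (-A₂) A₂, HasDerivWithinAt f₂ (g (f₂ t)) (Icc (-A₂) A₂) t)
    (h0 : f₁ 0 = f₂ 0) :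
    ∀ t : ℝ, |t| ≤ A₁ → |t| ≤ A₂ → f₁ t = f₂ t := by
  intro t ht₁ ht₂
  set A : ℝ := min A₁ A₂ with hA
  have hA0 : 0 < A := lt_min hA₁ hA₂
  have hsub₁ : Icc (-A) A ⊆ Icc (-A₁) A₁ :=
    Icc_subset_Icc (neg_le_neg (min_le_left _ _)) (min_le_left _ _)
  have hsub₂ : Icc (-A) A ⊆ Icc (-A₂) A₂ :=
    Icc_subset_Icc (neg_le_neg (min_le_right _ _)) (min_le_right _ _)
  -- interior derivative upgrades
  have hd₁ : ∀ s ∈ Ioo (-A₁) A₁, HasDerivAt f₁ (g (f₁ s)) s := fun s hs =>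
    (h₁ s (Ioo_subset_Icc_self hs)).hasDerivAt (Icc_mem_nhds hs.1 hs.2)
  have hd₂ : ∀ s ∈ Ioo (-A₂) A₂, HasDerivAt f₂ (g (f₂ s)) s := fun s hs =>
    (h₂ s (Ioo_subset_Icc_self hs)).hasDerivAt (Icc_mem_nhds hs.1 hs.2)
  have hc₁ : ContinuousOn f₁ (Icc (-A) A) := fun s hs =>
    ((h₁ s (hsub₁ hs)).continuousWithinAt).mono hsub₁
  have hc₂ : ContinuousOn f₂ (Icc (-A) A) := fun s hs =>
    ((h₂ s (hsub₂ hs)).continuousWithinAt).mono hsub₂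
  rcases le_total t 0 with h0t | h0t
  · -- use left uniqueness on Icc (-A) 0
    have := ODE_solution_unique_of_mem_Icc_left (v := fun _ y => g y)
      (s := fun _ => univ) (K := K) (fun _ _ => hg.lipschitzOnWith)
      (hc₁.mono (Icc_subset_Icc le_rfl hA0.le))
      (fun s hs => (hd₁ s ⟨lt_of_le_of_lt (neg_le_neg (min_le_left A₁ A₂)) hs.1,
        lt_of_le_of_lt hs.2 hA₁⟩).hasDerivWithinAt)
      (fun _ _ => mem_univ _)
      (hc₂.mono (Icc_subset_Icc le_rfl hA0.le))
      (fun s hs => (hd₂ s ⟨lt_of_le_of_lt (neg_le_neg (min_le_right A₁ A₂)) hs.1,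
        lt_of_le_of_lt hs.2 hA₂⟩).hasDerivWithinAt)
      (fun _ _ => mem_univ _) h0
    exact this ⟨(abs_le.mp (le_min ht₁ ht₂)).1, h0t⟩
  · -- use right uniqueness on Icc 0 A
    have := ODE_solution_unique (v := fun _ y => g y) (K := K) (fun _ => hg)
      (hc₁.mono (Icc_subset_Icc (neg_nonpos.mpr hA0.le) le_rfl))
      (fun s hs => (hd₁ s ⟨lt_of_lt_of_le (neg_neg_of_pos hA₁) hs.1,
        lt_of_lt_of_le hs.2 (min_le_left _ _)⟩).hasDerivWithinAt)
      (hc₂.mono (Icc_subset_Icc (neg_nonpos.mpr hA0.le) le_rfl))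
      (fun s hs => (hd₂ s ⟨lt_of_lt_of_le (neg_neg_of_pos hA₂) hs.1,
        lt_of_lt_of_le hs.2 (min_le_right _ _)⟩).hasDerivWithinAt)
      h0
    exact this ⟨h0t, (abs_le.mp (le_min ht₁ ht₂)).2⟩

theorem global_flow {g : E → E} {K : ℝ≥0} (hg : LipschitzWith K g) (x₀ : E) :
    ∃ f : ℝ → E, f 0 = x₀ ∧ ∀ t : ℝ, HasDerivAt f (g (f t)) t := by
  set T : ℝ := 1 / (2 * ((K:ℝ) + 1)) with hTdef
  have hK0 : (0:ℝ) ≤ K := K.coe_nonneg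
  have hT : 0 < T := by rw [hTdef]; positivity
  have hKT : (K:ℝ) * T ≤ 1/2 := by
    rw [hTdef, mul_one_div, div_le_iff₀ (by positivity)]
    nlinarith
  have main : ∀ n : ℕ, ∃ f : ℝ → E, f 0 = x₀ ∧ ∀ t ∈ Icc (-(T*(n+1))) (T*(n+1)),
      HasDerivWithinAt f (g (f t)) (Icc (-(T*(n+1))) (T*(n+1))) t := by
    intro n
    induction n with
    | zero =>
      obtain ⟨f, hf0, hf⟩ := stepA hg hT hKT 0 x₀
      refine ⟨f, hf0, ?_⟩
      intro t ht
      have e1 : -(T*((0:ℕ)+1)) = 0 - T := by push_cast; ring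
      have e2 : (T*(((0:ℕ):ℝ)+1):ℝ) = 0 + T := by push_cast; ring
      rw [e1, e2] at ht ⊢
      exact hf t ht
    | succ n ih =>
      obtain ⟨f, hf0, hf⟩ := ih
      set A : ℝ := T * (n+1) with hAdef
      have hA0 : 0 < A := by positivity
      obtain ⟨fr, hfr0, hfr⟩ := stepA hg hT hKT A (f A)
      obtain ⟨fl, hfl0, hfl⟩ := stepA hg hT hKT (-A) (f (-A))
      set A' : ℝ := T * (n+1+1) with hA'def
      have hA'eq : A' = A + T := by rw [hA'def, hAdef]; push_cast; ring
      have hA'0 : 0 < A' := by positivity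
      set F : ℝ → E := fun t => if t < -A then fl t else if t ≤ A then f t else fr t with hF
      have hFval_f : ∀ y, -A ≤ y → y ≤ A → F y = f y := by
        intro y h1 h2
        show (if y < -A then fl y else if y ≤ A then f y else fr y) = f y
        rw [if_neg (not_lt.mpr h1), if_pos h2]
      have hFval_l : ∀ y, y < -A → F y = fl y := by
        intro y h1
        show (if y < -A then fl y else if y ≤ A then f y else fr y) = fl y
        rw [if_pos h1]
      have hFval_r : ∀ y, A < y → F y = fr y := by
        intro y h1
        show (if y < -A then fl y else if y ≤ A then f y else fr y) = fr y
        rw [if_neg (not_lt.mpr (by linarith)), if_neg (not_le.mpr h1)]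
      have hF0 : F 0 = x₀ := by
        rw [hFval_f 0 (by linarith) (by linarith), hf0]
      refine ⟨F, hF0, ?_⟩
      have hJ': Icc (-(T*((n:ℝ)+1+1))) (T*((n:ℝ)+1+1)) = Icc (-A') A' := by rw [hA'def]
      push_cast
      rw [hJ']
      intro t ht
      rcases lt_trichotomy t (-A) with h1 | h1 | h1
      · -- t < -A : use fl
        have htl : t ∈ Icc (-A - T) (-A + T) := ⟨by rw [hA'eq] at ht; linarith [ht.1], by linarith⟩
        have hmem : Icc (-A - T) (-A + T) ∈ nhdsWithin t (Icc (-A') A') := by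
          refine Filter.mem_of_superset (Filter.inter_mem
            (mem_nhdsWithin_of_mem_nhds (Iio_mem_nhds h1)) self_mem_nhdsWithin) ?_
          rintro y ⟨hy1, hy2⟩
          exact ⟨by rw [hA'eq] at hy2; linarith [hy2.1], by exact le_of_lt (lt_of_lt_of_le hy1 (by linarith))⟩
        have hdl := (hfl t htl).mono_of_mem_nhdsWithin hmem
        have heq : F =ᶠ[nhdsWithin t (Icc (-A') A')] fl := by
          refine Filter.eventuallyEq_of_mem (mem_nhdsWithin_of_mem_nhds (Iio_mem_nhds h1)) ?_
          intro y hy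
          exact hFval_l y hy
        have hFt : F t = fl t := hFval_l t h1
        have := hdl.congr_of_eventuallyEq heq hFt
        rwa [hFt]
      · -- t = -A : union of Iic and Ici parts
        subst h1
        have hFA : F (-A) = fl (-A) := by
          rw [hFval_f (-A) le_rfl (by linarith), hfl0]
        have hFA' : F (-A) = f (-A) := hFval_f (-A) le_rfl (by linarith)
        have hsplit : Icc (-A') A' = (Icc (-A') A' ∩ Iic (-A)) ∪ (Icc (-A') A' ∩ Ici (-A)) := by
          rw [← inter_union_distrib_left, Iic_union_Ici, inter_univ]
        rw [hsplit]
        apply HasDerivWithinAt.union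
        · have hsubl : Icc (-A') A' ∩ Iic (-A) ⊆ Icc (-A - T) (-A + T) := by
            rintro y ⟨hy1, hy2⟩
            exact ⟨by rw [hA'eq] at hy1; linarith [hy1.1], by linarith [mem_Iic.mp hy2]⟩
          have hd := (hfl (-A) ⟨by linarith, by linarith⟩).mono hsubl
          have hs : ∀ y ∈ Icc (-A') A' ∩ Iic (-A), F y = fl y := by
            rintro y ⟨hy1, hy2⟩
            rcases lt_or_eq_of_le (mem_Iic.mp hy2) with h | h
            · exact hFval_l y h
            · rw [h]; exact hFA
          rw [show g (F (-A)) = g (fl (-A)) by rw [hFA]]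
          exact hd.congr hs hFA
        · have hd0 := hf (-A) ⟨le_rfl, by linarith⟩
          have hmem : Icc (-A) A ∈ nhdsWithin (-A) (Icc (-A') A' ∩ Ici (-A)) := by
            refine Filter.mem_of_superset (Filter.inter_mem
              (mem_nhdsWithin_of_mem_nhds (Iio_mem_nhds (show -A < A by linarith)))
              self_mem_nhdsWithin) ?_
            rintro y ⟨hy1, hy2⟩
            exact ⟨hy2.2, (mem_Iio.mp hy1).le⟩
          have hd := hd0.mono_of_mem_nhdsWithin hmem
          have heq : F =ᶠ[nhdsWithin (-A) (Icc (-A') A' ∩ Ici (-A))] f := by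
            refine Filter.eventuallyEq_of_mem (Filter.inter_mem
              (mem_nhdsWithin_of_mem_nhds (Iio_mem_nhds (show -A < A by linarith)))
              self_mem_nhdsWithin) ?_
            rintro y ⟨hy1, hy2⟩
            exact hFval_f y hy2.2 (mem_Iio.mp hy1).le
          rw [show g (F (-A)) = g (f (-A)) by rw [hFA']]
          exact hd.congr_of_eventuallyEq heq hFA'
      rcases lt_trichotomy t A with h2 | h2 | h2
      · -- -A < t < A : use f
        have hmem : Icc (-A) A ∈ nhdsWithin t (Icc (-A') A') := by
          refine Filter.mem_of_superset (Filter.inter_mem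
            (mem_nhdsWithin_of_mem_nhds (Ioo_mem_nhds h1 h2)) self_mem_nhdsWithin) ?_
          rintro y ⟨hy1, _⟩
          exact ⟨hy1.1.le, hy1.2.le⟩
        have hd := (hf t ⟨h1.le, h2.le⟩).mono_of_mem_nhdsWithin hmem
        have heq : F =ᶠ[nhdsWithin t (Icc (-A') A')] f := by
          refine Filter.eventuallyEq_of_mem (mem_nhdsWithin_of_mem_nhds (Ioo_mem_nhds h1 h2)) ?_
          intro y hy
          exact hFval_f y hy.1.le hy.2.le
        have hFt : F t = f t := hFval_f t h1.le h2.le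
        have := hd.congr_of_eventuallyEq heq hFt
        rwa [hFt]
      · -- t = A
        subst h2
        have hFA : F A = f A := hFval_f A (by linarith) le_rfl
        have hFAr : F A = fr A := by rw [hFA, hfr0]
        have hsplit : Icc (-A') A' = (Icc (-A') A' ∩ Iic A) ∪ (Icc (-A') A' ∩ Ici A) := by
          rw [← inter_union_distrib_left, Iic_union_Ici, inter_univ]
        rw [hsplit]
        apply HasDerivWithinAt.union
        · have hd0 := hf A ⟨by linarith, le_rfl⟩
          have hmem : Icc (-A) A ∈ nhdsWithin A (Icc (-A') A' ∩ Iic A) := by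
            refine Filter.mem_of_superset (Filter.inter_mem
              (mem_nhdsWithin_of_mem_nhds (Ioi_mem_nhds (show -A < A by linarith)))
              self_mem_nhdsWithin) ?_
            rintro y ⟨hy1, hy2⟩
            exact ⟨(mem_Ioi.mp hy1).le, hy2.2⟩
          have hd := hd0.mono_of_mem_nhdsWithin hmem
          have heq : F =ᶠ[nhdsWithin A (Icc (-A') A' ∩ Iic A)] f := by
            refine Filter.eventuallyEq_of_mem (Filter.inter_mem
              (mem_nhdsWithin_of_mem_nhds (Ioi_mem_nhds (show -A < A by linarith)))
              self_mem_nhdsWithin) ?_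
            rintro y ⟨hy1, hy2⟩
            exact hFval_f y (mem_Ioi.mp hy1).le hy2.2
          rw [show g (F A) = g (f A) by rw [hFA]]
          exact hd.congr_of_eventuallyEq heq hFA
        · have hsubr : Icc (-A') A' ∩ Ici A ⊆ Icc (A - T) (A + T) := by
            rintro y ⟨hy1, hy2⟩
            exact ⟨by linarith [mem_Ici.mp hy2], by rw [hA'eq] at hy1; linarith [hy1.2]⟩
          have hd := (hfr A ⟨by linarith, by linarith⟩).mono hsubr
          have hs : ∀ y ∈ Icc (-A') A' ∩ Ici A, F y = fr y := by
            rintro y ⟨hy1, hy2⟩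
            rcases lt_or_eq_of_le (mem_Ici.mp hy2) with h | h
            · exact hFval_r y h
            · rw [← h]; exact hFAr
          rw [show g (F A) = g (fr A) by rw [hFAr]]
          exact hd.congr hs hFAr
      · -- t > A : use fr
        have htr : t ∈ Icc (A - T) (A + T) := ⟨by linarith, by rw [hA'eq] at ht; linarith [ht.2]⟩
        have hmem : Icc (A - T) (A + T) ∈ nhdsWithin t (Icc (-A') A') := by
          refine Filter.mem_of_superset (Filter.inter_mem
            (mem_nhdsWithin_of_mem_nhds (Ioi_mem_nhds h2)) self_mem_nhdsWithin) ?_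
          rintro y ⟨hy1, hy2⟩
          exact ⟨by exact le_of_lt (lt_of_le_of_lt (by linarith) hy1), by rw [hA'eq] at hy2; linarith [hy2.2]⟩
        have hdr := (hfr t htr).mono_of_mem_nhdsWithin hmem
        have heq : F =ᶠ[nhdsWithin t (Icc (-A') A')] fr := by
          refine Filter.eventuallyEq_of_mem (mem_nhdsWithin_of_mem_nhds (Ioi_mem_nhds h2)) ?_
          intro y hy
          exact hFval_r y hy
        have hFt : F t = fr t := hFval_r t h2
        have := hdr.congr_of_eventuallyEq heq hFt
        rwa [hFt]
  -- assemble the global solution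
  choose fn hfn0 hfn using main
  set N : ℝ → ℕ := fun t => ⌈|t| / T⌉₊ with hN
  have hNlt : ∀ t : ℝ, |t| < T * (N t + 1) := by
    intro t
    have h1 : |t| / T ≤ ⌈|t| / T⌉₊ := Nat.le_ceil _
    have h2 : |t| ≤ T * N t := by
      rw [hN]
      calc |t| = (|t| / T) * T := by field_simp
        _ ≤ (⌈|t| / T⌉₊ : ℝ) * T := mul_le_mul_of_nonneg_right h1 hT.le
        _ = T * ⌈|t| / T⌉₊ := by ring
    nlinarith
  set u : ℝ → E := fun t => fn (N t) t with hu
  have hsol : ∀ m : ℕ, ∀ t ∈ Icc (-(T*(m+1))) (T*(m+1)),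
      HasDerivWithinAt (fn m) (g (fn m t)) (Icc (-(T*(m+1))) (T*(m+1))) t := hfn
  have agree : ∀ (m : ℕ) (t : ℝ), |t| ≤ T * (m + 1) → u t = fn m t := by
    intro m t ht
    rw [hu]
    exact uniq_sym hg (by positivity) (by positivity) (hsol (N t)) (hsol m)
      (by rw [hfn0, hfn0]) t (hNlt t).le ht
  refine ⟨u, ?_, ?_⟩
  · have : u 0 = fn (N 0) 0 := rfl
    rw [this, hfn0]
  · intro t
    set m := N t with hm
    have hlt := hNlt t
    have hmem : Icc (-(T*(m+1))) (T*(m+1)) ∈ nhds t := by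
      apply Icc_mem_nhds
      · rcases abs_lt.mp hlt with ⟨h, _⟩; linarith
      · exact (abs_lt.mp hlt).2
    have hd : HasDerivAt (fn m) (g (fn m t)) t :=
      (hsol m t ⟨(abs_le.mp hlt.le).1, (abs_le.mp hlt.le).2⟩).hasDerivAt hmem
    have heq : u =ᶠ[nhds t] fn m := by
      refine Filter.eventuallyEq_of_mem hmem ?_
      intro y hy
      exact agree m y (abs_le.mpr ⟨hy.1, hy.2⟩)
    have := hd.congr_of_eventuallyEq heq
    rwa [show g (fn m t) = g (u t) by rw [agree m t hlt.le]] at this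


local notation "⟪" x ", " y "⟫" => @inner ℂ _ _ x y

lemma key_re {ε : ℝ} (u w : ES) (c : ℤ → ℝ) (Cb : ℝ) (hc : ∀ n, |c n| ≤ Cb)
    (hw : ∀ n, w n = Complex.I * ((1/(ε:ℂ)) * (u (n-1) - 2*u n + u (n+1)) + (c n : ℂ) * u n)) :
    (⟪u, w⟫).re = 0 := by
  have hCb0 : 0 ≤ Cb := le_trans (abs_nonneg _) (hc 0)
  have hmem : Memℓp (fun n => ((c n : ℂ) * u n)) 2 := by
    apply memlp_of_le hCb0 u
    intro n
    rw [norm_mul, Complex.norm_real, Real.norm_eq_abs]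
    exact mul_le_mul_of_nonneg_right (hc n) (norm_nonneg _)
  set m : ES := ⟨fun n => (c n : ℂ) * u n, hmem⟩ with hmdef
  have hm_apply : ∀ n, m n = (c n : ℂ) * u n := fun n => rfl
  have hwdec : w = Complex.I • ((1/(ε:ℂ)) • (shL u - (2:ℂ) • u + shR u) + m) := by
    apply lp.ext
    funext n
    rw [hw n]
    simp only [lp.coeFn_smul, lp.coeFn_add, lp.coeFn_sub, Pi.smul_apply, Pi.add_apply,
      Pi.sub_apply, smul_eq_mul, shL_apply, shR_apply, hm_apply]
  -- the three inner products
  set X : ℂ := ⟪u, shL u⟫ with hX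
  have hconj : ⟪u, shR u⟫ = conj X := by
    have h1 : conj X = ⟪shL u, u⟫ := by
      rw [hX, ← inner_conj_symm (𝕜 := ℂ) (shL u) u]
    have h2 : (⟪shL u, u⟫ : ℂ) = ∑' n : ℤ, conj (u (n - 1)) * u n := by
      rw [lp.inner_eq_tsum]
      simp only [RCLike.inner_apply', shL_apply]
    have h3 : (⟪u, shR u⟫ : ℂ) = ∑' n : ℤ, conj (u n) * u (n + 1) := by
      rw [lp.inner_eq_tsum]
      simp only [RCLike.inner_apply', shR_apply]
    have h4 : ∑' n : ℤ, conj (u n) * u (n + 1) = ∑' n : ℤ, conj (u (n - 1)) * u n := by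
      have := Equiv.tsum_eq (Equiv.addRight (1:ℤ)) (fun n => conj (u (n - 1)) * u n)
      rw [← this]
      apply tsum_congr
      intro n
      simp
    rw [h3, h4, h1, h2]
  have hm_im : (⟪u, m⟫ : ℂ).im = 0 := by
    rw [lp.inner_eq_tsum, Complex.im_tsum (lp.summable_inner u m)]
    convert tsum_zero with n
    simp only [RCLike.inner_apply', hm_apply]
    have : conj (u n) * ((c n : ℂ) * u n) = ((c n : ℝ) : ℂ) * ((Complex.normSq (u n) : ℝ) : ℂ) := by
      rw [Complex.normSq_eq_conj_mul_self]
      ring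
    rw [this, ← Complex.ofReal_mul, Complex.ofReal_im]
  have hself_im : (⟪u, u⟫ : ℂ).im = 0 := inner_self_im (𝕜 := ℂ) u
  have hinner : (⟪u, w⟫ : ℂ)
      = Complex.I * ((1/(ε:ℂ)) * (X - 2 * ⟪u, u⟫ + conj X) + ⟪u, m⟫) := by
    rw [hwdec, inner_smul_right, inner_add_right, inner_smul_right, inner_add_right,
      inner_sub_right, inner_smul_right, hconj, ← hX]
  rw [hinner]
  have hY : (X - 2 * ⟪u, u⟫ + conj X).im = 0 := by
    rw [Complex.add_im, Complex.sub_im, Complex.conj_im, Complex.mul_im, hself_im]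
    simp
  have hz : ((1/(ε:ℂ)) * (X - 2 * ⟪u, u⟫ + conj X) + ⟪u, m⟫).im = 0 := by
    rw [Complex.add_im, hm_im]
    have : (1/(ε:ℂ)) = ((ε⁻¹ : ℝ) : ℂ) := by push_cast; ring
    rw [this, Complex.im_ofReal_mul, hY]
    ring
  rw [Complex.mul_re, Complex.I_re, Complex.I_im, hz]
  ring

/-- conservation of the norm -/
lemma const_norm (f f' : ℝ → ES) (hd : ∀ t ∈ Ici (0:ℝ), HasDerivAt f (f' t) t)
    (hre : ∀ t ∈ Ici (0:ℝ), (⟪f t, f' t⟫ : ℂ).re = 0) :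
    ∀ t ∈ Ici (0:ℝ), ‖f t‖ = ‖f 0‖ := by
  set φ : ℝ → ℝ := fun t => ((⟪f t, f t⟫ : ℂ)).re with hφ
  have hder : ∀ t ∈ Ici (0:ℝ), HasDerivAt φ 0 t := by
    intro t ht
    have h1 : HasDerivAt (fun s => (⟪f s, f s⟫ : ℂ)) (⟪f t, f' t⟫ + ⟪f' t, f t⟫) t :=
      (hd t ht).inner ℂ (hd t ht)
    have h2 := (Complex.reCLM.hasFDerivAt (x := (⟪f t, f t⟫ : ℂ))).comp_hasDerivAt t h1
    have h3 : Complex.reCLM (⟪f t, f' t⟫ + ⟪f' t, f t⟫) = 0 := by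
      have : (⟪f' t, f t⟫ : ℂ).re = (⟪f t, f' t⟫ : ℂ).re := by
        simpa using inner_re_symm (𝕜 := ℂ) (f' t) (f t)
      simp only [Complex.reCLM_apply, Complex.add_re]
      rw [this, hre t ht]
      ring
    rw [h3] at h2
    exact h2
  have hconst : ∀ t ∈ Ici (0:ℝ), φ t = φ 0 := by
    intro t ht
    rcases eq_or_lt_of_le (mem_Ici.mp ht) with h | h
    · rw [← h]
    have := constant_of_has_deriv_right_zero (f := φ) (a := 0) (b := t)
      (fun s hs => (hder s hs.1).continuousAt.continuousWithinAt)
      (fun s hs => (hder s hs.1).hasDerivWithinAt)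
    exact this t ⟨(mem_Ici.mp ht), le_rfl⟩
  intro t ht
  have h1 : ‖f t‖ ^ 2 = ‖f 0‖ ^ 2 := by
    have e1 : ‖f t‖ ^ 2 = φ t := (norm_sq_eq_re_inner (𝕜 := ℂ) (f t))
    have e2 : ‖f 0‖ ^ 2 = φ 0 := (norm_sq_eq_re_inner (𝕜 := ℂ) (f 0))
    rw [e1, e2]
    exact hconst t ht
  have := congrArg Real.sqrt h1
  rwa [Real.sqrt_sq (norm_nonneg _), Real.sqrt_sq (norm_nonneg _)] at this


end DNLSaux

open scoped ENNReal
open Set DNLSaux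

/-- Global well-posedness in `ℓ²` of the conservative power-nonlinearity
DNLS equation `i u̇ₙ + (1/ε)(uₙ₋₁ − 2uₙ + uₙ₊₁) + |uₙ|^(2σ) uₙ = 0`, for every `σ ≥ 0`
and every initial datum. -/
theorem stmt_5 (ε σ : ℝ) (hε : 0 < ε) (hσ : 0 ≤ σ) :
    ∀ u₀ : lp (fun _ : ℤ => ℂ) 2,
      ∃ u u' : ℝ → lp (fun _ : ℤ => ℂ) 2,
        (u 0 = u₀ ∧
          (∀ t ∈ Set.Ici (0:ℝ), HasDerivAt u (u' t) t) ∧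
          ContinuousOn u' (Set.Ici (0:ℝ)) ∧
          (∀ t ∈ Set.Ici (0:ℝ), ∀ n : ℤ,
            Complex.I * u' t n + (1/ε : ℂ) * (u t (n-1) - 2 * u t n + u t (n+1))
              + (‖u t n‖ ^ (2 * σ) : ℝ) * u t n = 0)) ∧
        -- uniqueness
        (∀ v v' : ℝ → lp (fun _ : ℤ => ℂ) 2,
          v 0 = u₀ →
          (∀ t ∈ Set.Ici (0:ℝ), HasDerivAt v (v' t) t) →
          ContinuousOn v' (Set.Ici (0:ℝ)) →
          (∀ t ∈ Set.Ici (0:ℝ), ∀ n : ℤ,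
            Complex.I * v' t n + (1/ε : ℂ) * (v t (n-1) - 2 * v t n + v t (n+1))
              + (‖v t n‖ ^ (2 * σ) : ℝ) * v t n = 0) →
          ∀ t ∈ Set.Ici (0:ℝ), v t = u t) := by
  intro u₀
  set p : ℝ := 2 * σ with hpdef
  have hp : 0 ≤ p := by positivity
  set R : ℝ := ‖u₀‖ with hRdef
  have hR : 0 ≤ R := norm_nonneg _
  set g : ES → ES := gmap ε p R hp hR with hgdef
  have hK : LipschitzWith (gK ε p R) g := gmap_lipschitz hε hp hR
  obtain ⟨u, hu0, hud⟩ := global_flow hK u₀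
  set u' : ℝ → ES := fun t => g (u t) with hu'def
  have hud' : ∀ t : ℝ, HasDerivAt u (u' t) t := hud
  have habs : ∀ z : ℂ, ‖z‖ = ‖z‖ := fun z => rfl
  have htwo : (2 : ℝ≥0∞) ≠ 0 := by norm_num
  -- conservation identity for u
  have hre : ∀ t : ℝ, ((inner ℂ (u t) (u' t) : ℂ)).re = 0 := by
    intro t
    apply key_re (ε := ε) (u t) (u' t) (fun n => min ‖u t n‖ R ^ p) (R ^ p)
    · intro n
      rw [abs_of_nonneg (Real.rpow_nonneg (le_min (norm_nonneg _) hR) _)]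
      exact Real.rpow_le_rpow (le_min (norm_nonneg _) hR) (min_le_right _ _) hp
    · intro n
      rw [hu'def]
      exact gmap_apply hp hR (u t) n
  have hnorm : ∀ t ∈ Ici (0:ℝ), ‖u t‖ = R := by
    intro t ht
    have h := const_norm u u' (fun s _ => hud' s) (fun s _ => hre s) t ht
    rw [h, hu0, hRdef]
  have hptle : ∀ t ∈ Ici (0:ℝ), ∀ n : ℤ, ‖u t n‖ ≤ R := by
    intro t ht n
    exact (lp.norm_apply_le_norm htwo (u t) n).trans (le_of_eq (hnorm t ht))
  refine ⟨u, u', ⟨hu0, fun t _ => hud' t, ?_, ?_⟩, ?_⟩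
  · -- continuity of u'
    have hucont : Continuous u := continuous_iff_continuousAt.mpr fun t => (hud' t).continuousAt
    exact ((hK.continuous).comp hucont).continuousOn
  · -- the equation for u
    intro t ht n
    have h1 : u' t n = Complex.I * ((1/(ε:ℂ)) * (u t (n-1) - 2 * u t n + u t (n+1))
        + phiC p R (u t n)) := gmap_apply hp hR (u t) n
    have h2 : phiC p R (u t n) = ((‖u t n‖ ^ p : ℝ) : ℂ) * u t n :=
      phiC_of_le (hptle t ht n)
    rw [h1, h2, habs (u t n)]
    linear_combination ((1/(ε:ℂ)) * (u t (n-1) - 2 * u t n + u t (n+1))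
      + ((‖u t n‖ ^ p : ℝ) : ℂ) * u t n) * Complex.I_mul_I
  · -- uniqueness
    intro v v' hv0 hvd hvc hveq
    have hv'n : ∀ t ∈ Ici (0:ℝ), ∀ n : ℤ, v' t n
        = Complex.I * ((1/(ε:ℂ)) * (v t (n-1) - 2 * v t n + v t (n+1))
          + ((‖v t n‖ ^ p : ℝ) : ℂ) * v t n) := by
      intro t ht n
      have E := hveq t ht n
      linear_combination (-Complex.I) * E + (v' t n) * Complex.I_mul_I
    have hvre : ∀ t ∈ Ici (0:ℝ), ((inner ℂ (v t) (v' t) : ℂ)).re = 0 := by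
      intro t ht
      apply key_re (ε := ε) (v t) (v' t) (fun n => ‖v t n‖ ^ p) (‖v t‖ ^ p)
      · intro n
        rw [habs (v t n), abs_of_nonneg (Real.rpow_nonneg (norm_nonneg _) _)]
        exact Real.rpow_le_rpow (norm_nonneg _) (lp.norm_apply_le_norm htwo (v t) n) hp
      · exact hv'n t ht
    have hvnorm : ∀ t ∈ Ici (0:ℝ), ‖v t‖ = R := by
      intro t ht
      rw [hRdef, ← hv0]
      exact const_norm v v' hvd hvre t ht
    have hv'g : ∀ t ∈ Ici (0:ℝ), v' t = g (v t) := by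
      intro t ht
      apply lp.ext
      funext n
      have h1 : g (v t) n = Complex.I * ((1/(ε:ℂ)) * (v t (n-1) - 2 * v t n + v t (n+1))
          + phiC p R (v t n)) := gmap_apply hp hR (v t) n
      have hle : ‖v t n‖ ≤ R := (lp.norm_apply_le_norm htwo (v t) n).trans
        (le_of_eq (hvnorm t ht))
      have h2 : phiC p R (v t n) = ((‖v t n‖ ^ p : ℝ) : ℂ) * v t n := phiC_of_le hle
      rw [h1, h2, ← habs (v t n)]
      exact hv'n t ht n
    intro t ht
    rcases eq_or_lt_of_le (mem_Ici.mp ht) with h0 | h0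
    · rw [← h0, hv0, hu0]
    have := ODE_solution_unique (v := fun _ y => g y) (K := gK ε p R) (fun _ => hK)
      (f := v) (g := u) (a := 0) (b := t)
      (fun s hs => (hvd s hs.1).continuousAt.continuousWithinAt)
      (fun s hs => (hv'g s hs.1 ▸ (hvd s hs.1)).hasDerivWithinAt)
      (fun s hs => (hud' s).continuousAt.continuousWithinAt)
      (fun s _ => (hud' s).hasDerivWithinAt)
      (by rw [hv0, hu0])
    exact this ⟨h0.le, le_rfl⟩
end
end

section
/- Let ε > 0, σ > 0, and let u : [0, T] → ℓ² be a continuously differentiable solution of the conservative DNLS equation i u̇_n + (1/ε)(u_{n−1} − 2u_n + u_{n+1}) + |u_n|^{2σ}u_n = 0 (n ∈ ℤ) with u(0) = u₀. Then for all t ∈ [0, T], ‖u(t)‖²_{ℓ²₁} ≤ ‖u₀‖²_{ℓ²₁} + (2ε/(σ+1))‖u₀‖^{2σ+2}_{ℓ²}. -/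
open scoped ENNReal
open Complex
noncomputable section

lemma L0 {q a b : ℝ} (hq : 0 < q) (hb : 0 ≤ b) (hba : b ≤ a) :
    (a ^ q - b ^ q) * b ≤ q * a ^ q * (a - b) := by
  rcases eq_or_lt_of_le hb with rfl | hb0
  · simp only [Real.rpow_natCast, mul_zero, sub_zero]
    positivity
  rcases eq_or_lt_of_le hba with rfl | hab
  · simp
  obtain ⟨c, hc, hc'⟩ := exists_hasDerivAt_eq_slope (fun x => x ^ q)
    (fun x => q * x ^ (q - 1)) hab
    (by
      apply ContinuousOn.rpow_const continuousOn_id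
      intro x hx; left; exact ne_of_gt (lt_of_lt_of_le hb0 hx.1))
    (by
      intro x hx
      exact Real.hasDerivAt_rpow_const (Or.inl (ne_of_gt (lt_trans hb0 hx.1))))
  have hc0 : 0 < c := lt_trans hb0 hc.1
  have key : a ^ q - b ^ q = q * c ^ (q - 1) * (a - b) := by
    rw [eq_div_iff (by linarith : a - b ≠ 0)] at hc'
    linarith [hc']
  rw [key]
  have hcb : c ^ (q - 1) * b ≤ a ^ q := by
    have ha0 : 0 < a := lt_of_le_of_lt hb hab
    rcases le_or_gt 1 q with h1 | h1
    · calc c ^ (q-1) * b ≤ a ^ (q-1) * a := by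
            apply mul_le_mul (Real.rpow_le_rpow hc0.le (le_of_lt hc.2) (by linarith)) hba hb
              (Real.rpow_nonneg ha0.le _)
          _ = a ^ q := by
            rw [← Real.rpow_add_one (ne_of_gt ha0)]; ring_nf
    · calc c ^ (q-1) * b ≤ b ^ (q-1) * b := by
            apply mul_le_mul_of_nonneg_right _ hb
            exact Real.rpow_le_rpow_of_nonpos hb0 hc.1.le (by linarith)
          _ = b ^ q := by rw [← Real.rpow_add_one (ne_of_gt hb0)]; ring_nf
          _ ≤ a ^ q := Real.rpow_le_rpow hb hba hq.le
  calc q * c ^ (q-1) * (a - b) * b = (c ^ (q-1) * b) * (q * (a - b)) := by ring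
    _ ≤ a ^ q * (q * (a-b)) := by
        apply mul_le_mul_of_nonneg_right hcb (by nlinarith)
    _ = q * a ^ q * (a - b) := by ring

lemma L1aux {q : ℝ} (hq : 0 < q) {z w : ℂ} (hwz : ‖w‖ ≤ ‖z‖) :
    ‖(‖z‖ ^ q : ℝ) * (starRingEnd ℂ) z - (‖w‖ ^ q : ℝ) * (starRingEnd ℂ) w‖
      ≤ (q + 1) * ‖z‖ ^ q * ‖z - w‖ := by
  have h1 : (‖z‖ ^ q : ℝ) * (starRingEnd ℂ) z - (‖w‖ ^ q : ℝ) * (starRingEnd ℂ) w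
      = (‖z‖ ^ q : ℝ) * ((starRingEnd ℂ) z - (starRingEnd ℂ) w)
        + ((‖z‖ ^ q - ‖w‖ ^ q : ℝ) : ℂ) * (starRingEnd ℂ) w := by
    push_cast; ring
  rw [h1]
  have hzw : ‖z‖ - ‖w‖ ≤ ‖z - w‖ := by
    have := norm_sub_norm_le z w; linarith
  have hnn : (0:ℝ) ≤ ‖z‖ ^ q - ‖w‖ ^ q :=
    sub_nonneg.2 (Real.rpow_le_rpow (norm_nonneg _) hwz hq.le)
  calc ‖((‖z‖ ^ q : ℝ) : ℂ) * ((starRingEnd ℂ) z - (starRingEnd ℂ) w)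
        + ((‖z‖ ^ q - ‖w‖ ^ q : ℝ) : ℂ) * (starRingEnd ℂ) w‖
      ≤ ‖((‖z‖ ^ q : ℝ) : ℂ) * ((starRingEnd ℂ) z - (starRingEnd ℂ) w)‖
        + ‖((‖z‖ ^ q - ‖w‖ ^ q : ℝ) : ℂ) * (starRingEnd ℂ) w‖ := norm_add_le _ _
    _ = ‖z‖ ^ q * ‖z - w‖ + (‖z‖ ^ q - ‖w‖ ^ q) * ‖w‖ := by
        rw [norm_mul, norm_mul, ← map_sub, RCLike.norm_conj, RCLike.norm_conj]
        push_cast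
        simp only [Complex.norm_real, Real.norm_eq_abs]
        rw [_root_.abs_of_nonneg (Real.rpow_nonneg (norm_nonneg z) q),
          ← Complex.ofReal_sub, Complex.norm_real, Real.norm_eq_abs, _root_.abs_of_nonneg hnn]
    _ ≤ ‖z‖ ^ q * ‖z - w‖ + q * ‖z‖ ^ q * (‖z‖ - ‖w‖) := by
        linarith [L0 hq (norm_nonneg w) hwz]
    _ ≤ ‖z‖ ^ q * ‖z - w‖ + q * ‖z‖ ^ q * ‖z - w‖ := by
        have : (0:ℝ) ≤ q * ‖z‖ ^ q := by positivity
        nlinarith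
    _ = (q + 1) * ‖z‖ ^ q * ‖z - w‖ := by ring

lemma L1 {q : ℝ} (hq : 0 < q) {M : ℝ} (z w : ℂ) (hz : ‖z‖ ≤ M) (hw : ‖w‖ ≤ M) :
    ‖(‖z‖ ^ q : ℝ) * (starRingEnd ℂ) z - (‖w‖ ^ q : ℝ) * (starRingEnd ℂ) w‖
      ≤ (q + 1) * M ^ q * ‖z - w‖ := by
  have hM : (0:ℝ) ≤ M := le_trans (norm_nonneg z) hz
  rcases le_total ‖w‖ ‖z‖ with h | h
  · refine le_trans (L1aux hq h) ?_
    have := Real.rpow_le_rpow (norm_nonneg z) hz hq.le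
    apply mul_le_mul_of_nonneg_right _ (norm_nonneg _)
    nlinarith [Real.rpow_nonneg (norm_nonneg z) q]
  · rw [← norm_neg]
    have h2 : -(((‖z‖ ^ q : ℝ) : ℂ) * (starRingEnd ℂ) z - (‖w‖ ^ q : ℝ) * (starRingEnd ℂ) w)
        = (‖w‖ ^ q : ℝ) * (starRingEnd ℂ) w - (‖z‖ ^ q : ℝ) * (starRingEnd ℂ) z := by ring
    rw [h2, ← norm_neg (z - w)]
    have h3 : -(z - w) = w - z := by ring
    rw [h3]
    refine le_trans (L1aux hq h) ?_
    have := Real.rpow_le_rpow (norm_nonneg w) hw hq.le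
    apply mul_le_mul_of_nonneg_right _ (norm_nonneg _)
    nlinarith [Real.rpow_nonneg (norm_nonneg w) q]

lemma normSq_line (a h : ℂ) (t : ℝ) :
    ‖a + t • h‖^2 = ‖a‖^2 + 2*((starRingEnd ℂ) a * h).re * t + ‖h‖^2 * t^2 := by
  simp only [Complex.sq_norm, Complex.normSq_apply, Complex.add_re,
    Complex.add_im, Complex.real_smul, Complex.mul_re, Complex.mul_im, Complex.ofReal_re,
    Complex.ofReal_im, Complex.conj_re, Complex.conj_im]
  ring

lemma hasDerivAt_normsq_line (a h : ℂ) (t₀ : ℝ) :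
    HasDerivAt (fun t : ℝ => ‖a + t • h‖^2)
      (2 * ((starRingEnd ℂ) (a + t₀ • h) * h).re) t₀ := by
  have key : (fun t : ℝ => ‖a + t • h‖^2)
      = fun t => ‖a‖^2 + 2*((starRingEnd ℂ) a * h).re * t + ‖h‖^2 * t^2 := by
    funext t; exact normSq_line a h t
  rw [key]
  have d1 : HasDerivAt (fun t : ℝ => ‖a‖^2 + 2*((starRingEnd ℂ) a * h).re * t + ‖h‖^2 * t^2)
      (0 + 2*((starRingEnd ℂ) a * h).re * 1 + ‖h‖^2 * (2 * t₀^1)) t₀ :=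
    ((hasDerivAt_const t₀ (‖a‖^2)).add ((hasDerivAt_id t₀).const_mul _)).add
      ((hasDerivAt_pow 2 t₀).const_mul (‖h‖^2))
  convert d1 using 1
  simp only [Complex.add_re, Complex.add_im, Complex.real_smul, Complex.mul_re, Complex.mul_im,
    Complex.ofReal_re, Complex.ofReal_im, Complex.conj_re, Complex.conj_im, map_add,
    Complex.sq_norm, Complex.normSq_apply]
  ring

lemma sq_rpow_helper (x : ℝ) (hx : 0 ≤ x) (e : ℝ) :
    ((x^2 : ℝ) : ℝ) ^ e = x ^ (2 * e) := by
  rw [← Real.rpow_natCast x 2, ← Real.rpow_mul hx]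
  norm_num

lemma hasDerivAt_rpow_line {q : ℝ} (hq : 0 < q) (a h : ℂ) (t₀ : ℝ) :
    HasDerivAt (fun t : ℝ => ‖a + t • h‖ ^ (q + 2))
      ((q + 2) * ‖a + t₀ • h‖ ^ q * ((starRingEnd ℂ) (a + t₀ • h) * h).re) t₀ := by
  have r1 : (1:ℝ) ≤ (q+2)/2 := by linarith
  have base := (hasDerivAt_normsq_line a h t₀).rpow_const (p := (q+2)/2) (Or.inr r1)
  have key : (fun t : ℝ => ‖a + t • h‖ ^ (q + 2))
      = fun t => (‖a + t • h‖^2 : ℝ) ^ ((q+2)/2) := by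
    funext t
    rw [sq_rpow_helper _ (norm_nonneg _)]
    congr 1; ring
  rw [key]
  convert base using 1
  rw [sq_rpow_helper _ (norm_nonneg _)]
  have : 2 * ((q+2)/2 - 1) = q := by ring
  rw [this]
  ring

lemma L3 {q : ℝ} (hq : 0 < q) (a h : ℂ) :
    |‖a + h‖ ^ (q+2) - ‖a‖ ^ (q+2) - (q+2) * ‖a‖ ^ q * ((starRingEnd ℂ) a * h).re|
      ≤ (q+2) * (q+1) * (‖a‖ + ‖h‖) ^ q * ‖h‖^2 := by
  set C := (q+2) * (q+1) * (‖a‖ + ‖h‖) ^ q * ‖h‖^2 with hC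
  set f : ℝ → ℝ := fun t => ‖a + t • h‖ ^ (q+2) - t * ((q+2) * ‖a‖ ^ q * ((starRingEnd ℂ) a * h).re) with hf
  have hderiv : ∀ t : ℝ, HasDerivAt f
      ((q+2) * ‖a + t • h‖ ^ q * ((starRingEnd ℂ) (a + t • h) * h).re
        - (q+2) * ‖a‖ ^ q * ((starRingEnd ℂ) a * h).re) t := fun t =>
    (hasDerivAt_rpow_line hq a h t).sub (hasDerivAt_mul_const _)
  have hbound : ∀ t ∈ Set.Ico (0:ℝ) 1,
      ‖(q+2) * ‖a + t • h‖ ^ q * ((starRingEnd ℂ) (a + t • h) * h).re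
        - (q+2) * ‖a‖ ^ q * ((starRingEnd ℂ) a * h).re‖ ≤ C := by
    intro t ht
    have hre : (q+2) * ‖a + t • h‖ ^ q * ((starRingEnd ℂ) (a + t • h) * h).re
        - (q+2) * ‖a‖ ^ q * ((starRingEnd ℂ) a * h).re
        = (q+2) * (((‖a + t•h‖ ^ q : ℝ) * (starRingEnd ℂ) (a + t•h)
            - (‖a‖ ^ q : ℝ) * (starRingEnd ℂ) a) * h).re := by
      rw [sub_mul, Complex.sub_re]
      have e1 : (((‖a + t•h‖ ^ q : ℝ) : ℂ) * (starRingEnd ℂ) (a + t•h) * h).re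
          = ‖a + t•h‖ ^ q * ((starRingEnd ℂ) (a + t•h) * h).re := by
        rw [mul_assoc, Complex.re_ofReal_mul]
      have e2 : (((‖a‖ ^ q : ℝ) : ℂ) * (starRingEnd ℂ) a * h).re
          = ‖a‖ ^ q * ((starRingEnd ℂ) a * h).re := by
        rw [mul_assoc, Complex.re_ofReal_mul]
      rw [e1, e2]; ring
    rw [hre, Real.norm_eq_abs, abs_mul, _root_.abs_of_nonneg (by linarith : (0:ℝ) ≤ q+2)]
    have h1 : |(((‖a + t•h‖ ^ q : ℝ) * (starRingEnd ℂ) (a + t•h)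
        - (‖a‖ ^ q : ℝ) * (starRingEnd ℂ) a) * h).re|
        ≤ ‖((‖a + t•h‖ ^ q : ℝ) * (starRingEnd ℂ) (a + t•h)
            - (‖a‖ ^ q : ℝ) * (starRingEnd ℂ) a)‖ * ‖h‖ := by
      refine le_trans (Complex.abs_re_le_norm _) ?_
      rw [norm_mul]
    have h2 : ‖((‖a + t•h‖ ^ q : ℝ) * (starRingEnd ℂ) (a + t•h)
        - (‖a‖ ^ q : ℝ) * (starRingEnd ℂ) a)‖
        ≤ (q+1) * (‖a‖ + ‖h‖) ^ q * ‖a + t•h - a‖ := by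
      apply L1 hq
      · calc ‖a + t•h‖ ≤ ‖a‖ + ‖t•h‖ := norm_add_le _ _
          _ ≤ ‖a‖ + ‖h‖ := by
            apply add_le_add le_rfl
            rw [norm_smul, Real.norm_eq_abs, _root_.abs_of_nonneg ht.1]
            nlinarith [norm_nonneg h, ht.2, ht.1]
      · linarith [norm_nonneg h]
    have h3 : ‖a + t•h - a‖ ≤ ‖h‖ := by
      have : a + t•h - a = t•h := by ring
      rw [this, norm_smul, Real.norm_eq_abs, _root_.abs_of_nonneg ht.1]
      nlinarith [norm_nonneg h, ht.2, ht.1]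
    calc (q+2) * |(((‖a + t•h‖ ^ q : ℝ) * (starRingEnd ℂ) (a + t•h)
          - (‖a‖ ^ q : ℝ) * (starRingEnd ℂ) a) * h).re|
        ≤ (q+2) * (((q+1) * (‖a‖ + ‖h‖) ^ q * ‖h‖) * ‖h‖) := by
          apply mul_le_mul_of_nonneg_left _ (by linarith : (0:ℝ) ≤ q+2)
          refine le_trans h1 ?_
          apply mul_le_mul_of_nonneg_right _ (norm_nonneg h)
          refine le_trans h2 ?_
          apply mul_le_mul_of_nonneg_left h3
          positivity
      _ = C := by rw [hC]; ring
  have key := norm_image_sub_le_of_norm_deriv_le_segment'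
    (f := f) (fun t _ => (hderiv t).hasDerivWithinAt) hbound 1 (by norm_num : (1:ℝ) ∈ Set.Icc (0:ℝ) 1)
  simp only [hf] at key
  have e0 : ((0:ℝ) • h) = 0 := by simp
  have e1 : ((1:ℝ) • h) = h := by simp
  rw [e0, e1] at key
  simp only [add_zero, zero_mul, sub_zero, one_mul, mul_one] at key
  rw [Real.norm_eq_abs] at key
  convert key using 2
  ring

open scoped ENNReal ComplexConjugate

abbrev E2 := lp (fun _ : ℤ => ℂ) 2

lemma sumSq (x : E2) : Summable fun n => ‖x n‖^2 := by
  have h := lp.memℓp x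
  rw [memℓp_gen_iff (by norm_num : 0 < (2:ℝ≥0∞).toReal)] at h
  simpa [ENNReal.toReal_ofNat, Real.rpow_natCast] using h

lemma normSq_eq (x : E2) : ‖x‖^2 = ∑' n, ‖x n‖^2 := by
  have h := lp.norm_rpow_eq_tsum (p := 2) (by norm_num) x
  simpa [ENNReal.toReal_ofNat, Real.rpow_natCast] using h

lemma apply_le_norm (x : E2) (n : ℤ) : ‖x n‖ ≤ ‖x‖ :=
  lp.norm_apply_le_norm (by norm_num) x n

lemma memℓp_of_sumSq {f : ℤ → ℂ} (h : Summable fun n => ‖f n‖^2) : Memℓp f 2 := by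
  apply memℓp_gen
  simpa [ENNReal.toReal_ofNat, Real.rpow_natCast] using h

lemma summable_mul_norm (x y : E2) : Summable fun n => ‖x n‖ * ‖y n‖ := by
  apply Summable.of_nonneg_of_le (fun n => by positivity)
    (fun n => ?_) (((sumSq x).add (sumSq y)).div_const 2)
  nlinarith [sq_nonneg (‖x n‖ - ‖y n‖)]

lemma summable_conj_mul (x y : E2) : Summable fun n => conj (x n) * y n := by
  apply Summable.of_norm
  simpa [RCLike.norm_conj] using summable_mul_norm x y

lemma summable_sumSq_shift (x : E2) : Summable fun n : ℤ => ‖x (n+1)‖^2 :=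
  ((Equiv.addRight (1:ℤ)).summable_iff (f := fun n => ‖x n‖^2)).2 (sumSq x)

lemma shift_mem (x : E2) : Memℓp (fun n : ℤ => x (n+1)) 2 :=
  memℓp_of_sumSq (summable_sumSq_shift x)

noncomputable def Slin : E2 →ₗ[ℝ] E2 where
  toFun x := ⟨fun n => x (n+1), shift_mem x⟩
  map_add' x y := by
    ext n
    simp [lp.coeFn_add]
    rfl
  map_smul' c x := by
    ext n
    simp [lp.coeFn_smul]

@[simp] lemma Slin_apply (x : E2) (n : ℤ) : (Slin x) n = x (n+1) := rfl

lemma Slin_norm (x : E2) : ‖Slin x‖ = ‖x‖ := by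
  have h2 : ‖Slin x‖^2 = ‖x‖^2 := by
    rw [normSq_eq, normSq_eq]
    exact ((Equiv.addRight (1:ℤ)).tsum_eq (f := fun n => ‖x n‖^2))
  nlinarith [norm_nonneg (Slin x), norm_nonneg x]

noncomputable def Bop : E2 →L[ℝ] E2 :=
  (Slin - LinearMap.id).mkContinuous 2 (by
    intro x
    simp only [LinearMap.sub_apply, LinearMap.id_apply]
    calc ‖Slin x - x‖ ≤ ‖Slin x‖ + ‖x‖ := norm_sub_le _ _
      _ = 2 * ‖x‖ := by rw [Slin_norm]; ring)

@[simp] lemma Bop_apply (x : E2) (n : ℤ) : (Bop x) n = x (n+1) - x n := by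
  have : Bop x = Slin x - x := rfl
  rw [this, lp.coeFn_sub]
  simp

lemma rpow_add_two {x : ℝ} (hx : 0 ≤ x) {q : ℝ} (hq : 0 < q) :
    x ^ (q + 2) = x ^ q * x ^ 2 := by
  rcases eq_or_lt_of_le hx with rfl | hx0
  · rw [Real.zero_rpow (by linarith), Real.zero_rpow (ne_of_gt hq)]
    ring
  · rw [Real.rpow_add hx0, ← Real.rpow_natCast x 2]
    norm_num

lemma rpow_mono {x y q : ℝ} (hx : 0 ≤ x) (hxy : x ≤ y) (hq : 0 ≤ q) : x ^ q ≤ y ^ q :=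
  Real.rpow_le_rpow hx hxy hq

lemma summable_rpow {q : ℝ} (hq : 0 < q) (v : E2) :
    Summable fun n => ‖v n‖ ^ (q + 2) := by
  apply Summable.of_nonneg_of_le (fun n => Real.rpow_nonneg (norm_nonneg _) _) (fun n => ?_)
    ((sumSq v).mul_left (‖v‖ ^ q))
  rw [rpow_add_two (norm_nonneg _) hq]
  apply mul_le_mul_of_nonneg_right _ (by positivity)
  exact rpow_mono (norm_nonneg _) (apply_le_norm v n) hq.le

lemma Wv_mem {q : ℝ} (hq : 0 < q) (v : E2) :
    Memℓp (fun n => ((‖v n‖ ^ q : ℝ) : ℂ) * v n) 2 := by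
  apply memℓp_of_sumSq
  apply Summable.of_nonneg_of_le (fun n => by positivity) (fun n => ?_)
    ((sumSq v).mul_left ((‖v‖ ^ q)^2))
  rw [norm_mul, mul_pow, Complex.norm_real, Real.norm_eq_abs,
    _root_.abs_of_nonneg (Real.rpow_nonneg (norm_nonneg _) _)]
  apply mul_le_mul_of_nonneg_right _ (by positivity)
  apply pow_le_pow_left₀ (by positivity)
  exact rpow_mono (norm_nonneg _) (apply_le_norm v n) hq.le

noncomputable def Wv {q : ℝ} (hq : 0 < q) (v : E2) : E2 := ⟨_, Wv_mem hq v⟩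

@[simp] lemma Wv_apply {q : ℝ} (hq : 0 < q) (v : E2) (n : ℤ) :
    (Wv hq v) n = ((‖v n‖ ^ q : ℝ) : ℂ) * v n := rfl

noncomputable def Lv {q : ℝ} (hq : 0 < q) (v : E2) : E2 →L[ℝ] ℝ :=
  (q + 2) • (Complex.reCLM.comp ((innerSL ℂ (Wv hq v)).restrictScalars ℝ))

lemma summable_weighted {q : ℝ} (hq : 0 < q) (v h : E2) :
    Summable fun n => ‖v n‖ ^ q * (conj (v n) * h n).re := by
  apply Summable.of_norm
  apply Summable.of_nonneg_of_le (fun n => norm_nonneg _) (fun n => ?_)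
    ((summable_mul_norm v h).mul_left (‖v‖ ^ q))
  rw [Real.norm_eq_abs, abs_mul, _root_.abs_of_nonneg (Real.rpow_nonneg (norm_nonneg _) _)]
  have h1 : |(conj (v n) * h n).re| ≤ ‖v n‖ * ‖h n‖ := by
    refine le_trans (Complex.abs_re_le_norm _) ?_
    rw [norm_mul, RCLike.norm_conj]
  calc ‖v n‖ ^ q * |(conj (v n) * h n).re| ≤ ‖v n‖ ^ q * (‖v n‖ * ‖h n‖) :=
        mul_le_mul_of_nonneg_left h1 (by positivity)
    _ ≤ ‖v‖ ^ q * (‖v n‖ * ‖h n‖) := by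
        apply mul_le_mul_of_nonneg_right
          (rpow_mono (norm_nonneg _) (apply_le_norm v n) hq.le) (by positivity)

lemma Lv_apply {q : ℝ} (hq : 0 < q) (v h : E2) :
    Lv hq v h = (q + 2) * ∑' n, ‖v n‖ ^ q * (conj (v n) * h n).re := by
  simp only [Lv, ContinuousLinearMap.smul_apply, ContinuousLinearMap.comp_apply,
    ContinuousLinearMap.coe_restrictScalars', innerSL_apply_apply, smul_eq_mul]
  congr 1
  rw [lp.inner_eq_tsum]
  have : Summable fun n => (inner ℂ ((Wv hq v) n) (h n) : ℂ) := lp.summable_inner _ _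
  rw [Complex.reCLM.map_tsum this]
  apply tsum_congr
  intro n
  simp only [RCLike.inner_apply', Wv_apply, map_mul]
  rw [Complex.conj_ofReal, mul_assoc]
  exact Complex.re_ofReal_mul _ _

lemma remainder_bound {q : ℝ} (hq : 0 < q) (v h : E2) :
    |(∑' n, ‖(v + h) n‖ ^ (q+2)) - (∑' n, ‖v n‖ ^ (q+2)) - Lv hq v h|
      ≤ (q+2) * (q+1) * (‖v‖ + ‖h‖) ^ q * ‖h‖^2 := by
  have hvh : ∀ n, (v + h) n = v n + h n := fun n => by rw [lp.coeFn_add]; rfl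
  set r : ℤ → ℝ := fun n => ‖v n + h n‖^(q+2) - ‖v n‖^(q+2)
    - (q+2) * (‖v n‖^q * (conj (v n) * h n).re) with hr
  have s1 : Summable fun n => ‖v n + h n‖ ^ (q+2) := by
    have := summable_rpow hq (v + h)
    apply this.congr; intro n; rw [hvh]
  have s2 := summable_rpow hq v
  have s3 := (summable_weighted hq v h).mul_left (q+2)
  have sr : Summable r := (s1.sub s2).sub s3
  have split : (∑' n, ‖(v + h) n‖ ^ (q+2)) - (∑' n, ‖v n‖ ^ (q+2)) - Lv hq v h
      = ∑' n, r n := by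
    have e1 : (∑' n, ‖(v+h) n‖^(q+2)) = ∑' n, ‖v n + h n‖^(q+2) :=
      tsum_congr (fun n => by rw [hvh])
    rw [e1, Lv_apply, ← tsum_mul_left, ← Summable.tsum_sub s1 s2, ← Summable.tsum_sub (s1.sub s2) s3]
  rw [split]
  have bound : ∀ n, |r n| ≤ ((q+2) * (q+1) * (‖v‖ + ‖h‖) ^ q) * ‖h n‖^2 := by
    intro n
    have l3 := L3 hq (v n) (h n)
    have e : r n = ‖v n + h n‖ ^ (q+2) - ‖v n‖ ^ (q+2)
        - (q+2) * ‖v n‖ ^ q * (conj (v n) * h n).re := by rw [hr]; ring_nf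
    rw [e]
    refine le_trans l3 ?_
    apply mul_le_mul_of_nonneg_right _ (by positivity)
    apply mul_le_mul_of_nonneg_left _ (by positivity)
    apply rpow_mono (by positivity) _ hq.le
    exact add_le_add (apply_le_norm v n) (apply_le_norm h n)
  have sabs : Summable fun n => |r n| := by
    apply Summable.of_nonneg_of_le (fun n => abs_nonneg _) bound
      (((sumSq h).mul_left _))
  calc |∑' n, r n| ≤ ∑' n, |r n| := by
        rw [← Real.norm_eq_abs]
        refine le_trans (norm_tsum_le_tsum_norm ?_) (le_of_eq rfl)
        simpa [Real.norm_eq_abs] using sabs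
    _ ≤ ∑' n, ((q+2) * (q+1) * (‖v‖ + ‖h‖) ^ q) * ‖h n‖^2 :=
        Summable.tsum_le_tsum bound sabs ((sumSq h).mul_left _)
    _ = (q+2) * (q+1) * (‖v‖ + ‖h‖) ^ q * ‖h‖^2 := by
        rw [tsum_mul_left, normSq_eq]

lemma hasFDerivAt_Phi {q : ℝ} (hq : 0 < q) (v : E2) :
    HasFDerivAt (fun v : E2 => ∑' n, ‖v n‖ ^ (q+2)) (Lv hq v) v := by
  rw [hasFDerivAt_iff_isLittleO_nhds_zero]
  rw [Asymptotics.isLittleO_iff]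
  intro c hc
  set K := (q+2) * (q+1) * (‖v‖ + 1) ^ q with hK
  have hK0 : 0 ≤ K := by positivity
  have hδ : 0 < min 1 (c / (K + 1)) := lt_min one_pos (by positivity)
  rw [Metric.eventually_nhds_iff]
  refine ⟨min 1 (c / (K + 1)), hδ, fun {h} hdist => ?_⟩
  rw [dist_zero_right] at hdist
  have hh1 : ‖h‖ ≤ 1 := le_of_lt (lt_of_lt_of_le hdist (min_le_left _ _))
  have hh2 : ‖h‖ ≤ c / (K + 1) := le_of_lt (lt_of_lt_of_le hdist (min_le_right _ _))
  have hb := remainder_bound hq v h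
  have hb2 : (q+2) * (q+1) * (‖v‖ + ‖h‖) ^ q * ‖h‖^2 ≤ K * ‖h‖^2 := by
    apply mul_le_mul_of_nonneg_right _ (by positivity)
    apply mul_le_mul_of_nonneg_left _ (by positivity)
    exact rpow_mono (by positivity) (by linarith) hq.le
  rw [Real.norm_eq_abs]
  calc |(∑' n, ‖(v + h) n‖ ^ (q+2)) - (∑' n, ‖v n‖ ^ (q+2)) - Lv hq v h|
      ≤ K * ‖h‖^2 := le_trans hb hb2
    _ ≤ K * (c / (K+1) * ‖h‖) := by
        apply mul_le_mul_of_nonneg_left _ hK0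
        rw [pow_two]
        exact mul_le_mul_of_nonneg_right hh2 (norm_nonneg _)
    _ = K * (c / (K+1)) * ‖h‖ := by ring
    _ ≤ c * ‖h‖ := by
        apply mul_le_mul_of_nonneg_right _ (norm_nonneg _)
        rw [mul_comm, div_mul_eq_mul_div, div_le_iff₀ (by positivity : (0:ℝ) < K + 1)]
        nlinarith

lemma summable_cs {f g : ℤ → ℂ} (hf : Summable fun n => ‖f n‖^2)
    (hg : Summable fun n => ‖g n‖^2) : Summable fun n => conj (f n) * g n := by
  apply Summable.of_norm
  apply Summable.of_nonneg_of_le (fun n => norm_nonneg _) (fun n => ?_)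
    ((hf.add hg).div_const 2)
  rw [norm_mul, RCLike.norm_conj]
  nlinarith [sq_nonneg (‖f n‖ - ‖g n‖), norm_nonneg (f n), norm_nonneg (g n)]

lemma sumSq_shift (x : E2) (k : ℤ) : Summable fun n : ℤ => ‖x (n+k)‖^2 :=
  ((Equiv.addRight k).summable_iff (f := fun n => ‖x n‖^2)).2 (sumSq x)

lemma sumSq_shift' (x : E2) : Summable fun n : ℤ => ‖x (n-1)‖^2 := by
  have := sumSq_shift x (-1)
  apply this.congr; intro n; rw [← sub_eq_add_neg]

lemma summable_weighted' {q : ℝ} (hq : 0 < q) (a b : E2) :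
    Summable fun n => ((‖a n‖ ^ q : ℝ) : ℂ) * (conj (a n) * b n) := by
  apply Summable.of_norm
  apply Summable.of_nonneg_of_le (fun n => norm_nonneg _) (fun n => ?_)
    ((summable_mul_norm a b).mul_left (‖a‖ ^ q))
  rw [norm_mul, norm_mul, RCLike.norm_conj, Complex.norm_real, Real.norm_eq_abs,
    _root_.abs_of_nonneg (Real.rpow_nonneg (norm_nonneg _) _)]
  apply mul_le_mul_of_nonneg_right
    (rpow_mono (norm_nonneg _) (apply_le_norm a n) hq.le) (by positivity)

section Claims
variable {q ε : ℝ} (hq : 0 < q) (hε : 0 < ε) (a b : E2)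
  (heqn : ∀ n : ℤ, Complex.I * b n + (1/ε : ℂ) * (a (n-1) - 2 * a n + a (n+1))
    + ((‖a n‖ ^ q : ℝ) : ℂ) * a n = 0)

include heqn in
lemma hbn : ∀ n : ℤ, b n = Complex.I * ((1/ε : ℂ) * (a (n-1) - 2 * a n + a (n+1))
    + ((‖a n‖ ^ q : ℝ) : ℂ) * a n) := by
  intro n
  apply mul_left_cancel₀ Complex.I_ne_zero
  rw [← mul_assoc, Complex.I_mul_I]
  linear_combination heqn n

include heqn hq hε in
lemma claim1 : (∑' n, conj (a n) * b n).re = 0 := by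
  set T0 : ℂ := ∑' n, conj (a n) * a n with hT0
  set T1 : ℂ := ∑' n, conj (a n) * a (n-1) with hT1
  set T2 : ℂ := ∑' n, conj (a n) * a (n+1) with hT2
  set T3 : ℂ := ∑' n, ((‖a n‖ ^ q : ℝ) : ℂ) * (conj (a n) * a n) with hT3
  have s0 := summable_cs (sumSq a) (sumSq a)
  have s1 := summable_cs (sumSq a) (sumSq_shift' a)
  have s2 := summable_cs (sumSq a) (sumSq_shift a 1)
  have s3 := summable_weighted' hq a a
  have key : (fun n => conj (a n) * b n) = fun n =>
      Complex.I * (((1/ε : ℝ) : ℂ) * (conj (a n) * a (n-1) + conj (a n) * a (n+1))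
        + ((-2/ε : ℝ) : ℂ) * (conj (a n) * a n)
        + ((‖a n‖ ^ q : ℝ) : ℂ) * (conj (a n) * a n)) := by
    funext n
    rw [hbn a b heqn n]
    push_cast
    ring
  have sA : Summable fun n => ((1/ε : ℝ) : ℂ) * (conj (a n) * a (n-1) + conj (a n) * a (n+1)) :=
    (s1.add s2).mul_left _
  have sB : Summable fun n => ((-2/ε : ℝ) : ℂ) * (conj (a n) * a n) := s0.mul_left _
  have total : (∑' n, conj (a n) * b n)
      = Complex.I * (((1/ε : ℝ) : ℂ) * (T1 + T2) + ((-2/ε : ℝ) : ℂ) * T0 + T3) := by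
    rw [key, tsum_mul_left]
    congr 1
    rw [Summable.tsum_add (sA.add sB) s3, Summable.tsum_add sA sB, tsum_mul_left, tsum_mul_left,
      Summable.tsum_add s1 s2]
  have ht12 : T1 = conj T2 := by
    have h1 : (∑' n : ℤ, conj (a (n+1)) * a (n+1-1)) = T1 :=
      (Equiv.addRight (1:ℤ)).tsum_eq (f := fun n => conj (a n) * a (n-1))
    rw [hT2, Complex.conj_tsum]
    rw [← h1]
    apply tsum_congr
    intro n
    rw [map_mul, RingHomCompTriple.comp_apply, RingHom.id_apply]
    rw [show n+1-1 = n from by ring]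
    ring
  have im0 : (T0).im = 0 := by
    rw [hT0, ← Complex.imCLM_apply, Complex.imCLM.map_tsum s0]
    convert tsum_zero with n
    simp only [Complex.imCLM_apply, Complex.mul_im, Complex.conj_re, Complex.conj_im]
    ring
  have im3 : (T3).im = 0 := by
    rw [hT3, ← Complex.imCLM_apply, Complex.imCLM.map_tsum s3]
    convert tsum_zero with n
    simp only [Complex.imCLM_apply, Complex.im_ofReal_mul, Complex.mul_im, Complex.conj_re,
      Complex.conj_im, Complex.ofReal_im]
    ring
  have im12 : (T1 + T2).im = 0 := by
    rw [ht12]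
    simp [Complex.add_im, Complex.conj_im]
  rw [total, Complex.mul_re, Complex.I_re, Complex.I_im]
  simp only [Complex.add_im, Complex.im_ofReal_mul, im0, im3, im12, mul_zero, add_zero,
    zero_mul, one_mul]
  ring

include heqn hq hε in
lemma claim2 : (∑' n, conj (a (n+1) - a n) * (b (n+1) - b n)).re
    = ε * ∑' n, ‖a n‖ ^ q * (conj (a n) * b n).re := by
  have hε' : (ε:ℂ) ≠ 0 := Complex.ofReal_ne_zero.2 (ne_of_gt hε)
  have sf1 := summable_cs (sumSq_shift a 1) (sumSq_shift b 1)
  have sf2 := summable_cs (sumSq_shift a 1) (sumSq b)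
  have sf3 := summable_cs (sumSq a) (sumSq_shift b 1)
  have sf4 := summable_cs (sumSq a) (sumSq b)
  have sf5 := summable_cs (sumSq_shift' a) (sumSq b)
  -- index shifts
  have hshift1 : (∑' n : ℤ, conj (a (n+1)) * b (n+1)) = ∑' n : ℤ, conj (a n) * b n :=
    (Equiv.addRight (1:ℤ)).tsum_eq (f := fun n => conj (a n) * b n)
  have hshift3 : (∑' n : ℤ, conj (a n) * b (n+1)) = ∑' n : ℤ, conj (a (n-1)) * b n := by
    rw [← (Equiv.addRight (1:ℤ)).tsum_eq (f := fun n => conj (a (n-1)) * b n)]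
    apply tsum_congr
    intro n
    have : ((Equiv.addRight (1:ℤ)) n) = n + 1 := rfl
    rw [this, show n+1-1 = n from by ring]
  -- expand the left side
  have eL : (fun n : ℤ => conj (a (n+1) - a n) * (b (n+1) - b n))
      = fun n : ℤ => (conj (a (n+1)) * b (n+1) + conj (a n) * b n)
        - (conj (a (n+1)) * b n + conj (a n) * b (n+1)) := by
    funext n
    rw [map_sub]
    ring
  have eR : (fun n : ℤ => conj (2*a n - a (n+1) - a (n-1)) * b n)
      = fun n : ℤ => (conj (a n) * b n + conj (a n) * b n)
        - (conj (a (n+1)) * b n + conj (a (n-1)) * b n) := by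
    funext n
    have : conj (2*a n - a (n+1) - a (n-1))
        = 2 * conj (a n) - conj (a (n+1)) - conj (a (n-1)) := by
      rw [map_sub, map_sub, map_mul, map_ofNat]
    rw [this]
    ring
  have step1 : (∑' n, conj (a (n+1) - a n) * (b (n+1) - b n))
      = ∑' n, conj (2*a n - a (n+1) - a (n-1)) * b n := by
    rw [eL, eR, Summable.tsum_sub (sf1.add sf4) (sf2.add sf3), Summable.tsum_sub (sf4.add sf4) (sf2.add sf5),
      Summable.tsum_add sf1 sf4, Summable.tsum_add sf2 sf3, Summable.tsum_add sf4 sf4, Summable.tsum_add sf2 sf5,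
      hshift1, hshift3]
  have step2 : ∀ n : ℤ, (conj (2*a n - a (n+1) - a (n-1)) * b n).re
      = ε * (‖a n‖ ^ q * (conj (a n) * b n).re) := by
    intro n
    have h := heqn n
    have hc : a (n-1) - 2*a n + a (n+1)
        = (ε:ℂ) * (-Complex.I * b n - ((‖a n‖^q:ℝ):ℂ) * a n) := by
      field_simp at h
      linear_combination h
    have hc2 : conj (a (n-1) - 2*a n + a (n+1))
        = (ε:ℂ) * (Complex.I * conj (b n) - ((‖a n‖^q:ℝ):ℂ) * conj (a n)) := by
      rw [hc]
      simp only [map_mul, map_sub, map_neg, Complex.conj_ofReal, Complex.conj_I]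
      ring
    have e1 : conj (2*a n - a (n+1) - a (n-1)) * b n
        = ((ε:ℝ):ℂ) * (((‖a n‖^q:ℝ):ℂ) * (conj (a n) * b n))
          - ((ε:ℝ):ℂ) * (Complex.I * (conj (b n) * b n)) := by
      rw [show (2*a n - a (n+1) - a (n-1) : ℂ) = -(a (n-1) - 2*a n + a (n+1)) from by ring,
        map_neg, hc2]
      ring
    rw [e1, Complex.sub_re, Complex.re_ofReal_mul, Complex.re_ofReal_mul,
      Complex.re_ofReal_mul]
    have him : (Complex.I * (conj (b n) * b n)).re = 0 := by
      simp only [Complex.mul_re, Complex.I_re, Complex.I_im, Complex.mul_im,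
        Complex.conj_re, Complex.conj_im]
      ring
    rw [him]
    ring
  have sR : Summable fun n : ℤ => conj (2*a n - a (n+1) - a (n-1)) * b n := by
    rw [eR]
    exact (sf4.add sf4).sub (sf2.add sf5)
  rw [step1, ← Complex.reCLM_apply, Complex.reCLM.map_tsum sR]
  calc (∑' n, Complex.reCLM (conj (2*a n - a (n+1) - a (n-1)) * b n))
      = ∑' n, ε * (‖a n‖ ^ q * (conj (a n) * b n).re) := by
        apply tsum_congr; intro n
        rw [Complex.reCLM_apply, step2 n]
    _ = ε * ∑' n, ‖a n‖ ^ q * (conj (a n) * b n).re := tsum_mul_left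
end Claims

lemma inner_tsum_eq (x y : E2) : (inner ℂ x y : ℂ) = ∑' n, conj (x n) * y n := by
  rw [lp.inner_eq_tsum]
  exact tsum_congr fun n => RCLike.inner_apply' _ _

lemma hasDerivAt_normSq {f : ℝ → E2} {d : E2} {t : ℝ} (hf : HasDerivAt f d t) :
    HasDerivAt (fun s => ‖f s‖^2) (2 * (∑' n, conj (f t n) * d n).re) t := by
  have hI : HasDerivAt (fun s => (inner ℂ (f s) (f s) : ℂ))
      ((inner ℂ (f t) d : ℂ) + (inner ℂ d (f t) : ℂ)) t := hf.inner ℂ hf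
  have hre := Complex.reCLM.hasFDerivAt.comp_hasDerivAt t hI
  have efun : (fun s => Complex.reCLM (inner ℂ (f s) (f s) : ℂ)) = fun s => ‖f s‖^2 := by
    funext s
    rw [Complex.reCLM_apply]
    exact inner_self_eq_norm_sq (𝕜 := ℂ) (f s)
  rw [show (⇑Complex.reCLM ∘ fun s => (inner ℂ (f s) (f s) : ℂ)) = fun s => ‖f s‖^2 from efun] at hre
  convert hre using 1
  case e'_4 => rfl
  case e'_5 => rfl
  rw [Complex.reCLM_apply, Complex.add_re, inner_tsum_eq, inner_tsum_eq]
  have hcc : (∑' n, conj (d n) * f t n) = conj (∑' n, conj (f t n) * d n) := by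
    rw [Complex.conj_tsum]
    apply tsum_congr
    intro n
    rw [map_mul, RingHomCompTriple.comp_apply, RingHom.id_apply]
    ring
  rw [hcc, Complex.conj_re]
  ring



/-- For solutions of the conservative DNLS,
`‖u(t)‖²_{ℓ²₁} ≤ ‖u₀‖²_{ℓ²₁} + (2ε/(σ+1)) ‖u₀‖^(2σ+2)_{ℓ²}`, where
`‖u‖²_{ℓ²₁} = Σₙ |uₙ₊₁ − uₙ|² + Σₙ |uₙ|²`. -/
theorem stmt_7 (ε σ T : ℝ) (hε : 0 < ε) (hσ : 0 < σ) (hT : 0 ≤ T)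
    (u u' : ℝ → lp (fun _ : ℤ => ℂ) 2)
    (hu : ∀ t ∈ Set.Icc (0:ℝ) T, HasDerivAt u (u' t) t)
    (hu' : ContinuousOn u' (Set.Icc (0:ℝ) T))
    (heq : ∀ t ∈ Set.Icc (0:ℝ) T, ∀ n : ℤ,
      Complex.I * u' t n + (1/ε : ℂ) * (u t (n-1) - 2 * u t n + u t (n+1))
        + (‖u t n‖ ^ (2 * σ) : ℝ) * u t n = 0)
    (u₀ : lp (fun _ : ℤ => ℂ) 2) (hu0 : u 0 = u₀) :
    ∀ t ∈ Set.Icc (0:ℝ) T,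
      (∑' n : ℤ, ‖u t (n+1) - u t n‖ ^ 2)
          + (∑' n : ℤ, ‖u t n‖ ^ 2)
        ≤ ((∑' n : ℤ, ‖u₀ (n+1) - u₀ n‖ ^ 2)
            + (∑' n : ℤ, ‖u₀ n‖ ^ 2))
          + (2 * ε / (σ + 1)) * ‖u₀‖ ^ (2 * σ + 2) := by
  intro t ht
  rw [← hu0]
  set q : ℝ := 2 * σ with hqdef
  have hq : 0 < q := by positivity
  have hσ1 : (0:ℝ) < σ + 1 := by linarith
  have h0T : (0:ℝ) ∈ Set.Icc (0:ℝ) T := by constructor <;> linarith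
  have heqn' : ∀ s ∈ Set.Icc (0:ℝ) T, ∀ n : ℤ,
      Complex.I * u' s n + (1/ε : ℂ) * (u s (n-1) - 2 * u s n + u s (n+1))
        + ((‖u s n‖ ^ q : ℝ) : ℂ) * u s n = 0 := by
    intro s hs n
    have h := heq s hs n
    exact h
  have hucont : ContinuousOn u (Set.Icc 0 T) :=
    fun s hs => ((hu s hs).continuousAt).continuousWithinAt
  -- conservation of the ℓ² norm
  have hNderiv : ∀ s ∈ Set.Icc (0:ℝ) T, HasDerivAt (fun r => ‖u r‖^2) 0 s := by
    intro s hs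
    have h0 := hasDerivAt_normSq (hu s hs)
    have hz : (2 * (∑' n, conj (u s n) * u' s n).re) = 0 := by
      rw [claim1 hq hε (u s) (u' s) (heqn' s hs)]; ring
    rwa [hz] at h0
  have hNconst : ∀ s ∈ Set.Icc (0:ℝ) T, ‖u s‖^2 = ‖u 0‖^2 :=
    constant_of_has_deriv_right_zero ((hucont.norm).pow 2)
      (fun x hx => ((hNderiv x (Set.mem_Icc_of_Ico hx)).hasDerivWithinAt))
  -- conservation of the energy-like quantity
  set c : ℝ := ε / (σ + 1) with hcdef
  have hc : 0 < c := by positivity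
  set G : ℝ → ℝ := fun s => ‖Bop (u s)‖^2 - c * (∑' n, ‖u s n‖ ^ (q+2)) with hG
  have hGderiv : ∀ s ∈ Set.Icc (0:ℝ) T, HasDerivAt G 0 s := by
    intro s hs
    have hB : HasDerivAt (fun r => Bop (u r)) (Bop (u' s)) s :=
      Bop.hasFDerivAt.comp_hasDerivAt s (hu s hs)
    have hQ := hasDerivAt_normSq hB
    have htsum : (∑' n, conj ((Bop (u s)) n) * ((Bop (u' s)) n))
        = ∑' n, conj (u s (n+1) - u s n) * (u' s (n+1) - u' s n) :=
      tsum_congr fun n => by rw [Bop_apply, Bop_apply]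
    rw [htsum] at hQ
    have hP : HasDerivAt (fun r => ∑' n, ‖u r n‖ ^ (q+2)) (Lv hq (u s) (u' s)) s :=
      (hasFDerivAt_Phi hq (u s)).comp_hasDerivAt s (hu s hs)
    have hcomb := hQ.sub (hP.const_mul c)
    have hval : 2 * (∑' n, conj (u s (n+1) - u s n) * (u' s (n+1) - u' s n)).re
        - c * Lv hq (u s) (u' s) = 0 := by
      rw [claim2 hq hε (u s) (u' s) (heqn' s hs), Lv_apply, hcdef, hqdef]
      field_simp
      ring
    rw [hval] at hcomb
    exact hcomb
  have hΦc : Continuous (fun v : E2 => ∑' n, ‖v n‖ ^ (q+2)) := by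
    rw [continuous_iff_continuousAt]
    intro v
    exact (hasFDerivAt_Phi hq v).continuousAt
  have hGcont : ContinuousOn G (Set.Icc 0 T) := by
    apply ContinuousOn.sub
    · exact ((Bop.continuous.comp_continuousOn hucont).norm).pow 2
    · exact continuousOn_const.mul (hΦc.comp_continuousOn hucont)
  have hGconst : ∀ s ∈ Set.Icc (0:ℝ) T, G s = G 0 :=
    constant_of_has_deriv_right_zero hGcont
      (fun x hx => ((hGderiv x (Set.mem_Icc_of_Ico hx)).hasDerivWithinAt))
  -- rewriting the goal
  have gQ : ∀ s, (∑' n : ℤ, ‖u s (n+1) - u s n‖ ^ 2) = ‖Bop (u s)‖^2 := by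
    intro s
    rw [normSq_eq]
    apply tsum_congr
    intro n
    rw [Bop_apply]
  have gN : ∀ s, (∑' n : ℤ, ‖u s n‖ ^ 2) = ‖u s‖^2 := by
    intro s
    rw [normSq_eq]
  rw [gQ t, gQ 0, gN t, gN 0]
  -- estimates
  have hNt : ‖u t‖^2 = ‖u 0‖^2 := hNconst t ht
  have hNt' : ‖u t‖ = ‖u 0‖ := by nlinarith [norm_nonneg (u t), norm_nonneg (u 0)]
  have hGt := hGconst t ht
  rw [hG] at hGt
  simp only [] at hGt
  have hPt : (∑' n, ‖u t n‖ ^ (q+2)) ≤ ‖u 0‖ ^ (q+2) := by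
    have h1 : (∑' n, ‖u t n‖ ^ (q+2)) ≤ ∑' n, ‖u t‖ ^ q * ‖u t n‖^2 := by
      apply Summable.tsum_le_tsum _ (summable_rpow hq (u t)) ((sumSq (u t)).mul_left _)
      intro n
      rw [rpow_add_two (norm_nonneg _) hq]
      exact mul_le_mul_of_nonneg_right
        (rpow_mono (norm_nonneg _) (apply_le_norm (u t) n) hq.le) (sq_nonneg _)
    have h2 : (∑' n, ‖u t‖ ^ q * ‖u t n‖^2) = ‖u t‖ ^ (q+2) := by
      rw [tsum_mul_left, ← normSq_eq, rpow_add_two (norm_nonneg _) hq]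
    refine (h1.trans_eq h2).trans_eq ?_
    rw [hNt']
  have hP0 : (0:ℝ) ≤ ∑' n, ‖u 0 n‖ ^ (q+2) :=
    tsum_nonneg fun n => Real.rpow_nonneg (norm_nonneg _) _
  have hM0 : (0:ℝ) ≤ ‖u 0‖ ^ (q+2) := Real.rpow_nonneg (norm_nonneg _) _
  have hcle : c * (∑' n, ‖u t n‖ ^ (q+2)) ≤ c * ‖u 0‖ ^ (q+2) :=
    mul_le_mul_of_nonneg_left hPt hc.le
  have h2c : (2 * ε / (σ + 1)) * ‖u 0‖ ^ (q+2) = 2 * (c * ‖u 0‖ ^ (q+2)) := by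
    rw [hcdef]; ring
  have hcP0 : 0 ≤ c * (∑' n, ‖u 0 n‖ ^ (q+2)) := mul_nonneg hc.le hP0
  have hcM0 : 0 ≤ c * ‖u 0‖ ^ (q+2) := mul_nonneg hc.le hM0
  linarith [hGt, hcle, hcP0, h2c, hcM0]
end
end

section
/- Let m ∈ ℕ, 0 < σ < ∞, ε > 0, and ω ∈ ℝ with ω ≠ 0. Then there exists a non-trivial (not identically zero) finite sequence φ = (φ_n)_{|n|≤m} of complex numbers which, with the Dirichlet boundary convention φ_{−(m+1)} = φ_{m+1} = 0, satisfies the standing wave equations −(1/ε)(φ_{n−1} − 2φ_n + φ_{n+1}) + ω²φ_n = |φ_n|^{2σ}φ_n for every n with |n| ≤ m. -/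
open scoped ENNReal

lemma cos_int_half (k : ℤ) :
    Real.cos (k * Real.pi / 2) = 0 ∨ |Real.cos (k * Real.pi / 2)| = 1 := by
  rcases Int.even_or_odd k with ⟨j, hj⟩ | ⟨j, hj⟩
  · right
    have : (k : ℝ) * Real.pi / 2 = j * Real.pi := by push_cast [hj]; ring
    rw [this]
    exact Real.abs_cos_int_mul_pi j
  · left
    have : (k : ℝ) * Real.pi / 2 = j * Real.pi + Real.pi / 2 := by push_cast [hj]; ring
    rw [this, Real.cos_add, Real.cos_pi_div_two, Real.sin_pi_div_two, Real.sin_int_mul_pi]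
    ring

/-- For every `m ∈ ℕ`, `σ > 0`, `ε > 0` and `ω ≠ 0`, the finite
Dirichlet standing-wave problem
`−(1/ε)(φₙ₋₁ − 2φₙ + φₙ₊₁) + ω²φₙ = |φₙ|^(2σ) φₙ` for `|n| ≤ m`,
with `φ₋₍ₘ₊₁₎ = φₘ₊₁ = 0`, admits a non-trivial solution. -/
theorem stmt_9 (m : ℕ) (σ ε ω : ℝ) (hσ : 0 < σ) (hε : 0 < ε) (hω : ω ≠ 0) :
    ∃ φ : ℤ → ℂ,
      (∀ n : ℤ, (m : ℤ) < |n| → φ n = 0) ∧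
      (∃ n : ℤ, |n| ≤ (m : ℤ) ∧ φ n ≠ 0) ∧
      ∀ n : ℤ, |n| ≤ (m : ℤ) →
        -(1/ε : ℂ) * (φ (n-1) - 2 * φ n + φ (n+1)) + (ω^2 : ℝ) * φ n
          = (‖φ n‖ ^ (2 * σ) : ℝ) * φ n := by
  have hbase : (0:ℝ) < 2/ε + ω^2 := by positivity
  set c : ℝ := (2/ε + ω^2) ^ (1/(2*σ)) with hc
  have hcpos : 0 < c := Real.rpow_pos_of_pos hbase _
  have hcpow : c ^ (2*σ) = 2/ε + ω^2 := by
    rw [hc, ← Real.rpow_mul hbase.le, one_div, inv_mul_cancel₀ (by positivity), Real.rpow_one]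
  set φ : ℤ → ℂ := fun n =>
    if |n| ≤ (m:ℤ) then ((c * Real.cos ((n - m) * Real.pi / 2) : ℝ) : ℂ) else 0 with hφ
  -- the cosine formula holds on the slightly larger window |n| ≤ m+1
  have hform : ∀ n : ℤ, |n| ≤ (m:ℤ) + 1 →
      φ n = ((c * Real.cos ((n - m) * Real.pi / 2) : ℝ) : ℂ) := by
    intro n hn
    by_cases h : |n| ≤ (m:ℤ)
    · simp [hφ, h]
    · have h1 : |n| = (m:ℤ) + 1 := le_antisymm hn (by omega)
      have : n = (m:ℤ) + 1 ∨ n = -((m:ℤ) + 1) := by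
        rcases abs_eq (by positivity : (0:ℤ) ≤ (m:ℤ)+1) |>.mp h1 with h2 | h2 <;> omega
      rcases this with rfl | rfl
      · have : ((((m:ℤ)+1 : ℤ) : ℝ) - m) * Real.pi / 2 = Real.pi / 2 := by push_cast; ring
        simp [hφ, h, this, Real.cos_pi_div_two]
      · have : (((-((m:ℤ)+1) : ℤ) : ℝ) - m) * Real.pi / 2 = -((m:ℝ) * Real.pi + Real.pi/2) := by
          push_cast; ring
        rw [hφ]
        simp only [if_neg h]
        rw [this, Real.cos_neg, Real.cos_add, Real.cos_pi_div_two, Real.sin_pi_div_two,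
          Real.sin_nat_mul_pi]
        norm_num
  refine ⟨φ, ?_, ?_, ?_⟩
  · intro n hn; simp [hφ, not_le.mpr hn]
  · refine ⟨m, by simp, ?_⟩
    have h0 : |((m:ℤ))| ≤ (m:ℤ) := by simp
    have : (((m:ℤ):ℝ) - m) * Real.pi / 2 = 0 := by push_cast; ring
    simp [hφ, h0, this, Real.cos_zero, ne_of_gt hcpos]
  · intro n hn
    have hsum : φ (n-1) + φ (n+1) = 0 := by
      obtain ⟨ha, hb⟩ := abs_le.mp hn
      rw [hform (n-1) (abs_le.mpr ⟨by omega, by omega⟩),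
        hform (n+1) (abs_le.mpr ⟨by omega, by omega⟩)]
      have h1 : (((n+1 : ℤ):ℝ) - m) * Real.pi / 2
          = (((n-1 : ℤ):ℝ) - m) * Real.pi / 2 + Real.pi := by push_cast; ring
      rw [h1, Real.cos_add_pi]
      push_cast
      ring
    have hn' : φ n = ((c * Real.cos ((n - m) * Real.pi / 2) : ℝ) : ℂ) := by simp [hφ, hn]
    have hci := cos_int_half (n - m)
    push_cast at hci
    rcases hci with h0 | h1
    · -- φ n = 0
      have hz : φ n = 0 := by
        rw [hn', h0, mul_zero, Complex.ofReal_zero]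
      rw [hz]
      simp only [mul_zero, add_zero, sub_zero, zero_sub]
      linear_combination (-(1/ε : ℂ)) * hsum
    · -- |φ n| = c
      have habs : ‖φ n‖ = c := by
        rw [hn', Complex.norm_real, Real.norm_eq_abs, abs_mul, abs_of_pos hcpos]
        rw [h1, mul_one]
      rw [habs, hcpow]
      push_cast
      linear_combination (-(1/ε : ℂ)) * hsum
end

section
/- Let ε > 0, ω ≠ 0, σ > 0, and let c > 0 be such that ||z₁|^{2σ}z₁ − |z₂|^{2σ}z₂| ≤ c(|z₁|^{2σ} + |z₂|^{2σ})|z₁ − z₂| for all z₁, z₂ ∈ ℂ. Let R > 0 and let z, ξ ∈ ℓ² satisfy ‖z‖_{ℓ²} ≤ R and ‖ξ‖_{ℓ²} ≤ R. If φ, ψ ∈ ℓ² satisfy −(1/ε)(φ_{n−1} − 2φ_n + φ_{n+1}) + ω²φ_n = |z_n|^{2σ}z_n and −(1/ε)(ψ_{n−1} − 2ψ_n + ψ_{n+1}) + ω²ψ_n = |ξ_n|^{2σ}ξ_n for all n ∈ ℤ, then ‖φ − ψ‖²_{ℓ²} ≤ (4c²/ω⁴) R^{4σ} ‖z − ξ‖²_{ℓ²}.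 -/
open scoped ENNReal

set_option maxHeartbeats 1000000

section Aux

local notation "L2" => lp (fun _ : ℤ => ℂ) 2

private lemma two_toReal_pos : (0:ℝ) < (2 : ℝ≥0∞).toReal := by norm_num

private lemma memℓp_shift (u : lp (fun _ : ℤ => ℂ) 2) (k : ℤ) :
    Memℓp (fun n : ℤ => u (n + k)) 2 := by
  apply memℓp_gen
  have h := (lp.memℓp u).summable two_toReal_pos
  exact ((Equiv.addRight k).summable_iff
    (f := fun m : ℤ => ‖u m‖ ^ (2 : ℝ≥0∞).toReal)).2 h

private lemma norm_shift_le (u : lp (fun _ : ℤ => ℂ) 2) (k : ℤ) :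
    ‖(⟨fun n : ℤ => u (n + k), memℓp_shift u k⟩ : lp (fun _ : ℤ => ℂ) 2)‖ ≤ ‖u‖ := by
  apply lp.norm_le_of_tsum_le two_toReal_pos (lp.norm_nonneg' u)
  have h3 : (∑' n : ℤ, ‖u (n + k)‖ ^ (2 : ℝ≥0∞).toReal)
      = ∑' n : ℤ, ‖u n‖ ^ (2 : ℝ≥0∞).toReal :=
    (Equiv.addRight k).tsum_eq (fun m : ℤ => ‖u m‖ ^ (2 : ℝ≥0∞).toReal)
  exact le_of_eq (h3.trans (lp.norm_rpow_eq_tsum two_toReal_pos u).symm)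

end Aux

/-- Contraction estimate for the solution map of the auxiliary linear
problem: if `A_ω φ = |z|^(2σ) z` and `A_ω ψ = |ξ|^(2σ) ξ` with `‖z‖, ‖ξ‖ ≤ R`, then
`‖φ − ψ‖² ≤ (4c²/ω⁴) R^(4σ) ‖z − ξ‖²`. -/
theorem stmt_12 (ε ω σ c R : ℝ) (hε : 0 < ε) (hω : ω ≠ 0) (hσ : 0 < σ) (hc : 0 < c)
    (hlip : ∀ z₁ z₂ : ℂ,
      ‖(‖z₁‖ ^ (2*σ) : ℝ) * z₁ - (‖z₂‖ ^ (2*σ) : ℝ) * z₂‖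
        ≤ c * (‖z₁‖ ^ (2*σ) + ‖z₂‖ ^ (2*σ)) * ‖z₁ - z₂‖)
    (hR : 0 < R)
    (z ξ φ ψ : lp (fun _ : ℤ => ℂ) 2)
    (hz : ‖z‖ ≤ R) (hξ : ‖ξ‖ ≤ R)
    (hφ : ∀ n : ℤ,
      -(1/ε : ℂ) * (φ (n-1) - 2 * φ n + φ (n+1)) + (ω^2 : ℝ) * φ n
        = (‖z n‖ ^ (2*σ) : ℝ) * z n)
    (hψ : ∀ n : ℤ,
      -(1/ε : ℂ) * (ψ (n-1) - 2 * ψ n + ψ (n+1)) + (ω^2 : ℝ) * ψ n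
        = (‖ξ n‖ ^ (2*σ) : ℝ) * ξ n) :
    ‖φ - ψ‖^2 ≤ (4 * c^2 / ω^4) * R ^ (4*σ) * ‖z - ξ‖^2 := by
  set M : ℝ := 2 * c * R ^ (2*σ) with hM
  have hRσ : (0:ℝ) ≤ R ^ (2*σ) := Real.rpow_nonneg hR.le _
  have hM0 : 0 ≤ M := by positivity
  set u : lp (fun _ : ℤ => ℂ) 2 := φ - ψ with hu
  set Su : lp (fun _ : ℤ => ℂ) 2 := ⟨fun n : ℤ => u (n + 1), memℓp_shift u 1⟩ with hSu
  set Tu : lp (fun _ : ℤ => ℂ) 2 := ⟨fun n : ℤ => u (n + (-1)), memℓp_shift u (-1)⟩ with hTu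
  -- The nonlinearity difference, pointwise bound
  set F : ℤ → ℂ := fun n =>
    ((‖z n‖ ^ (2*σ) : ℝ) : ℂ) * z n - ((‖ξ n‖ ^ (2*σ) : ℝ) : ℂ) * ξ n
    with hF
  have hFb : ∀ n : ℤ, ‖F n‖ ≤ M * ‖(z - ξ) n‖ := by
    intro n
    have h1 := hlip (z n) (ξ n)
    have hzn : ‖z n‖ ^ (2*σ) ≤ R ^ (2*σ) := by
      apply Real.rpow_le_rpow (norm_nonneg _) _ (by positivity)
      calc ‖z n‖ = ‖z n‖ := rfl
        _ ≤ ‖z‖ := lp.norm_apply_le_norm two_ne_zero z n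
        _ ≤ R := hz
    have hξn : ‖ξ n‖ ^ (2*σ) ≤ R ^ (2*σ) := by
      apply Real.rpow_le_rpow (norm_nonneg _) _ (by positivity)
      calc ‖ξ n‖ = ‖ξ n‖ := rfl
        _ ≤ ‖ξ‖ := lp.norm_apply_le_norm two_ne_zero ξ n
        _ ≤ R := hξ
    have hsub : (z - ξ) n = z n - ξ n := by
      rw [lp.coeFn_sub]; rfl
    rw [hsub]
    calc ‖F n‖ = ‖((‖z n‖ ^ (2*σ) : ℝ) : ℂ) * z n
          - ((‖ξ n‖ ^ (2*σ) : ℝ) : ℂ) * ξ n‖ := rfl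
      _ ≤ c * (‖z n‖ ^ (2*σ) + ‖ξ n‖ ^ (2*σ))
            * ‖z n - ξ n‖ := h1
      _ ≤ c * (R ^ (2*σ) + R ^ (2*σ)) * ‖z n - ξ n‖ := by
          apply mul_le_mul_of_nonneg_right _ (norm_nonneg _)
          apply mul_le_mul_of_nonneg_left _ hc.le
          linarith
      _ = M * ‖z n - ξ n‖ := by ring
  have hFmem : Memℓp F 2 := by
    apply memℓp_gen
    apply Summable.of_nonneg_of_le
      (fun n => Real.rpow_nonneg (norm_nonneg _) _)
      (fun n => Real.rpow_le_rpow (norm_nonneg _) (hFb n) two_toReal_pos.le)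
    have hs := (lp.memℓp (z - ξ)).summable two_toReal_pos
    have := hs.mul_left (M ^ (2 : ℝ≥0∞).toReal)
    apply this.congr
    intro n
    rw [← Real.mul_rpow hM0 (norm_nonneg _)]
  set Fp : lp (fun _ : ℤ => ℂ) 2 := ⟨F, hFmem⟩ with hFp
  have hFnorm : ‖Fp‖ ≤ M * ‖z - ξ‖ := by
    apply lp.norm_le_of_tsum_le two_toReal_pos (by positivity)
    have hzs := (lp.memℓp (z - ξ)).summable two_toReal_pos
    calc (∑' n : ℤ, ‖Fp n‖ ^ (2 : ℝ≥0∞).toReal)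
        ≤ ∑' n : ℤ, (M * ‖(z - ξ) n‖) ^ (2 : ℝ≥0∞).toReal := by
          apply Summable.tsum_le_tsum _ _ _
          · exact fun n => Real.rpow_le_rpow (norm_nonneg _) (hFb n) two_toReal_pos.le
          · exact (lp.memℓp Fp).summable two_toReal_pos
          · apply (hzs.mul_left (M ^ (2 : ℝ≥0∞).toReal)).congr
            intro n
            rw [← Real.mul_rpow hM0 (norm_nonneg _)]
      _ = M ^ (2 : ℝ≥0∞).toReal * ∑' n : ℤ, ‖(z - ξ) n‖ ^ (2 : ℝ≥0∞).toReal := by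
          rw [← tsum_mul_left]
          exact tsum_congr fun n => Real.mul_rpow hM0 (norm_nonneg _)
      _ = M ^ (2 : ℝ≥0∞).toReal * ‖z - ξ‖ ^ (2 : ℝ≥0∞).toReal := by
          rw [lp.norm_rpow_eq_tsum two_toReal_pos]
      _ = (M * ‖z - ξ‖) ^ (2 : ℝ≥0∞).toReal :=
          (Real.mul_rpow hM0 (norm_nonneg _)).symm
  -- Fp as a linear combination in lp
  have hFe : Fp = (-(1/ε : ℂ)) • (Tu - (2:ℂ) • u + Su) + ((ω^2 : ℝ) : ℂ) • u := by
    apply lp.ext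
    funext n
    have h1 := hφ n
    have h2 := hψ n
    have hun : ∀ m : ℤ, u m = φ m - ψ m := by
      intro m; rw [hu, lp.coeFn_sub]; rfl
    have hTn : (Tu : ∀ _ : ℤ, ℂ) n = u (n + (-1)) := rfl
    have hSn : (Su : ∀ _ : ℤ, ℂ) n = u (n + 1) := rfl
    have hFn : (Fp : ∀ _ : ℤ, ℂ) n = F n := rfl
    simp only [lp.coeFn_add, lp.coeFn_smul, lp.coeFn_sub, Pi.add_apply, Pi.smul_apply,
      Pi.sub_apply, smul_eq_mul, hFn, hTn, hSn]
    have hm1 : n + (-1) = n - 1 := by ring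
    rw [hm1, hun (n-1), hun n, hun (n+1)]
    show F n = _
    rw [hF]
    linear_combination h2 - h1
  -- inner product identity
  have hinner : (inner ℂ u Fp : ℂ)
      = (-(1/ε : ℂ)) * ((inner ℂ u Tu : ℂ) - 2 * (inner ℂ u u : ℂ) + (inner ℂ u Su : ℂ))
        + ((ω^2 : ℝ) : ℂ) * (inner ℂ u u : ℂ) := by
    rw [hFe, inner_add_right, inner_smul_right, inner_smul_right, inner_add_right,
      inner_sub_right, inner_smul_right]
  have hself : (inner ℂ u u : ℂ) = ((‖u‖ : ℂ)) ^ 2 := inner_self_eq_norm_sq_to_K u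
  -- bounds on the shift inner products
  have hTub : Complex.re (inner ℂ u Tu : ℂ) ≤ ‖u‖ ^ 2 := by
    calc Complex.re (inner ℂ u Tu : ℂ) ≤ ‖(inner ℂ u Tu : ℂ)‖ := Complex.re_le_norm _
      _ = ‖(inner ℂ u Tu : ℂ)‖ := rfl
      _ ≤ ‖u‖ * ‖Tu‖ := norm_inner_le_norm u Tu
      _ ≤ ‖u‖ * ‖u‖ := by
          apply mul_le_mul_of_nonneg_left _ (norm_nonneg u)
          exact norm_shift_le u (-1)
      _ = ‖u‖ ^ 2 := (sq ‖u‖).symm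
  have hSub : Complex.re (inner ℂ u Su : ℂ) ≤ ‖u‖ ^ 2 := by
    calc Complex.re (inner ℂ u Su : ℂ) ≤ ‖(inner ℂ u Su : ℂ)‖ := Complex.re_le_norm _
      _ = ‖(inner ℂ u Su : ℂ)‖ := rfl
      _ ≤ ‖u‖ * ‖Su‖ := norm_inner_le_norm u Su
      _ ≤ ‖u‖ * ‖u‖ := by
          apply mul_le_mul_of_nonneg_left _ (norm_nonneg u)
          exact norm_shift_le u 1
      _ = ‖u‖ ^ 2 := (sq ‖u‖).symm
  -- coercivity
  have hre : Complex.re (inner ℂ u Fp : ℂ)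
      = -(1/ε) * (Complex.re (inner ℂ u Tu : ℂ) - 2 * ‖u‖^2 + Complex.re (inner ℂ u Su : ℂ))
        + ω^2 * ‖u‖^2 := by
    rw [hinner, hself]
    have e2 : (-(1/ε : ℂ)) = ((-(1/ε) : ℝ) : ℂ) := by push_cast; ring
    rw [e2]
    simp only [← Complex.ofReal_pow, Complex.add_re, Complex.sub_re, Complex.re_ofReal_mul,
      Complex.mul_re, Complex.ofReal_re, Complex.ofReal_im, Complex.re_ofNat, Complex.im_ofNat,
      mul_zero, zero_mul, sub_zero, zero_sub, neg_zero]
  have hcoer : ω^2 * ‖u‖^2 ≤ Complex.re (inner ℂ u Fp : ℂ) := by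
    rw [hre]
    have hεi : (0:ℝ) < 1/ε := by positivity
    nlinarith [hTub, hSub]
  have hub : Complex.re (inner ℂ u Fp : ℂ) ≤ ‖u‖ * (M * ‖z - ξ‖) := by
    calc Complex.re (inner ℂ u Fp : ℂ) ≤ ‖(inner ℂ u Fp : ℂ)‖ := Complex.re_le_norm _
      _ = ‖(inner ℂ u Fp : ℂ)‖ := rfl
      _ ≤ ‖u‖ * ‖Fp‖ := norm_inner_le_norm u Fp
      _ ≤ ‖u‖ * (M * ‖z - ξ‖) := mul_le_mul_of_nonneg_left hFnorm (norm_nonneg u)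
  have hkey : ω^2 * ‖u‖^2 ≤ ‖u‖ * (M * ‖z - ξ‖) := hcoer.trans hub
  have hω2 : (0:ℝ) < ω^2 := by positivity
  have hω4 : (0:ℝ) < ω^4 := by positivity
  have hMsq : M^2 = 4 * c^2 * R ^ (4*σ) := by
    have : R ^ (2*σ) * R ^ (2*σ) = R ^ (4*σ) := by
      rw [← Real.rpow_add hR]; ring_nf
    rw [hM]; nlinarith [this]
  rcases eq_or_lt_of_le (norm_nonneg u) with h0 | h0
  · have hge : (0:ℝ) ≤ 4 * c^2 / ω^4 * R ^ (4*σ) * ‖z - ξ‖^2 := by positivity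
    rw [← h0]
    simpa using hge
  · have h2 : ω^2 * ‖u‖ ≤ M * ‖z - ξ‖ := by
      nlinarith [hkey, h0]
    have hsq : (ω^2 * ‖u‖)^2 ≤ (M * ‖z - ξ‖)^2 := by
      apply pow_le_pow_left₀ (by positivity) h2
    rw [div_mul_eq_mul_div, div_mul_eq_mul_div, le_div_iff₀ hω4]
    nlinarith [hsq, hMsq]
end

section
/- Let ε > 0, ω ≠ 0, σ > 0, and let c > 0 be such that ||z₁|^{2σ}z₁ − |z₂|^{2σ}z₂| ≤ c(|z₁|^{2σ} + |z₂|^{2σ})|z₁ − z₂| for all z₁, z₂ ∈ ℂ. If φ ∈ ℓ² satisfies the standing wave equations −(1/ε)(φ_{n−1} − 2φ_n + φ_{n+1}) + ω²φ_n = |φ_n|^{2σ}φ_n for all n ∈ ℤ and ‖φ‖_{ℓ²} < (ω⁴/(4c²))^{1/(4σ)}, then φ = 0; that is, there exist no nontrivial standing waves of ℓ²-norm less than the critical value E_c(ω,σ) = (ω⁴/(4c²))^{1/(4σ)}. -/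
open scoped ENNReal

theorem ptwise (e r s : ℝ) (u w x : ℂ)
    (h : -(1/e : ℂ) * (w - 2*u + x) + (r:ℝ) * u = (s:ℝ) * u) :
    r * ‖u‖^2 = s * ‖u‖^2 + (1/e) * (((w + x) * (starRingEnd ℂ) u).re - 2 * ‖u‖^2) := by
  have key : (r:ℂ) * ((Complex.normSq u : ℝ) : ℂ)
      = (s:ℂ) * ((Complex.normSq u : ℝ) : ℂ)
        + (1/(e:ℂ)) * ((w+x) * (starRingEnd ℂ) u)
        - (2 * (1/(e:ℂ))) * ((Complex.normSq u : ℝ) : ℂ) := by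
    rw [← Complex.mul_conj]
    linear_combination (starRingEnd ℂ) u * h
  have h2 := congrArg Complex.re key
  have he : ((1:ℂ)/e).re = 1/e := by simp [Complex.div_re, Complex.normSq]
  have he2 : ((1:ℂ)/e).im = 0 := by simp [Complex.div_im]
  have hn : Complex.normSq u = ‖u‖^2 := by
    rw [← Complex.sq_norm]
  simp only [Complex.add_re, Complex.sub_re, Complex.mul_re, Complex.ofReal_re,
    Complex.ofReal_im, Complex.mul_im, Complex.add_im, he, he2, zero_mul, mul_zero,
    sub_zero, zero_sub, Complex.re_ofNat, Complex.im_ofNat] at h2 ⊢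
  rw [hn] at h2
  linarith [h2]

/-- Non-existence of nontrivial standing waves of small energy:
any `φ ∈ ℓ²` solving `−(1/ε)(φₙ₋₁ − 2φₙ + φₙ₊₁) + ω²φₙ = |φₙ|^(2σ)φₙ` with
`‖φ‖ < (ω⁴/(4c²))^(1/(4σ))` is trivial. -/
theorem stmt_13 (ε ω σ c : ℝ) (hε : 0 < ε) (hω : ω ≠ 0) (hσ : 0 < σ) (hc : 0 < c)
    (hlip : ∀ z₁ z₂ : ℂ,
      ‖(‖z₁‖ ^ (2*σ) : ℝ) * z₁ - (‖z₂‖ ^ (2*σ) : ℝ) * z₂‖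
        ≤ c * (‖z₁‖ ^ (2*σ) + ‖z₂‖ ^ (2*σ)) * ‖z₁ - z₂‖)
    (φ : lp (fun _ : ℤ => ℂ) 2)
    (hφ : ∀ n : ℤ,
      -(1/ε : ℂ) * (φ (n-1) - 2 * φ n + φ (n+1)) + (ω^2 : ℝ) * φ n
        = (‖φ n‖ ^ (2*σ) : ℝ) * φ n)
    (hsmall : ‖φ‖ < (ω^4 / (4 * c^2)) ^ (1 / (4*σ))) :
    φ = 0 := by
  by_contra hne
  have hφpos : 0 < ‖φ‖ := norm_pos_iff.mpr hne
  -- c ≥ 1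
  have hc1 : (1:ℝ) ≤ c := by
    have h := hlip 1 0
    simpa [Real.zero_rpow (by positivity : 2*σ ≠ 0)] using h
  -- summability of squares
  have hmem : Memℓp (fun n : ℤ => φ n) 2 := lp.memℓp φ
  have h2e : ((2:ℝ≥0∞)).toReal = ((2:ℕ):ℝ) := by norm_num
  have hsum2 : Summable (fun n : ℤ => ‖φ n‖ ^ 2) := by
    have := hmem.summable (p := 2) (by norm_num)
    rw [h2e] at this
    simpa [Real.rpow_natCast] using this
  set N : ℝ := ∑' n : ℤ, ‖φ n‖ ^ 2 with hNdef
  have hNnorm : N = ‖φ‖ ^ 2 := by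
    have := lp.norm_rpow_eq_tsum (p := 2) (by norm_num) φ
    rw [h2e] at this
    simp only [Real.rpow_natCast] at this
    rw [hNdef]; exact this.symm
  have hNpos : 0 < N := by rw [hNnorm]; positivity
  -- shifted sums
  have hsumL : Summable (fun n : ℤ => ‖φ (n-1)‖ ^ 2) :=
    hsum2.comp_injective (Equiv.subRight (1:ℤ)).injective
  have hsumR : Summable (fun n : ℤ => ‖φ (n+1)‖ ^ 2) :=
    hsum2.comp_injective (Equiv.addRight (1:ℤ)).injective
  have htsumL : (∑' n : ℤ, ‖φ (n-1)‖ ^ 2) = N :=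
    (Equiv.subRight (1:ℤ)).tsum_eq (fun n => ‖φ n‖ ^ 2)
  have htsumR : (∑' n : ℤ, ‖φ (n+1)‖ ^ 2) = N :=
    (Equiv.addRight (1:ℤ)).tsum_eq (fun n => ‖φ n‖ ^ 2)
  -- the cross term
  set g : ℤ → ℝ := fun n => ((φ (n-1) + φ (n+1)) * (starRingEnd ℂ) (φ n)).re with hgdef
  set B : ℤ → ℝ := fun n =>
    (‖φ (n-1)‖^2 + ‖φ n‖^2)/2 + (‖φ (n+1)‖^2 + ‖φ n‖^2)/2 with hBdef
  have hgB : ∀ n, |g n| ≤ B n := by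
    intro n
    have h1 : |g n| ≤ ‖(φ (n-1) + φ (n+1)) * (starRingEnd ℂ) (φ n)‖ := by
      exact Complex.abs_re_le_norm _
    have h2 : ‖(φ (n-1) + φ (n+1)) * (starRingEnd ℂ) (φ n)‖
        ≤ (‖φ (n-1)‖ + ‖φ (n+1)‖) * ‖φ n‖ := by
      rw [norm_mul, RCLike.norm_conj]
      exact mul_le_mul_of_nonneg_right (norm_add_le _ _) (norm_nonneg _)
    have h3 : (‖φ (n-1)‖ + ‖φ (n+1)‖) * ‖φ n‖ ≤ B n := by
      have := two_mul_le_add_sq (‖φ (n-1)‖) (‖φ n‖)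
      have := two_mul_le_add_sq (‖φ (n+1)‖) (‖φ n‖)
      simp only [hBdef]
      nlinarith
    linarith
  have hBsum : Summable B := by
    apply Summable.add <;> apply Summable.div_const <;> exact Summable.add (by assumption) hsum2
  have hgsum : Summable g := by
    apply Summable.of_abs
    exact Summable.of_nonneg_of_le (fun n => abs_nonneg _) hgB hBsum
  have htsumB : (∑' n : ℤ, B n) = 2 * N := by
    simp only [hBdef]
    rw [Summable.tsum_add ((hsumL.add hsum2).div_const 2) ((hsumR.add hsum2).div_const 2),
        tsum_div_const, tsum_div_const, Summable.tsum_add hsumL hsum2, Summable.tsum_add hsumR hsum2,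
        htsumL, htsumR]
    ring
  have htsumg : (∑' n : ℤ, g n) ≤ 2 * N := by
    calc (∑' n : ℤ, g n) ≤ ∑' n : ℤ, B n :=
          Summable.tsum_le_tsum (fun n => (le_abs_self _).trans (hgB n)) hgsum hBsum
    _ = 2 * N := htsumB
  -- pointwise identity
  have hpt : ∀ n : ℤ, ω^2 * ‖φ n‖^2
      = ‖φ n‖ ^ (2*σ) * ‖φ n‖^2 + (1/ε) * (g n - 2 * ‖φ n‖^2) := by
    intro n
    have h := ptwise ε (ω^2) (‖φ n‖ ^ (2*σ)) (φ n) (φ (n-1)) (φ (n+1)) (hφ n)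
    simpa [hgdef] using h
  -- summability of nonlinear term
  have happle : ∀ n : ℤ, ‖φ n‖ ^ (2*σ) * ‖φ n‖^2 ≤ ‖φ‖ ^ (2*σ) * ‖φ n‖^2 := by
    intro n
    apply mul_le_mul_of_nonneg_right _ (by positivity)
    exact Real.rpow_le_rpow (norm_nonneg _) (lp.norm_apply_le_norm (by norm_num) φ n)
      (by positivity)
  have hnl_sum : Summable (fun n : ℤ => ‖φ n‖ ^ (2*σ) * ‖φ n‖^2) :=
    Summable.of_nonneg_of_le (fun n => by positivity) happle (hsum2.mul_left _)
  -- sum everything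
  have hsum_main : ω^2 * N = (∑' n : ℤ, ‖φ n‖ ^ (2*σ) * ‖φ n‖^2)
      + (1/ε) * ((∑' n : ℤ, g n) - 2 * N) := by
    have h1 : ω^2 * N = ∑' n : ℤ, (‖φ n‖ ^ (2*σ) * ‖φ n‖^2 + (1/ε) * (g n - 2 * ‖φ n‖^2)) := by
      rw [← tsum_congr hpt, tsum_mul_left]
    rw [h1, Summable.tsum_add hnl_sum (((hgsum.sub (hsum2.mul_left 2)).mul_left _)),
        tsum_mul_left, Summable.tsum_sub hgsum (hsum2.mul_left 2), tsum_mul_left]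
  -- conclude ω² ≤ ‖φ‖^(2σ)
  have hkey : ω^2 ≤ ‖φ‖ ^ (2*σ) := by
    have h1 : (∑' n : ℤ, ‖φ n‖ ^ (2*σ) * ‖φ n‖^2) ≤ ‖φ‖ ^ (2*σ) * N := by
      calc (∑' n : ℤ, ‖φ n‖ ^ (2*σ) * ‖φ n‖^2)
          ≤ ∑' n : ℤ, ‖φ‖ ^ (2*σ) * ‖φ n‖^2 :=
            Summable.tsum_le_tsum happle hnl_sum (hsum2.mul_left _)
        _ = ‖φ‖ ^ (2*σ) * N := tsum_mul_left
    have h2 : (1/ε) * ((∑' n : ℤ, g n) - 2 * N) ≤ 0 := by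
      apply mul_nonpos_of_nonneg_of_nonpos (by positivity)
      linarith
    have : ω^2 * N ≤ ‖φ‖ ^ (2*σ) * N := by
      rw [hsum_main]; linarith
    exact le_of_mul_le_mul_right this hNpos
  -- final contradiction via smallness
  have hbase : 0 < ω^4 / (4 * c^2) := by positivity
  have hstep : ‖φ‖ ^ (2*σ) < ((ω^4 / (4 * c^2)) ^ (1/(4*σ))) ^ (2*σ) :=
    Real.rpow_lt_rpow (norm_nonneg _) hsmall (by positivity)
  have heq : ((ω^4 / (4 * c^2)) ^ (1/(4*σ))) ^ (2*σ) = (ω^4 / (4 * c^2)) ^ ((1:ℝ)/2) := by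
    rw [← Real.rpow_mul hbase.le]
    congr 1
    field_simp
    ring
  have h3 : (ω^4 / (4 * c^2)) ^ ((1:ℝ)/2) ≤ ((ω^4 : ℝ)) ^ ((1:ℝ)/2) := by
    apply Real.rpow_le_rpow hbase.le _ (by norm_num)
    apply div_le_self (by positivity)
    nlinarith
  have h4 : ((ω^4 : ℝ)) ^ ((1:ℝ)/2) = ω^2 := by
    have h5 : (ω:ℝ)^4 = (ω^2)^(2:ℕ) := by ring
    rw [h5, ← Real.rpow_natCast (ω^2) 2, ← Real.rpow_mul (by positivity)]
    norm_num
  rw [heq] at hstep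
  linarith
end

section
/- Let f : ℝ → ℝ be continuously differentiable (f and f′ continuous), and let w : ℤ → ℝ be a weight with w_n ≥ 1 for all n. Consider the weighted space ℓ²_w of two-sided complex sequences z with ‖z‖²_{ℓ²_w} = Σ_{n∈ℤ} w_n |z_n|² < ∞. Then the operator T : ℓ²_w → ℓ²_w defined by (T(z))_n = f(|z_n|²)z_n is well defined, maps bounded subsets of ℓ²_w to bounded subsets of ℓ²_w, and is Lipschitz continuous on bounded subsets of ℓ²_w: for every R > 0 there exists L(R) > 0 such that ‖T(z) − T(z′)‖_{ℓ²_w} ≤ L(R)‖z − z′‖_{ℓ²_w} whenever ‖z‖_{ℓ²_w} ≤ R and ‖z′‖_{ℓ²_w} ≤ R. -/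
open scoped ENNReal
set_option maxHeartbeats 1000000

lemma bdd_on_Icc (g : ℝ → ℝ) (hg : Continuous g) (S : ℝ) :
    ∃ M : ℝ, 0 ≤ M ∧ ∀ x ∈ Set.Icc (0:ℝ) S, |g x| ≤ M := by
  obtain ⟨M, hM⟩ := (isCompact_Icc).exists_bound_of_continuousOn hg.continuousOn
  refine ⟨max M 0, le_max_right _ _, fun x hx => ?_⟩
  rw [← Real.norm_eq_abs]
  exact (hM x hx).trans (le_max_left _ _)

lemma key_lip (f : ℝ → ℝ) (hf : ContDiff ℝ 1 f) (R : ℝ) (hR : 0 < R) :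
    ∃ L : ℝ, 0 < L ∧ ∀ a b : ℂ, ‖a‖ ≤ R → ‖b‖ ≤ R →
      ‖(f (‖a‖ ^ 2) : ℂ) * a - (f (‖b‖ ^ 2) : ℂ) * b‖
        ≤ L * ‖a - b‖ := by
  obtain ⟨M, hM0, hM⟩ := bdd_on_Icc f hf.continuous (R ^ 2)
  obtain ⟨K, hK0, hK⟩ := bdd_on_Icc (deriv f) (hf.continuous_deriv le_rfl) (R ^ 2)
  refine ⟨2 * K * R * R + M + 1, by positivity, fun a b ha hb => ?_⟩
  have ha0 := norm_nonneg a
  have hb0 := norm_nonneg b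
  have hamem : ‖a‖ ^ 2 ∈ Set.Icc (0:ℝ) (R ^ 2) :=
    ⟨by positivity, by nlinarith⟩
  have hbmem : ‖b‖ ^ 2 ∈ Set.Icc (0:ℝ) (R ^ 2) :=
    ⟨by positivity, by nlinarith⟩
  have hlip : |f (‖a‖ ^ 2) - f (‖b‖ ^ 2)|
      ≤ K * |‖a‖ ^ 2 - ‖b‖ ^ 2| := by
    have := (convex_Icc (0:ℝ) (R ^ 2)).norm_image_sub_le_of_norm_deriv_le
      (fun x _ => hf.differentiable one_ne_zero x)
      (fun x hx => by simpa [Real.norm_eq_abs] using hK x hx) hbmem hamem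
    simpa [Real.norm_eq_abs] using this
  have habs : |‖a‖ - ‖b‖| ≤ ‖a - b‖ :=
    abs_norm_sub_norm_le a b
  have hd0 := norm_nonneg (a - b)
  have hsq : |‖a‖ ^ 2 - ‖b‖ ^ 2| ≤ 2 * R * ‖a - b‖ := by
    rcases abs_le.1 habs with ⟨h1, h2⟩
    rw [abs_le]
    constructor <;> nlinarith
  have key : (f (‖a‖ ^ 2) : ℂ) * a - (f (‖b‖ ^ 2) : ℂ) * b
      = ((f (‖a‖ ^ 2) - f (‖b‖ ^ 2) : ℝ) : ℂ) * a
        + (f (‖b‖ ^ 2) : ℂ) * (a - b) := by push_cast; ring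
  rw [key]
  calc ‖_‖ ≤ ‖((f (‖a‖ ^ 2) - f (‖b‖ ^ 2) : ℝ) : ℂ) * a‖
        + ‖(f (‖b‖ ^ 2) : ℂ) * (a - b)‖ := norm_add_le _ _
    _ = |f (‖a‖ ^ 2) - f (‖b‖ ^ 2)| * ‖a‖
        + |f (‖b‖ ^ 2)| * ‖a - b‖ := by
        rw [norm_mul, norm_mul, Complex.norm_real, Complex.norm_real, Real.norm_eq_abs, Real.norm_eq_abs]
    _ ≤ (K * (2 * R * ‖a - b‖)) * R + M * ‖a - b‖ := by
        have h1 : |f (‖a‖ ^ 2) - f (‖b‖ ^ 2)| * ‖a‖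
            ≤ (K * (2 * R * ‖a - b‖)) * R := by
          have := hlip.trans (by nlinarith : K * |‖a‖ ^ 2 - ‖b‖ ^ 2|
            ≤ K * (2 * R * ‖a - b‖))
          nlinarith [abs_nonneg (f (‖a‖ ^ 2) - f (‖b‖ ^ 2))]
        have h2 : |f (‖b‖ ^ 2)| * ‖a - b‖ ≤ M * ‖a - b‖ :=
          mul_le_mul_of_nonneg_right (hM _ hbmem) hd0
        linarith
    _ ≤ (2 * K * R * R + M + 1) * ‖a - b‖ := by nlinarith

lemma term_nonneg (w : ℤ → ℝ) (hw : ∀ n : ℤ, 1 ≤ w n) (g : ℤ → ℂ) (n : ℤ) :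
    0 ≤ w n * ‖g n‖ ^ 2 :=
  mul_nonneg (zero_le_one.trans (hw n)) (by positivity)

lemma entry_sq_le (w : ℤ → ℝ) (hw : ∀ n : ℤ, 1 ≤ w n) (z : ℤ → ℂ)
    (hz : Summable (fun n => w n * ‖z n‖ ^ 2)) (n : ℤ) :
    ‖z n‖ ^ 2 ≤ ∑' m : ℤ, w m * ‖z m‖ ^ 2 := by
  have h1 : w n * ‖z n‖ ^ 2 ≤ ∑' m : ℤ, w m * ‖z m‖ ^ 2 :=
    hz.le_tsum n (fun m _ => term_nonneg w hw z m)
  have h2 : ‖z n‖ ^ 2 ≤ w n * ‖z n‖ ^ 2 :=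
    le_mul_of_one_le_left (by positivity) (hw n)
  linarith

/-- For `f : ℝ → ℝ` continuously differentiable and a weight
`w : ℤ → ℝ` with `wₙ ≥ 1`, the operator `(T z)ₙ = f(|zₙ|²) zₙ` on the weighted space
`ℓ²_w` (sequences with `Σₙ wₙ|zₙ|² < ∞`) is well defined, bounded on bounded sets and
Lipschitz on bounded sets. -/
theorem stmt_18 (f : ℝ → ℝ) (hf : ContDiff ℝ 1 f)
    (w : ℤ → ℝ) (hw : ∀ n : ℤ, 1 ≤ w n) :
    -- well defined: T maps ℓ²_w into ℓ²_w
    (∀ z : ℤ → ℂ, Summable (fun n => w n * ‖z n‖ ^ 2) →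
      Summable (fun n => w n * ‖(f (‖z n‖ ^ 2) : ℂ) * z n‖ ^ 2)) ∧
    -- bounded on bounded sets
    (∀ R : ℝ, 0 < R → ∃ C : ℝ,
      ∀ z : ℤ → ℂ, Summable (fun n => w n * ‖z n‖ ^ 2) →
        (∑' n : ℤ, w n * ‖z n‖ ^ 2) ≤ R ^ 2 →
        (∑' n : ℤ, w n * ‖(f (‖z n‖ ^ 2) : ℂ) * z n‖ ^ 2) ≤ C) ∧
    -- Lipschitz on bounded sets
    (∀ R : ℝ, 0 < R → ∃ L : ℝ, 0 < L ∧
      ∀ z z' : ℤ → ℂ,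
        Summable (fun n => w n * ‖z n‖ ^ 2) →
        Summable (fun n => w n * ‖z' n‖ ^ 2) →
        (∑' n : ℤ, w n * ‖z n‖ ^ 2) ≤ R ^ 2 →
        (∑' n : ℤ, w n * ‖z' n‖ ^ 2) ≤ R ^ 2 →
        (∑' n : ℤ, w n * ‖(f (‖z n‖ ^ 2) : ℂ) * z n
            - (f (‖z' n‖ ^ 2) : ℂ) * z' n‖ ^ 2)
          ≤ L ^ 2 * ∑' n : ℤ, w n * ‖z n - z' n‖ ^ 2) := by
  -- generic pointwise bound for the image term
  have himg : ∀ (M : ℝ) (z : ℤ → ℂ) (n : ℤ), |f (‖z n‖ ^ 2)| ≤ M →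
      w n * ‖(f (‖z n‖ ^ 2) : ℂ) * z n‖ ^ 2
        ≤ M ^ 2 * (w n * ‖z n‖ ^ 2) := by
    intro M z n hMn
    rw [norm_mul, Complex.norm_real, Real.norm_eq_abs, mul_pow]
    have h1 : |f (‖z n‖ ^ 2)| ^ 2 ≤ M ^ 2 := by
      have := abs_nonneg (f (‖z n‖ ^ 2)); nlinarith
    have hwn : (0:ℝ) ≤ w n := zero_le_one.trans (hw n)
    have h2 : (0:ℝ) ≤ ‖z n‖ ^ 2 := by positivity
    calc w n * (|f (‖z n‖ ^ 2)| ^ 2 * ‖z n‖ ^ 2)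
        ≤ w n * (M ^ 2 * ‖z n‖ ^ 2) :=
          mul_le_mul_of_nonneg_left (mul_le_mul_of_nonneg_right h1 h2) hwn
      _ = M ^ 2 * (w n * ‖z n‖ ^ 2) := by ring
  have wellDef : ∀ (S : ℝ) (z : ℤ → ℂ), Summable (fun n => w n * ‖z n‖ ^ 2) →
      (∀ n, ‖z n‖ ^ 2 ≤ S) →
      Summable (fun n => w n * ‖(f (‖z n‖ ^ 2) : ℂ) * z n‖ ^ 2) := by
    intro S z hz hS
    obtain ⟨M, _, hM⟩ := bdd_on_Icc f hf.continuous S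
    refine Summable.of_nonneg_of_le (fun n => mul_nonneg (zero_le_one.trans (hw n)) (by positivity)) (fun n => ?_)
      ((hz.mul_left (M ^ 2)))
    exact himg M z n (hM _ ⟨by positivity, hS n⟩)
  refine ⟨fun z hz => wellDef _ z hz (entry_sq_le w hw z hz), ?_, ?_⟩
  · -- bounded on bounded sets
    intro R hR
    obtain ⟨M, hM0, hM⟩ := bdd_on_Icc f hf.continuous (R ^ 2)
    refine ⟨M ^ 2 * R ^ 2, fun z hz hRz => ?_⟩
    have hptS : ∀ n, ‖z n‖ ^ 2 ≤ R ^ 2 :=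
      fun n => (entry_sq_le w hw z hz n).trans hRz
    have hsum2 := wellDef (R ^ 2) z hz hptS
    calc (∑' n : ℤ, w n * ‖(f (‖z n‖ ^ 2) : ℂ) * z n‖ ^ 2)
        ≤ ∑' n : ℤ, M ^ 2 * (w n * ‖z n‖ ^ 2) :=
          Summable.tsum_le_tsum (fun n => himg M z n (hM _ ⟨by positivity, hptS n⟩)) hsum2
            (hz.mul_left _)
      _ = M ^ 2 * ∑' n : ℤ, w n * ‖z n‖ ^ 2 := tsum_mul_left
      _ ≤ M ^ 2 * R ^ 2 := by nlinarith
  · -- Lipschitz on bounded sets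
    intro R hR
    obtain ⟨L, hL0, hL⟩ := key_lip f hf R hR
    refine ⟨L, hL0, fun z z' hz hz' hRz hRz' => ?_⟩
    have hbz : ∀ n, ‖z n‖ ≤ R := by
      intro n
      have := (entry_sq_le w hw z hz n).trans hRz
      nlinarith [norm_nonneg (z n), hR.le]
    have hbz' : ∀ n, ‖z' n‖ ≤ R := by
      intro n
      have := (entry_sq_le w hw z' hz' n).trans hRz'
      nlinarith [norm_nonneg (z' n), hR.le]
    -- pointwise bound
    have hpt : ∀ n, w n * ‖(f (‖z n‖ ^ 2) : ℂ) * z n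
          - (f (‖z' n‖ ^ 2) : ℂ) * z' n‖ ^ 2
        ≤ L ^ 2 * (w n * ‖z n - z' n‖ ^ 2) := by
      intro n
      have h := hL (z n) (z' n) (hbz n) (hbz' n)
      have hwn : (0:ℝ) ≤ w n := zero_le_one.trans (hw n)
      have h0 := norm_nonneg ((f (‖z n‖ ^ 2) : ℂ) * z n
          - (f (‖z' n‖ ^ 2) : ℂ) * z' n)
      have h1 := norm_nonneg (z n - z' n)
      have hA2 : ‖(f (‖z n‖ ^ 2) : ℂ) * z n
            - (f (‖z' n‖ ^ 2) : ℂ) * z' n‖ ^ 2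
          ≤ L ^ 2 * ‖z n - z' n‖ ^ 2 := by
        nlinarith [mul_self_le_mul_self h0 h]
      calc w n * ‖(f (‖z n‖ ^ 2) : ℂ) * z n
            - (f (‖z' n‖ ^ 2) : ℂ) * z' n‖ ^ 2
          ≤ w n * (L ^ 2 * ‖z n - z' n‖ ^ 2) :=
            mul_le_mul_of_nonneg_left hA2 hwn
        _ = L ^ 2 * (w n * ‖z n - z' n‖ ^ 2) := by ring
    -- summability of the difference sequence
    have hdiff : Summable (fun n => w n * ‖z n - z' n‖ ^ 2) := by
      refine Summable.of_nonneg_of_le (fun n => mul_nonneg (zero_le_one.trans (hw n)) (by positivity)) (fun n => ?_)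
        (((hz.mul_left 2).add (hz'.mul_left 2)))
      have hwn : (0:ℝ) ≤ w n := zero_le_one.trans (hw n)
      have := norm_sub_le (z n) (z' n)
      have h0 := norm_nonneg (z n)
      have h1 := norm_nonneg (z' n)
      have h2 := norm_nonneg (z n - z' n)
      have key : ‖z n - z' n‖ ^ 2
          ≤ 2 * ‖z n‖ ^ 2 + 2 * ‖z' n‖ ^ 2 := by
        nlinarith [mul_self_le_mul_self h2 this,
          sq_nonneg (‖z n‖ - ‖z' n‖)]
      nlinarith
    have hLHS : Summable (fun n => w n * ‖(f (‖z n‖ ^ 2) : ℂ) * z n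
          - (f (‖z' n‖ ^ 2) : ℂ) * z' n‖ ^ 2) :=
      Summable.of_nonneg_of_le (fun n => mul_nonneg (zero_le_one.trans (hw n)) (by positivity)) hpt (hdiff.mul_left (L ^ 2))
    calc (∑' n : ℤ, w n * ‖(f (‖z n‖ ^ 2) : ℂ) * z n
            - (f (‖z' n‖ ^ 2) : ℂ) * z' n‖ ^ 2)
        ≤ ∑' n : ℤ, L ^ 2 * (w n * ‖z n - z' n‖ ^ 2) :=
          Summable.tsum_le_tsum hpt hLHS (hdiff.mul_left _)
      _ = L ^ 2 * ∑' n : ℤ, w n * ‖z n - z' n‖ ^ 2 := tsum_mul_left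
end

section
/- Let f : ℝ → ℝ be continuously differentiable, δ > 0, and let w : ℤ → ℝ be a weight satisfying condition (W): w_n ≥ 1, |w_{n+1} − w_n| ≤ d₁ w_n, and d̲₂ w_n ≤ w_{n+1} for all n ∈ ℤ, with constants d₁ > 0, d̲₂ > 0. Assume γ := δ/2 − 2 d₁ d̲₂^{−1/2} > 0, and let g ∈ ℓ²_w. If u : [0, ∞) → ℓ²_w is a continuously differentiable solution of i u̇_n + (u_{n−1} − 2u_n + u_{n+1}) + iδ u_n + f(|u_n|²)u_n = g_n (n ∈ ℤ) with u(0) = u₀ ∈ ℓ²_w, then for all t ≥ 0, ‖u(t)‖²_{ℓ²_w} ≤ ‖u₀‖²_{ℓ²_w} e^{−2γt} + (1/(2δγ))‖g‖²_{ℓ²_w}(1 − e^{−2γt}); in particular the system possesses a bounded absorbing ball in ℓ²_w. -/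
open scoped ENNReal

local notation "⟪" x ", " y "⟫" => @inner ℂ _ _ x y

private lemma aux_normsq (w : ℤ → ℝ) (hw1 : ∀ n : ℤ, 1 ≤ w n) (a : ℤ → ℂ)
    (V : lp (fun _ : ℤ => ℂ) 2) (hV : ∀ n : ℤ, V n = (Real.sqrt (w n) : ℂ) * a n) :
    (Summable fun n : ℤ => w n * ‖a n‖ ^ 2) ∧
      ‖V‖ ^ 2 = ∑' n : ℤ, w n * ‖a n‖ ^ 2 := by
  have hw0 : ∀ n, (0:ℝ) ≤ w n := fun n => le_trans zero_le_one (hw1 n)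
  have hVn : ∀ n, ‖V n‖ ^ 2 = w n * ‖a n‖ ^ 2 := by
    intro n
    rw [hV n]
    rw [norm_mul, Complex.norm_real, Real.norm_eq_abs, abs_of_nonneg (Real.sqrt_nonneg _),
      mul_pow, Real.sq_sqrt (hw0 n)]
  have h2 : (0:ℝ) < (2:ℝ≥0∞).toReal := by norm_num
  have hmem := lp.memℓp V
  constructor
  · have := (memℓp_gen_iff h2).1 hmem
    have heq : (fun n : ℤ => ‖V n‖ ^ (2:ℝ≥0∞).toReal) = fun n : ℤ => w n * ‖a n‖ ^ 2 := by
      funext n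
      rw [show ((2:ℝ≥0∞).toReal) = ((2:ℕ):ℝ) by norm_num, Real.rpow_natCast, hVn]
    rwa [heq] at this
  · have := lp.norm_rpow_eq_tsum h2 V
    rw [show ((2:ℝ≥0∞).toReal) = ((2:ℕ):ℝ) by norm_num, Real.rpow_natCast] at this
    rw [this]
    congr 1
    funext n
    rw [Real.rpow_natCast, hVn]
set_option maxHeartbeats 2000000 in
private lemma aux_bound (δ d₁ d₂ : ℝ) (hδ : 0 < δ) (hd₁ : 0 < d₁) (hd₂ : 0 < d₂)
    (w : ℤ → ℝ) (hw1 : ∀ n : ℤ, 1 ≤ w n)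
    (hwd₁ : ∀ n : ℤ, |w (n+1) - w n| ≤ d₁ * w n)
    (hwd₂ : ∀ n : ℤ, d₂ * w n ≤ w (n+1))
    (g : ℤ → ℂ) (hg : Summable (fun n : ℤ => w n * ‖g n‖ ^ 2))
    (a : ℤ → ℂ) (r : ℤ → ℝ) (V V' : lp (fun _ : ℤ => ℂ) 2)
    (hV : ∀ n : ℤ, V n = (Real.sqrt (w n) : ℂ) * a n)
    (hE : ∀ n : ℤ, Complex.I * (V' n / (Real.sqrt (w n) : ℂ))
        + (a (n-1) - 2 * a n + a (n+1)) + Complex.I * δ * a n + (r n : ℂ) * a n = g n) :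
    2 * Complex.re ⟪V, V'⟫
      ≤ (-δ + 2 * d₁ / Real.sqrt d₂) * ‖V‖^2
        + (1/δ) * (∑' n : ℤ, w n * ‖g n‖ ^ 2) := by
  have hw0 : ∀ n, (0:ℝ) < w n := fun n => lt_of_lt_of_le one_pos (hw1 n)
  set c : ℤ → ℝ := fun n => Real.sqrt (w n) with hc
  have hcpos : ∀ n, 0 < c n := fun n => Real.sqrt_pos.2 (hw0 n)
  have hcsq : ∀ n, c n * c n = w n := fun n => Real.mul_self_sqrt (hw0 n).le
  have hcC : ∀ n, ((c n : ℝ) : ℂ) ≠ 0 := fun n => Complex.ofReal_ne_zero.2 (hcpos n).ne'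
  -- the derivative formula
  have hV' : ∀ n, V' n = (c n : ℂ) * (Complex.I * (a (n-1) - 2*a n + a (n+1))
      - (δ:ℂ) * a n + Complex.I * (r n : ℂ) * a n - Complex.I * g n) := by
    intro n
    have h := hE n
    have h1 : V' n / (c n : ℂ) = Complex.I * (a (n-1) - 2*a n + a (n+1))
        - (δ:ℂ) * a n + Complex.I * (r n : ℂ) * a n - Complex.I * g n := by
      linear_combination (-Complex.I) * h
        + (V' n / ((c n : ℝ) : ℂ) + (δ:ℂ) * a n) * Complex.I_mul_I
    rw [← h1, mul_comm, div_mul_cancel₀ _ (hcC n)]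
  obtain ⟨hS, hnorm⟩ := aux_normsq w hw1 a V hV
  set S : ℤ → ℝ := fun n => w n * ‖a n‖ ^ 2 with hSdef
  set Y : ℝ := ∑' n : ℤ, S n with hY
  set G : ℝ := ∑' n : ℤ, w n * ‖g n‖ ^ 2 with hG
  have hYnn : 0 ≤ Y := tsum_nonneg (fun n => mul_nonneg (hw0 n).le (sq_nonneg _))
  -- shifted sums
  have hSplus : HasSum (fun n : ℤ => S (n+1)) Y :=
    ((Equiv.addRight (1:ℤ)).hasSum_iff (f := S)).2 hS.hasSum
  have hSminus : HasSum (fun n : ℤ => S (n-1)) Y :=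
    ((Equiv.subRight (1:ℤ)).hasSum_iff (f := S)).2 hS.hasSum
  -- weight comparison square roots
  have hsd : 0 < Real.sqrt d₂ := Real.sqrt_pos.2 hd₂
  have hcmono : ∀ n, Real.sqrt d₂ * c n ≤ c (n+1) := by
    intro n
    have := Real.sqrt_le_sqrt (hwd₂ n)
    rwa [Real.sqrt_mul hd₂.le] at this
  have hwup : ∀ n : ℤ, w (n+1) ≤ (1 + d₁) * w n := by
    intro n
    have h := abs_le.1 (hwd₁ n)
    nlinarith [h.2]
  -- pointwise products
  have habs : ∀ z : ℂ, |Complex.re z| ≤ ‖z‖ := fun z => Complex.abs_re_le_norm z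
  -- pieces
  set P0 : ℤ → ℝ := fun n => w n * Complex.re (Complex.I * (starRingEnd ℂ) (a n) * a (n-1)) with hP0def
  set hplus : ℤ → ℝ := fun n => Complex.re (Complex.I * (starRingEnd ℂ) (a n) * a (n+1)) with hhdef
  set P2 : ℤ → ℝ := fun n => w n * hplus n with hP2def
  set P4 : ℤ → ℝ := fun n => w n * Complex.re (Complex.I * (starRingEnd ℂ) (a n) * g n) with hP4def
  have habsh : ∀ n, |hplus n| ≤ ‖a n‖ * ‖a (n+1)‖ := by
    intro n
    refine (habs _).trans ?_
    rw [norm_mul, norm_mul, Complex.norm_I, Complex.norm_conj, one_mul]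
  have habs0 : ∀ n, |Complex.re (Complex.I * (starRingEnd ℂ) (a n) * a (n-1))|
      ≤ ‖a n‖ * ‖a (n-1)‖ := by
    intro n
    refine (habs _).trans ?_
    rw [norm_mul, norm_mul, Complex.norm_I, Complex.norm_conj, one_mul]
  have habs4 : ∀ n, |Complex.re (Complex.I * (starRingEnd ℂ) (a n) * g n)|
      ≤ ‖a n‖ * ‖g n‖ := by
    intro n
    refine (habs _).trans ?_
    rw [norm_mul, norm_mul, Complex.norm_I, Complex.norm_conj, one_mul]
  -- product bounds
  have hprod2 : ∀ n, w n * (‖a n‖ * ‖a (n+1)‖)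
      ≤ (1 / Real.sqrt d₂) * ((S n + S (n+1)) / 2) := by
    intro n
    have hA : (0:ℝ) ≤ ‖a n‖ := norm_nonneg _
    have hB : (0:ℝ) ≤ ‖a (n+1)‖ := norm_nonneg _
    have hx : S n = (c n * ‖a n‖)^2 := by
      simp only [hSdef]; linear_combination (-(‖a n‖)^2) * (hcsq n)
    have hz : S (n+1) = (c (n+1) * ‖a (n+1)‖)^2 := by
      simp only [hSdef]; linear_combination (-(‖a (n+1)‖)^2) * (hcsq (n+1))
    set x := c n * ‖a n‖
    set z := c (n+1) * ‖a (n+1)‖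
    have hx0 : 0 ≤ x := mul_nonneg (hcpos n).le hA
    have hz0 : 0 ≤ z := mul_nonneg (hcpos (n+1)).le hB
    have h1 : w n * (‖a n‖ * ‖a (n+1)‖)
        = x * (c n * ‖a (n+1)‖) := by rw [← hcsq n]; ring
    have h2 : Real.sqrt d₂ * (c n * ‖a (n+1)‖) ≤ z :=
      by calc Real.sqrt d₂ * (c n * ‖a (n+1)‖)
            = (Real.sqrt d₂ * c n) * ‖a (n+1)‖ := by ring
        _ ≤ c (n+1) * ‖a (n+1)‖ :=
            mul_le_mul_of_nonneg_right (hcmono n) hB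
    have h3 : x * (Real.sqrt d₂ * (c n * ‖a (n+1)‖)) ≤ x * z :=
      mul_le_mul_of_nonneg_left h2 hx0
    have h4 : x * z ≤ (x^2 + z^2)/2 := by nlinarith [sq_nonneg (x - z)]
    rw [h1, hx, hz, one_div, ← div_eq_inv_mul, le_div_iff₀ hsd]
    nlinarith [h3, h4]
  -- bound for the (n-1) product
  have hcmono0 : ∀ n : ℤ, c n ≤ Real.sqrt (1 + d₁) * c (n-1) := by
    intro n
    have h := hwup (n-1)
    rw [sub_add_cancel] at h
    have h2 := Real.sqrt_le_sqrt h
    rwa [Real.sqrt_mul (by positivity)] at h2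
  have hprod0 : ∀ n, w n * (‖a n‖ * ‖a (n-1)‖)
      ≤ Real.sqrt (1 + d₁) * ((S n + S (n-1)) / 2) := by
    intro n
    have hA : (0:ℝ) ≤ ‖a n‖ := norm_nonneg _
    have hB : (0:ℝ) ≤ ‖a (n-1)‖ := norm_nonneg _
    have hx : S n = (c n * ‖a n‖)^2 := by
      simp only [hSdef]; linear_combination (-(‖a n‖)^2) * (hcsq n)
    have hz : S (n-1) = (c (n-1) * ‖a (n-1)‖)^2 := by
      simp only [hSdef]; linear_combination (-(‖a (n-1)‖)^2) * (hcsq (n-1))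
    set x := c n * ‖a n‖
    set z := c (n-1) * ‖a (n-1)‖
    have hx0 : 0 ≤ x := mul_nonneg (hcpos n).le hA
    have hsq1 : (0:ℝ) ≤ Real.sqrt (1+d₁) := Real.sqrt_nonneg _
    have h1 : w n * (‖a n‖ * ‖a (n-1)‖)
        = x * (c n * ‖a (n-1)‖) := by rw [← hcsq n]; ring
    have h2 : c n * ‖a (n-1)‖ ≤ Real.sqrt (1+d₁) * z := by
      calc c n * ‖a (n-1)‖
          ≤ (Real.sqrt (1+d₁) * c (n-1)) * ‖a (n-1)‖ :=
            mul_le_mul_of_nonneg_right (hcmono0 n) hB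
        _ = Real.sqrt (1+d₁) * z := by ring
    have h3 : x * (c n * ‖a (n-1)‖) ≤ Real.sqrt (1+d₁) * (x * z) := by
      calc x * (c n * ‖a (n-1)‖) ≤ x * (Real.sqrt (1+d₁) * z) :=
            mul_le_mul_of_nonneg_left h2 hx0
        _ = Real.sqrt (1+d₁) * (x * z) := by ring
    have h4 : x * z ≤ (x^2 + z^2)/2 := by nlinarith [sq_nonneg (x - z)]
    rw [h1, hx, hz]
    nlinarith [h3, mul_le_mul_of_nonneg_left h4 hsq1]
  have hprod4 : ∀ n, w n * (‖a n‖ * ‖g n‖)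
      ≤ (δ/2) * S n + (1/(2*δ)) * (w n * ‖g n‖^2) := by
    intro n
    have key : ‖a n‖ * ‖g n‖
        ≤ (δ/2) * ‖a n‖^2 + (1/(2*δ)) * ‖g n‖^2 := by
      rw [← sub_nonneg]
      have h5 : (δ/2) * ‖a n‖^2 + (1/(2*δ)) * ‖g n‖^2
          - ‖a n‖ * ‖g n‖
          = (δ * ‖a n‖ - ‖g n‖)^2 / (2*δ) := by
        field_simp; ring
      rw [h5]; positivity
    have h6 := mul_le_mul_of_nonneg_left key (hw0 n).le
    simp only [hSdef]
    nlinarith [h6]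
  -- summability of the pieces
  have habsP2 : ∀ n, |P2 n| ≤ w n * (‖a n‖ * ‖a (n+1)‖) := by
    intro n
    simp only [hP2def]
    rw [abs_mul, abs_of_nonneg (hw0 n).le]
    exact mul_le_mul_of_nonneg_left (habsh n) (hw0 n).le
  have hsumP2 : Summable P2 := by
    apply Summable.of_abs
    exact Summable.of_nonneg_of_le (fun n => abs_nonneg _)
      (fun n => (habsP2 n).trans (hprod2 n))
      ((((hS.hasSum.add hSplus).div_const 2).mul_left (1/Real.sqrt d₂)).summable)
  have hsumP0 : Summable P0 := by
    apply Summable.of_abs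
    refine Summable.of_nonneg_of_le (fun n => abs_nonneg _) (fun n => ?_)
      ((((hS.hasSum.add hSminus).div_const 2).mul_left (Real.sqrt (1+d₁))).summable)
    calc |P0 n| ≤ w n * (‖a n‖ * ‖a (n-1)‖) := by
          simp only [hP0def]
          rw [abs_mul, abs_of_nonneg (hw0 n).le]
          exact mul_le_mul_of_nonneg_left (habs0 n) (hw0 n).le
      _ ≤ Real.sqrt (1+d₁) * ((S n + S (n-1)) / 2) := hprod0 n
  have hsumP4 : Summable P4 := by
    apply Summable.of_abs
    refine Summable.of_nonneg_of_le (fun n => abs_nonneg _) (fun n => ?_)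
      (((hS.hasSum.mul_left (δ/2)).add (hg.hasSum.mul_left (1/(2*δ)))).summable)
    calc |P4 n| ≤ w n * (‖a n‖ * ‖g n‖) := by
          simp only [hP4def]
          rw [abs_mul, abs_of_nonneg (hw0 n).le]
          exact mul_le_mul_of_nonneg_left (habs4 n) (hw0 n).le
      _ ≤ _ := hprod4 n
  have hsum_wh : Summable (fun n : ℤ => w (n+1) * hplus n) := by
    apply Summable.of_abs
    refine Summable.of_nonneg_of_le (fun n => abs_nonneg _) (fun n => ?_)
      (((((hS.hasSum.add hSplus).div_const 2).mul_left (1/Real.sqrt d₂)).mul_left (1+d₁)).summable)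
    calc |w (n+1) * hplus n| = w (n+1) * |hplus n| := by
          rw [abs_mul, abs_of_nonneg (hw0 (n+1)).le]
      _ ≤ ((1+d₁) * w n) * (‖a n‖ * ‖a (n+1)‖) :=
          mul_le_mul (hwup n) (habsh n) (abs_nonneg _)
            (mul_nonneg (by positivity) (hw0 n).le)
      _ = (1+d₁) * (w n * (‖a n‖ * ‖a (n+1)‖)) := by ring
      _ ≤ (1+d₁) * ((1/Real.sqrt d₂) * ((S n + S (n+1))/2)) :=
          mul_le_mul_of_nonneg_left (hprod2 n) (by positivity)
  -- reindexing of the P0 sum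
  have hP0shift : (∑' n : ℤ, P0 n) = ∑' n : ℤ, (-(w (n+1) * hplus n)) := by
    rw [← (Equiv.addRight (1:ℤ)).tsum_eq P0]
    congr 1
    funext n
    simp only [Equiv.coe_addRight, hP0def, hhdef, add_sub_cancel_right]
    have hre : (Complex.I * (starRingEnd ℂ) (a (n+1)) * a n).re
        = -(Complex.I * (starRingEnd ℂ) (a n) * a (n+1)).re := by
      simp only [Complex.mul_re, Complex.mul_im, Complex.I_re, Complex.I_im,
        Complex.conj_re, Complex.conj_im]
      ring
    rw [hre]
    ring
  have hT02 : (∑' n : ℤ, P0 n) + (∑' n : ℤ, P2 n) = ∑' n : ℤ, (w n - w (n+1)) * hplus n := by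
    rw [hP0shift, add_comm, ← Summable.tsum_add hsumP2 hsum_wh.neg]
    congr 1
    funext n
    simp only [hP2def]
    ring
  -- bound on the hopping term
  have hb1 : (∑' n : ℤ, (w n - w (n+1)) * hplus n) ≤ (d₁ / Real.sqrt d₂) * Y := by
    have hRHS : HasSum (fun n : ℤ => d₁ * ((1/Real.sqrt d₂) * ((S n + S (n+1))/2)))
        (d₁ * ((1/Real.sqrt d₂) * ((Y + Y)/2))) :=
      (((hS.hasSum.add hSplus).div_const 2).mul_left _).mul_left d₁
    have hle : ∀ n : ℤ, (w n - w (n+1)) * hplus n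
        ≤ d₁ * ((1/Real.sqrt d₂) * ((S n + S (n+1))/2)) := by
      intro n
      calc (w n - w (n+1)) * hplus n ≤ |(w n - w (n+1)) * hplus n| := le_abs_self _
        _ = |w (n+1) - w n| * |hplus n| := by rw [abs_mul, abs_sub_comm]
        _ ≤ (d₁ * w n) * (‖a n‖ * ‖a (n+1)‖) :=
            mul_le_mul (hwd₁ n) (habsh n) (abs_nonneg _) (mul_nonneg hd₁.le (hw0 n).le)
        _ = d₁ * (w n * (‖a n‖ * ‖a (n+1)‖)) := by ring
        _ ≤ d₁ * ((1/Real.sqrt d₂) * ((S n + S (n+1))/2)) :=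
            mul_le_mul_of_nonneg_left (hprod2 n) hd₁.le
    have hsumL : Summable (fun n : ℤ => (w n - w (n+1)) * hplus n) := by
      have heq2 : (fun n : ℤ => (w n - w (n+1)) * hplus n)
          = fun n : ℤ => P2 n + (-(w (n+1) * hplus n)) := by
        funext n; simp only [hP2def]; ring
      rw [heq2]; exact hsumP2.add hsum_wh.neg
    calc (∑' n : ℤ, (w n - w (n+1)) * hplus n)
        ≤ ∑' n : ℤ, d₁ * ((1/Real.sqrt d₂) * ((S n + S (n+1))/2)) :=
          Summable.tsum_le_tsum hle hsumL hRHS.summable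
      _ = d₁ * ((1/Real.sqrt d₂) * ((Y + Y)/2)) := hRHS.tsum_eq
      _ = (d₁ / Real.sqrt d₂) * Y := by ring
  -- bound on the forcing term
  have hb4 : -(∑' n : ℤ, P4 n) ≤ (δ/2) * Y + (1/(2*δ)) * G := by
    have hRHS : HasSum (fun n : ℤ => (δ/2) * S n + (1/(2*δ)) * (w n * ‖g n‖^2))
        ((δ/2) * Y + (1/(2*δ)) * G) :=
      (hS.hasSum.mul_left _).add (hg.hasSum.mul_left _)
    have hle : ∀ n : ℤ, -(P4 n) ≤ (δ/2) * S n + (1/(2*δ)) * (w n * ‖g n‖^2) := by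
      intro n
      calc -(P4 n) ≤ |P4 n| := neg_le_abs _
        _ ≤ w n * (‖a n‖ * ‖g n‖) := by
            simp only [hP4def]
            rw [abs_mul, abs_of_nonneg (hw0 n).le]
            exact mul_le_mul_of_nonneg_left (habs4 n) (hw0 n).le
        _ ≤ _ := hprod4 n
    rw [← tsum_neg]
    exact (Summable.tsum_le_tsum hle hsumP4.neg hRHS.summable).trans_eq hRHS.tsum_eq
  -- termwise identity for the inner product
  have hterm : ∀ n : ℤ, ((starRingEnd ℂ) (V n) * V' n).re = P0 n + P2 n - δ * S n - P4 n := by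
    intro n
    rw [hV n, hV' n, map_mul, Complex.conj_ofReal]
    have hw' : ((c n : ℝ) : ℂ) * ((c n : ℝ) : ℂ) = ((w n : ℝ) : ℂ) := by
      rw [← Complex.ofReal_mul, hcsq n]
    have hmain : (((c n:ℝ):ℂ) * (starRingEnd ℂ) (a n))
        * (((c n:ℝ):ℂ) * (Complex.I * (a (n-1) - 2*a n + a (n+1)) - (δ:ℂ) * a n
            + Complex.I * (r n : ℂ) * a n - Complex.I * g n))
        = ((w n:ℝ):ℂ) * ((starRingEnd ℂ) (a n) * (Complex.I * (a (n-1) - 2*a n + a (n+1))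
            - (δ:ℂ) * a n + Complex.I * (r n:ℂ) * a n - Complex.I * g n)) := by
      rw [← hw']; ring
    rw [hmain, Complex.re_ofReal_mul]
    simp only [hP0def, hP2def, hP4def, hhdef, hSdef]
    have hexp : ((starRingEnd ℂ) (a n) * (Complex.I * (a (n-1) - 2*a n + a (n+1))
        - (δ:ℂ) * a n + Complex.I * (r n:ℂ) * a n - Complex.I * g n)).re
        = (Complex.I * (starRingEnd ℂ) (a n) * a (n-1)).re
          + (Complex.I * (starRingEnd ℂ) (a n) * a (n+1)).re
          - δ * ‖a n‖^2
          - (Complex.I * (starRingEnd ℂ) (a n) * g n).re := by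
      simp only [Complex.mul_re, Complex.mul_im, Complex.add_re, Complex.add_im, Complex.sub_re,
        Complex.sub_im, Complex.I_re, Complex.I_im, Complex.conj_re, Complex.conj_im,
        Complex.ofReal_re, Complex.ofReal_im, Complex.sq_norm, Complex.normSq_apply,
        Complex.re_ofNat, Complex.im_ofNat]
      ring
    rw [hexp]
    ring
  -- the inner product as a sum
  have h1 : HasSum (fun n : ℤ => ((starRingEnd ℂ) (V n) * V' n).re) (Complex.re ⟪V, V'⟫) := by
    have h0 := (lp.hasSum_inner (𝕜 := ℂ) V V').mapL Complex.reCLM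
    simpa [RCLike.inner_apply, mul_comm] using h0
  have h2 : HasSum (fun n : ℤ => P0 n + P2 n - δ * S n - P4 n)
      ((∑' n : ℤ, P0 n) + (∑' n : ℤ, P2 n) - δ * Y - (∑' n : ℤ, P4 n)) :=
    ((hsumP0.hasSum.add hsumP2.hasSum).sub (hS.hasSum.mul_left δ)).sub hsumP4.hasSum
  have hinner : Complex.re ⟪V, V'⟫
      = (∑' n : ℤ, P0 n) + (∑' n : ℤ, P2 n) - δ * Y - (∑' n : ℤ, P4 n) := by
    refine HasSum.unique ?_ h2
    simpa only [hterm] using h1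
  -- final assembly
  rw [hnorm, hinner]
  have hq1 : (∑' n : ℤ, P0 n) + (∑' n : ℤ, P2 n) ≤ (d₁ / Real.sqrt d₂) * Y := hT02 ▸ hb1
  have hq2 : 2 * ((1/(2*δ)) * G) = (1/δ) * G := by field_simp
  have hq3 : 2 * ((d₁ / Real.sqrt d₂) * Y) = (2 * d₁ / Real.sqrt d₂) * Y := by ring
  linarith [hq1, hb4]
set_option maxHeartbeats 1000000 in
/-- Absorbing-ball estimate in the weighted space `ℓ²_w`: under
condition (W) on the weight (`wₙ ≥ 1`, `|wₙ₊₁ − wₙ| ≤ d₁wₙ`, `d̲₂wₙ ≤ wₙ₊₁`) and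
`γ = δ/2 − 2d₁ d̲₂^(−1/2) > 0`, any continuously differentiable `ℓ²_w`-valued solution
(encoded via the isometric rescaling `v(t)ₙ = √(wₙ) u(t)ₙ ∈ ℓ²`) of
`i u̇ₙ + (uₙ₋₁ − 2uₙ + uₙ₊₁) + iδuₙ + f(|uₙ|²)uₙ = gₙ` satisfies
`Σₙ wₙ|uₙ(t)|² ≤ (Σₙ wₙ|uₙ(0)|²) e^(−2γt) + (1/(2δγ)) (Σₙ wₙ|gₙ|²)(1 − e^(−2γt))`. -/
theorem stmt_19 (f : ℝ → ℝ) (hf : ContDiff ℝ 1 f) (δ d₁ d₂ γ : ℝ)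
    (hδ : 0 < δ) (hd₁ : 0 < d₁) (hd₂ : 0 < d₂)
    (w : ℤ → ℝ) (hw1 : ∀ n : ℤ, 1 ≤ w n)
    (hwd₁ : ∀ n : ℤ, |w (n+1) - w n| ≤ d₁ * w n)
    (hwd₂ : ∀ n : ℤ, d₂ * w n ≤ w (n+1))
    (hγ : γ = δ/2 - 2 * d₁ / Real.sqrt d₂) (hγpos : 0 < γ)
    (g : ℤ → ℂ) (hg : Summable (fun n : ℤ => w n * ‖g n‖ ^ 2))
    (u : ℝ → ℤ → ℂ) (v v' : ℝ → lp (fun _ : ℤ => ℂ) 2)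
    (hv : ∀ t : ℝ, ∀ n : ℤ, v t n = (Real.sqrt (w n) : ℂ) * u t n)
    (hderiv : ∀ t ∈ Set.Ici (0:ℝ), HasDerivAt v (v' t) t)
    (hcont : ContinuousOn v' (Set.Ici (0:ℝ)))
    (heq : ∀ t ∈ Set.Ici (0:ℝ), ∀ n : ℤ,
      Complex.I * (v' t n / (Real.sqrt (w n) : ℂ))
        + (u t (n-1) - 2 * u t n + u t (n+1))
        + Complex.I * δ * u t n
        + (f (‖u t n‖ ^ 2) : ℂ) * u t n = g n) :
    ∀ t ∈ Set.Ici (0:ℝ),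
      (∑' n : ℤ, w n * ‖u t n‖ ^ 2)
        ≤ (∑' n : ℤ, w n * ‖u 0 n‖ ^ 2) * Real.exp (-2 * γ * t)
          + (1/(2 * δ * γ)) * (∑' n : ℤ, w n * ‖g n‖ ^ 2)
              * (1 - Real.exp (-2 * γ * t)) := by
  intro t ht
  have hy : ∀ s : ℝ, ‖v s‖^2 = ∑' n : ℤ, w n * ‖u s n‖^2 :=
    fun s => (aux_normsq w hw1 (u s) (v s) (hv s)).2
  set G : ℝ := ∑' n : ℤ, w n * ‖g n‖^2 with hGdef
  -- derivative of the squared norm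
  have hDy : ∀ s ∈ Set.Ici (0:ℝ), HasDerivAt (fun τ => ‖v τ‖^2)
      (2 * Complex.re (inner (𝕜 := ℂ) (v s) (v' s))) s := by
    intro s hs
    have h1 : HasDerivAt (fun τ => (inner (𝕜 := ℂ) (v τ) (v τ) : ℂ))
        ((inner (𝕜 := ℂ) (v s) (v' s) : ℂ) + (inner (𝕜 := ℂ) (v' s) (v s) : ℂ)) s :=
      (hderiv s hs).inner ℂ (hderiv s hs)
    have h2 : HasDerivAt (fun τ => Complex.re ((inner (𝕜 := ℂ) (v τ) (v τ) : ℂ)))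
        (Complex.re ((inner (𝕜 := ℂ) (v s) (v' s) : ℂ) + (inner (𝕜 := ℂ) (v' s) (v s) : ℂ))) s :=
      Complex.reCLM.hasFDerivAt.comp_hasDerivAt s h1
    have h3 : (fun τ => Complex.re ((inner (𝕜 := ℂ) (v τ) (v τ) : ℂ))) = fun τ => ‖v τ‖^2 := by
      funext τ
      simpa using inner_self_eq_norm_sq (𝕜 := ℂ) (v τ)
    have h4 : Complex.re ((inner (𝕜 := ℂ) (v s) (v' s) : ℂ) + (inner (𝕜 := ℂ) (v' s) (v s) : ℂ))
        = 2 * Complex.re (inner (𝕜 := ℂ) (v s) (v' s)) := by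
      rw [Complex.add_re]
      have h5 : (inner (𝕜 := ℂ) (v' s) (v s) : ℂ)
          = (starRingEnd ℂ) (inner (𝕜 := ℂ) (v s) (v' s)) := (inner_conj_symm _ _).symm
      rw [h5, Complex.conj_re]
      ring
    rw [h3, h4] at h2
    exact h2
  -- the differential inequality
  have hbound : ∀ s ∈ Set.Ici (0:ℝ),
      2 * Complex.re (inner (𝕜 := ℂ) (v s) (v' s)) ≤ (-(2*γ)) * ‖v s‖^2 + (1/δ) * G := by
    intro s hs
    have hb := aux_bound δ d₁ d₂ hδ hd₁ hd₂ w hw1 hwd₁ hwd₂ g hg (u s)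
      (fun n => f (‖u s n‖^2)) (v s) (v' s) (hv s) (heq s hs)
    refine hb.trans ?_
    have h5 : (0:ℝ) ≤ ‖v s‖^2 := sq_nonneg _
    have h6 : (0:ℝ) ≤ 2*d₁/Real.sqrt d₂ := by positivity
    have h8 : (-(2*γ)) * ‖v s‖^2 - (-δ + 2*d₁/Real.sqrt d₂) * ‖v s‖^2
        = (2*d₁/Real.sqrt d₂) * ‖v s‖^2 := by rw [hγ]; ring
    linarith [mul_nonneg h6 h5, h8]
  -- the Lyapunov function
  set C : ℝ := 1/(2 * δ * γ) * G with hCdef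
  set φ : ℝ → ℝ := fun τ => ‖v τ‖^2 * Real.exp (2*γ*τ) - C * (Real.exp (2*γ*τ) - 1) with hφdef
  have hexp : ∀ s : ℝ, HasDerivAt (fun τ : ℝ => Real.exp (2*γ*τ)) (Real.exp (2*γ*s) * (2*γ)) s := by
    intro s
    have h := ((hasDerivAt_id s).const_mul (2*γ)).exp
    simpa using h
  have hφd : ∀ s ∈ Set.Ici (0:ℝ), HasDerivAt φ
      ((2 * Complex.re (inner (𝕜 := ℂ) (v s) (v' s))) * Real.exp (2*γ*s)
        + ‖v s‖^2 * (Real.exp (2*γ*s) * (2*γ)) - C * (Real.exp (2*γ*s) * (2*γ))) s := by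
    intro s hs
    have hmul := (hDy s hs).mul (hexp s)
    have hsub := hmul.sub (((hexp s).sub_const 1).const_mul C)
    exact hsub
  have hφanti : AntitoneOn φ (Set.Ici (0:ℝ)) := by
    apply antitoneOn_of_deriv_nonpos (convex_Ici 0)
    · intro s hs
      exact (hφd s hs).continuousAt.continuousWithinAt
    · intro s hs
      rw [interior_Ici] at hs
      exact ((hφd s (Set.mem_Ici.2 (le_of_lt hs))).differentiableAt).differentiableWithinAt
    · intro s hs
      rw [interior_Ici] at hs
      rw [(hφd s (Set.mem_Ici.2 (le_of_lt hs))).deriv]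
      have hb := hbound s (Set.mem_Ici.2 (le_of_lt hs))
      have he : (0:ℝ) < Real.exp (2*γ*s) := Real.exp_pos _
      have hCγe : C * (Real.exp (2*γ*s) * (2*γ)) = (1/δ) * G * Real.exp (2*γ*s) := by
        rw [hCdef]
        field_simp
      nlinarith [mul_le_mul_of_nonneg_right hb he.le, hCγe]
  have hφle : φ t ≤ φ 0 := hφanti Set.self_mem_Ici ht ht
  have hφ0 : φ 0 = ‖v 0‖^2 := by simp [hφdef]
  set E : ℝ := Real.exp (2*γ*t) with hEdef
  have hEpos : (0:ℝ) < E := Real.exp_pos _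
  have hEinv : E * E⁻¹ = 1 := mul_inv_cancel₀ hEpos.ne'
  have hE1 : Real.exp (-2*γ*t) = E⁻¹ := by
    rw [hEdef, ← Real.exp_neg]
    ring_nf
  have hstep : ‖v t‖^2 * E - C * (E - 1) ≤ ‖v 0‖^2 := by
    rw [← hφ0]
    exact hφle
  rw [← hy t, ← hy 0, hE1]
  have h9 : ‖v t‖^2 * E * E⁻¹ = ‖v t‖^2 := by
    rw [mul_assoc, hEinv, mul_one]
  have h10 : C * (E - 1) * E⁻¹ = C * (1 - E⁻¹) := by
    field_simp
  have h11 := mul_le_mul_of_nonneg_right hstep (inv_nonneg.2 hEpos.le)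
  nlinarith [h11, h9, h10]
end
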